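/- arXiv:2002.09649 — 10 statements merged into one kernel-verified Lean document; each statement's English description precedes it below -/
import Mathlib

section
/- Let A = [A_{i,j}]_{i,j=1}^m ∈ M_m(M_n) be a positive semidefinite block matrix. Then the block matrix whose (i,j) block is A_{j,i} + (tr A_{j,i}) I_n is positive semidefinite. (This is the complete copositivity part of the statement that the map Φ(X) = X + (tr X) I is completely PPT.) -/
open Matrix Kronecker
open scoped ComplexOrder

/-- The first partial trace of an `m × m` block matrix with `n × n` blocks:
the sum of the diagonal blocks. -/
noncomputable def ptrace1 (m n : ℕ) (A : Matrix (Fin m × Fin n) (Fin m × Fin n) ℂ) :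
    Matrix (Fin n) (Fin n) ℂ :=
  Matrix.of fun r s => ∑ i, A (i, r) (i, s)

/-- The second partial trace of an `m × m` block matrix with `n × n` blocks:
the `m × m` matrix of traces of the blocks. -/
noncomputable def ptrace2 (m n : ℕ) (A : Matrix (Fin m × Fin n) (Fin m × Fin n) ℂ) :
    Matrix (Fin m) (Fin m) ℂ :=
  Matrix.of fun i j => ∑ r, A (i, r) (j, r)

/-- The partial transpose of a block matrix: the `(i,j)` block of `Aᵗᵖ` is `A_{j,i}`. -/
noncomputable def ptranspose (m n : ℕ) (A : Matrix (Fin m × Fin n) (Fin m × Fin n) ℂ) :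
    Matrix (Fin m × Fin n) (Fin m × Fin n) ℂ :=
  Matrix.of fun p q => A (q.1, p.2) (p.1, q.2)

/-- Kraus operators: `Vm m n (a,b) = Iₘ ⊗ (E_{ab} + E_{ba})`. -/
noncomputable def Vm (m n : ℕ) (p : Fin n × Fin n) : Matrix (Fin m × Fin n) (Fin m × Fin n) ℂ :=
  Matrix.of fun q q' =>
    (if q.1 = q'.1 ∧ q.2 = p.1 ∧ q'.2 = p.2 then 1 else 0) +
    (if q.1 = q'.1 ∧ q.2 = p.2 ∧ q'.2 = p.1 then 1 else 0)

lemma Vm_herm (m n : ℕ) (p : Fin n × Fin n) : (Vm m n p)ᴴ = Vm m n p := by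
  ext ⟨i, r⟩ ⟨j, s⟩
  simp only [Vm, conjTranspose_apply, of_apply, star_add, apply_ite (star : ℂ → ℂ),
    star_one, star_zero]
  rw [add_comm]
  congr 1 <;> exact if_congr (by tauto) rfl rfl

lemma key (m n : ℕ) (A : Matrix (Fin m × Fin n) (Fin m × Fin n) ℂ) :
    ptranspose m n A + (ptrace2 m n (ptranspose m n A) ⊗ₖ (1 : Matrix (Fin n) (Fin n) ℂ)) =
    (1/2 : ℂ) • ∑ p : Fin n × Fin n, Vm m n p * Aᵀ * Vm m n p := by
  ext ⟨i, r⟩ ⟨j, s⟩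
  simp only [ptranspose, ptrace2, Vm, Matrix.add_apply, Matrix.smul_apply, Matrix.sum_apply, mul_apply,
    kroneckerMap_apply, of_apply, one_apply, Fintype.sum_prod_type, ite_and, ite_mul, mul_ite,
    add_mul, mul_add, one_mul, mul_one, zero_mul, mul_zero, zero_add, add_zero,
    Finset.sum_ite_eq, Finset.sum_ite_eq', Finset.mem_univ, if_true, Finset.sum_add_distrib,
    Finset.sum_ite_irrel, Finset.sum_const_zero, transpose_apply, smul_eq_mul]
  split <;> ring

lemma psd_half_smul {k : Type*} [Fintype k] {M : Matrix k k ℂ} (hM : M.PosSemidef) :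
    ((1/2 : ℂ) • M).PosSemidef := by
  refine ⟨?_, fun x => ?_⟩
  · have h1 := hM.1
    unfold Matrix.IsHermitian at h1 ⊢
    rw [conjTranspose_smul, h1]
    norm_num
  · exact (hM.smul (show (0 : ℂ) ≤ 1/2 by rw [Complex.le_def]; norm_num)).2 x

set_option maxHeartbeats 1000000 in
/-- If `A = [A_{i,j}]` is positive semidefinite, then the block matrix whose
`(i,j)` block is `A_{j,i} + (tr A_{j,i}) Iₙ`, i.e. `Aᵗᵖ + (tr₂ Aᵗᵖ) ⊗ Iₙ`,
is positive semidefinite. -/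
theorem stmt_1 (m n : ℕ) (A : Matrix (Fin m × Fin n) (Fin m × Fin n) ℂ)
    (hA : A.PosSemidef) :
    (ptranspose m n A +
      (ptrace2 m n (ptranspose m n A) ⊗ₖ (1 : Matrix (Fin n) (Fin n) ℂ))).PosSemidef := by
  rw [key]
  apply psd_half_smul
  have hAT : Aᵀ.PosSemidef := hA.transpose
  apply Finset.sum_induction _ _ (fun a b ha hb => ha.add hb) Matrix.PosSemidef.zero
  intro p _
  have := hAT.mul_mul_conjTranspose_same (Vm m n p)
  rwa [Vm_herm] at this
end

section
/- Let A = [A_{i,j}]_{i,j=1}^m ∈ M_m(M_n) be positive semidefinite. Then (tr A) I_{mn} − (tr₂ A) ⊗ I_n ≥ I_m ⊗ (tr₁ A) − A. -/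
open Matrix Kronecker
open scoped ComplexOrder

open Complex Finset
open scoped ComplexConjugate

namespace PTAux

variable {m n : ℕ}

/-- squared norm of a vector -/
noncomputable def nsq (v : Fin m → ℂ) : ℝ := ∑ i, Complex.normSq (v i)

lemma nsq_nonneg (v : Fin m → ℂ) : 0 ≤ nsq v :=
  Finset.sum_nonneg fun _ _ => Complex.normSq_nonneg _

lemma star_dot_self (v : Fin m → ℂ) : star v ⬝ᵥ v = (nsq v : ℂ) := by
  simp [dotProduct, nsq, Complex.normSq_eq_conj_mul_self]

lemma eq_zero_of_nsq_eq_zero {v : Fin m → ℂ} (h : nsq v = 0) : v = 0 := by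
  funext i
  have := (Finset.sum_eq_zero_iff_of_nonneg (fun i _ => Complex.normSq_nonneg (v i))).mp h i
    (Finset.mem_univ i)
  simpa using this

end PTAux

namespace PTAux
variable {m n : ℕ}

lemma star_dot_comm (a v : Fin m → ℂ) : star v ⬝ᵥ a = conj (star a ⬝ᵥ v) := by
  simp only [dotProduct, map_sum, _root_.map_mul, Complex.conj_conj, Pi.star_apply,
    Complex.star_def]
  exact Finset.sum_congr rfl fun i _ => mul_comm _ _

lemma cs (a v : Fin m → ℂ) : Complex.normSq (star a ⬝ᵥ v) ≤ nsq a * nsq v := by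
  rcases eq_or_lt_of_le (nsq_nonneg a) with h0 | hpos
  · have ha : a = 0 := eq_zero_of_nsq_eq_zero h0.symm
    simp [ha, nsq]
  · set d := star a ⬝ᵥ v with hd
    set w : Fin m → ℂ := (nsq a : ℂ) • v - d • a with hw
    have key : star w ⬝ᵥ w = ((nsq a * (nsq a * nsq v - Complex.normSq d) : ℝ) : ℂ) := by
      simp only [hw, star_sub, star_smul, sub_dotProduct, dotProduct_sub, smul_dotProduct,
        dotProduct_smul, star_dot_self, smul_eq_mul, star_dot_comm a v, ← hd,
        Complex.star_def, Complex.conj_conj, Complex.conj_ofReal]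
      rw [Complex.ofReal_mul, Complex.ofReal_sub, Complex.ofReal_mul,
        Complex.normSq_eq_conj_mul_self]
      ring
    have h2 : nsq w = nsq a * (nsq a * nsq v - Complex.normSq d) :=
      Complex.ofReal_inj.mp (by rw [← star_dot_self, key])
    have h3 := nsq_nonneg w
    rw [h2] at h3
    nlinarith [hpos]

/-- Two-vector Bessel inequality for orthogonal `a, b`. -/
lemma bessel2 {a b : Fin m → ℂ} (hab : star a ⬝ᵥ b = 0) (v : Fin m → ℂ) :
    nsq a * Complex.normSq (star b ⬝ᵥ v) + nsq b * Complex.normSq (star a ⬝ᵥ v)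
      ≤ nsq a * nsq b * nsq v := by
  rcases eq_or_lt_of_le (nsq_nonneg a) with h0 | hA
  · have ha : a = 0 := eq_zero_of_nsq_eq_zero h0.symm
    simp [ha, nsq, mul_nonneg (nsq_nonneg b)]
  rcases eq_or_lt_of_le (nsq_nonneg b) with h0 | hB
  · have hb : b = 0 := eq_zero_of_nsq_eq_zero h0.symm
    simp [hb, nsq, mul_nonneg (nsq_nonneg a)]
  have hba : star b ⬝ᵥ a = 0 := by rw [star_dot_comm, hab, map_zero]
  set p := star a ⬝ᵥ v with hp
  set q := star b ⬝ᵥ v with hq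
  set w : Fin m → ℂ := ((nsq a * nsq b : ℝ) : ℂ) • v - ((nsq b : ℝ) * p) • a
      - ((nsq a : ℝ) * q) • b with hw
  have key : star w ⬝ᵥ w = ((nsq a * nsq b *
      (nsq a * nsq b * nsq v - nsq b * Complex.normSq p - nsq a * Complex.normSq q) : ℝ) : ℂ) := by
    simp only [hw, star_sub, star_smul, sub_dotProduct, dotProduct_sub, smul_dotProduct,
      dotProduct_smul, star_dot_self, smul_eq_mul, hab, hba,
      Complex.star_def, _root_.map_mul, Complex.conj_conj, Complex.conj_ofReal]
    rw [star_dot_comm a v, star_dot_comm b v, ← hp, ← hq]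
    push_cast
    rw [Complex.normSq_eq_conj_mul_self, Complex.normSq_eq_conj_mul_self]
    ring
  have h2 : nsq w = nsq a * nsq b *
      (nsq a * nsq b * nsq v - nsq b * Complex.normSq p - nsq a * Complex.normSq q) :=
    Complex.ofReal_inj.mp (by rw [← star_dot_self, key])
  have h3 := nsq_nonneg w
  rw [h2] at h3
  have hABpos : 0 < nsq a * nsq b := mul_pos hA hB
  nlinarith [h3, hABpos]

end PTAux

namespace PTAux
variable {m n : ℕ}

lemma nsq_zero : nsq (0 : Fin m → ℂ) = 0 := by simp [nsq]

lemma star_zero_dot (u : Fin m → ℂ) : star (0 : Fin m → ℂ) ⬝ᵥ u = 0 := by simp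

/-- The key pairwise inequality. -/
lemma pair {a b : Fin m → ℂ} (hab : star a ⬝ᵥ b = 0) (u v : Fin m → ℂ) :
    0 ≤ nsq a * nsq v - Complex.normSq (star a ⬝ᵥ v)
        + (nsq b * nsq u - Complex.normSq (star b ⬝ᵥ u))
        + 2 * ((star a ⬝ᵥ u) * conj (star b ⬝ᵥ v)).re := by
  rcases eq_or_lt_of_le (nsq_nonneg a) with h0 | hA
  · have ha : a = 0 := eq_zero_of_nsq_eq_zero h0.symm
    subst ha
    have hcs := cs b u
    simp only [star_zero_dot, nsq_zero, Complex.normSq_zero, zero_mul, map_zero, mul_zero,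
      Complex.zero_re, sub_zero, zero_sub, neg_zero, add_zero, zero_add]
    linarith
  rcases eq_or_lt_of_le (nsq_nonneg b) with h0 | hB
  · have hb : b = 0 := eq_zero_of_nsq_eq_zero h0.symm
    subst hb
    have hcs := cs a v
    simp only [star_zero_dot, nsq_zero, Complex.normSq_zero, zero_mul, map_zero, mul_zero,
      Complex.zero_re, sub_zero, zero_sub, neg_zero, add_zero, zero_add, map_zero]
    linarith
  -- main case
  have hb1 := bessel2 hab v
  have hb2 := bessel2 hab u
  set A := nsq a
  set B := nsq b
  set s := star a ⬝ᵥ u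
  set t := star b ⬝ᵥ v
  have hsq : 0 ≤ Complex.normSq ((B : ℂ) * s + (A : ℂ) * t) := Complex.normSq_nonneg _
  have hexp : Complex.normSq ((B : ℂ) * s + (A : ℂ) * t)
      = B ^ 2 * Complex.normSq s + A ^ 2 * Complex.normSq t
        + 2 * (A * B) * (s * conj t).re := by
    rw [Complex.normSq_add, Complex.normSq_mul, Complex.normSq_mul]
    have h1 : ((B : ℂ) * s * conj ((A : ℂ) * t)) = ((A * B : ℝ) : ℂ) * (s * conj t) := by
      rw [_root_.map_mul, Complex.conj_ofReal]
      push_cast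
      ring
    rw [h1, Complex.re_ofReal_mul]
    simp [Complex.normSq_ofReal]
    ring
  have hABpos : 0 < A * B := mul_pos hA hB
  nlinarith [hsq, hexp, hb1, hb2, hABpos]

end PTAux

namespace PTAux
variable {m n : ℕ}

/-- column of a matrix -/
def col' (Z : Matrix (Fin m) (Fin n) ℂ) (t : Fin n) : Fin m → ℂ := fun j => Z j t

lemma entry_eq_dot (Z : Matrix (Fin m) (Fin n) ℂ) (X : Matrix (Fin m) (Fin n) ℂ) (t r : Fin n) :
    (Zᴴ * X) t r = star (col' Z t) ⬝ᵥ (col' X r) := by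
  simp [Matrix.mul_apply, dotProduct, col', Matrix.conjTranspose_apply]

lemma nsq_col (Z : Matrix (Fin m) (Fin n) ℂ) (t : Fin n) :
    nsq (col' Z t) = ∑ j, Complex.normSq (Z j t) := rfl

lemma re_mul_conj_comm (z w : ℂ) : (z * conj w).re = (w * conj z).re := by
  rw [← Complex.conj_re (w * conj z), _root_.map_mul, Complex.conj_conj, mul_comm]

lemma trace_conjTranspose_mul_self {α β : Type*} [Fintype α] [Fintype β]
    (M : Matrix α β ℂ) :
    (Mᴴ * M).trace = ((∑ i, ∑ j, Complex.normSq (M i j) : ℝ) : ℂ) := by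
  simp only [Matrix.trace, Matrix.diag, Matrix.mul_apply, Matrix.conjTranspose_apply,
    Complex.star_def]
  push_cast
  simp only [Complex.normSq_eq_conj_mul_self]
  rw [Finset.sum_comm]

/-- The main quartic functional. -/
noncomputable def Fr (Z X : Matrix (Fin m) (Fin n) ℂ) : ℝ :=
  (∑ j, ∑ s, Complex.normSq (Z j s)) * (∑ i, ∑ r, Complex.normSq (X i r))
  + Complex.normSq ((Zᴴ * X).trace)
  - ∑ t, ∑ r, Complex.normSq ((Zᴴ * X) t r)
  - ∑ i, ∑ j, Complex.normSq ((X * Zᴴ) i j)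

/-- `Fr` is nonneg when the columns of `Z` are pairwise orthogonal. -/
lemma coreA (Z X : Matrix (Fin m) (Fin n) ℂ)
    (hZ : ∀ t r : Fin n, t ≠ r → (Zᴴ * Z) t r = 0) : 0 ≤ Fr Z X := by
  classical
  set μ : Fin n → ℝ := fun t => nsq (col' Z t) with hμ
  set β : Fin n → ℝ := fun r => nsq (col' X r) with hβ
  set d : Fin n → Fin n → ℂ := fun t r => star (col' Z t) ⬝ᵥ (col' X r) with hd
  -- term 4 computation
  have hdiagZ : Zᴴ * Z = Matrix.diagonal (fun s => ((μ s : ℝ) : ℂ)) := by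
    ext t r
    by_cases h : t = r
    · subst h
      rw [Matrix.diagonal_apply_eq, entry_eq_dot, star_dot_self]
    · rw [Matrix.diagonal_apply_ne _ h]
      exact hZ t r h
  have hterm4 : ∑ i, ∑ j, Complex.normSq ((X * Zᴴ) i j) = ∑ s, β s * μ s := by
    have h1 : (((∑ i, ∑ j, Complex.normSq ((X * Zᴴ) i j)) : ℝ) : ℂ)
        = ((X * Zᴴ)ᴴ * (X * Zᴴ)).trace := (trace_conjTranspose_mul_self _).symm
    have h2 : ((X * Zᴴ)ᴴ * (X * Zᴴ)).trace = (Xᴴ * X * (Zᴴ * Z)).trace := by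
      rw [Matrix.conjTranspose_mul, Matrix.conjTranspose_conjTranspose]
      rw [show Z * Xᴴ * (X * Zᴴ) = Z * (Xᴴ * X * Zᴴ) by
        simp only [Matrix.mul_assoc]]
      rw [← Matrix.trace_mul_comm, Matrix.mul_assoc]
    have h3 : (Xᴴ * X * (Zᴴ * Z)).trace = ((∑ s, β s * μ s : ℝ) : ℂ) := by
      rw [hdiagZ]
      simp only [Matrix.trace, Matrix.diag, Matrix.mul_diagonal]
      push_cast
      refine Finset.sum_congr rfl fun s _ => ?_
      rw [entry_eq_dot, star_dot_self]
    exact_mod_cast h1.trans (h2.trans h3)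
  -- abbreviations
  have hreconj : ∀ w : ℂ, Complex.normSq w = (w * conj w).re := fun w => by
    rw [Complex.mul_conj, Complex.ofReal_re]
  have hZd : ∀ t r : Fin n, t ≠ r → star (col' Z t) ⬝ᵥ col' Z r = 0 := fun t r htr => by
    rw [← entry_eq_dot]; exact hZ t r htr
  set g : Fin n → Fin n → ℝ :=
    fun t r => μ t * β r - Complex.normSq (d t r) + (d t t * conj (d r r)).re with hg
  have hdiag_g : ∀ s, g s s = μ s * β s := fun s => by
    simp only [hg, ← hreconj]
    ring
  have hpair : ∀ t r : Fin n, t ≠ r → 0 ≤ g t r + g r t := by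
    intro t r htr
    have h0 := pair (hZd t r htr) (col' X t) (col' X r)
    have hcomm := re_mul_conj_comm (d r r) (d t t)
    simp only [hg]
    simp only [hd, hμ, hβ] at *
    linarith
  -- doubling argument
  have e1 : (∑ t, ∑ r, g t r) + (∑ t, ∑ r, g t r) = ∑ t, ∑ r, (g t r + g r t) := by
    have c1 : ∑ t, ∑ r, (g t r + g r t) = (∑ t, ∑ r, g t r) + (∑ t, ∑ r, g r t) := by
      rw [← Finset.sum_add_distrib]
      exact Finset.sum_congr rfl fun t _ => Finset.sum_add_distrib
    rw [c1, show (∑ t, ∑ r, g r t) = ∑ t, ∑ r, g t r from Finset.sum_comm]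
  have e2 : (∑ s, g s s) + (∑ s, g s s)
      = ∑ t, ∑ r, (if t = r then g t r + g r t else 0) := by
    rw [← Finset.sum_add_distrib]
    refine Finset.sum_congr rfl fun t _ => ?_
    rw [Finset.sum_ite_eq]
    simp
  have hdd : (∑ s, g s s) + (∑ s, g s s) ≤ (∑ t, ∑ r, g t r) + (∑ t, ∑ r, g t r) := by
    rw [e1, e2]
    refine Finset.sum_le_sum fun t _ => Finset.sum_le_sum fun r _ => ?_
    by_cases h : t = r
    · simp [h]
    · simp only [if_neg h]
      exact hpair t r h
  -- assemble
  have hsum1 : (∑ j, ∑ s, Complex.normSq (Z j s)) = ∑ t, μ t := by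
    rw [Finset.sum_comm]; rfl
  have hsum2 : (∑ i, ∑ r, Complex.normSq (X i r)) = ∑ r, β r := by
    rw [Finset.sum_comm]; rfl
  have htrace : (Zᴴ * X).trace = ∑ t, d t t := by
    simp only [Matrix.trace, Matrix.diag]
    exact Finset.sum_congr rfl fun t _ => entry_eq_dot Z X t t
  have hterm3 : (∑ t, ∑ r, Complex.normSq ((Zᴴ * X) t r)) = ∑ t, ∑ r, Complex.normSq (d t r) :=
    Finset.sum_congr rfl fun t _ => Finset.sum_congr rfl fun r _ => by rw [entry_eq_dot]
  have hN : Complex.normSq ((Zᴴ * X).trace) = ∑ t, ∑ r, (d t t * conj (d r r)).re := by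
    rw [htrace, hreconj, map_sum, Finset.sum_mul_sum, Complex.re_sum]
    exact Finset.sum_congr rfl fun t _ => by rw [Complex.re_sum]
  have hS : (∑ t, μ t) * (∑ r, β r) = ∑ t, ∑ r, μ t * β r := Finset.sum_mul_sum _ _ _ _
  have hsplit : (∑ t, ∑ r, g t r)
      = (∑ t, ∑ r, μ t * β r) - (∑ t, ∑ r, Complex.normSq (d t r))
        + ∑ t, ∑ r, (d t t * conj (d r r)).re := by
    simp only [hg]
    rw [← Finset.sum_sub_distrib, ← Finset.sum_add_distrib]
    refine Finset.sum_congr rfl fun t _ => ?_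
    rw [← Finset.sum_sub_distrib, ← Finset.sum_add_distrib]
  have hgdiag : (∑ s, g s s) = ∑ s, μ s * β s := Finset.sum_congr rfl fun s _ => hdiag_g s
  have hflip : (∑ s, β s * μ s) = ∑ s, μ s * β s :=
    Finset.sum_congr rfl fun s _ => mul_comm _ _
  unfold Fr
  rw [hterm4, hsum1, hsum2, hN, hterm3, hS, hflip]
  linarith [hdd, hsplit, hgdiag]

end PTAux

namespace PTAux
variable {m n : ℕ}

lemma sumNormSq_mul_unitary (M : Matrix (Fin m) (Fin n) ℂ) {U : Matrix (Fin n) (Fin n) ℂ}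
    (hU : U ∈ Matrix.unitaryGroup (Fin n) ℂ) :
    ∑ i, ∑ j, Complex.normSq ((M * U) i j) = ∑ i, ∑ j, Complex.normSq (M i j) := by
  have h1 : ((M * U)ᴴ * (M * U)).trace = (Mᴴ * M).trace := by
    rw [Matrix.conjTranspose_mul]
    rw [show Uᴴ * Mᴴ * (M * U) = Uᴴ * (Mᴴ * M * U) by simp only [Matrix.mul_assoc]]
    rw [← Matrix.trace_mul_comm, show Mᴴ * M * U * Uᴴ = Mᴴ * M * (U * Uᴴ) by
      simp only [Matrix.mul_assoc]]
    rw [← Matrix.star_eq_conjTranspose, (Matrix.mem_unitaryGroup_iff).mp hU, Matrix.mul_one]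
  have h2 := (trace_conjTranspose_mul_self (M * U)).symm.trans
    (h1.trans (trace_conjTranspose_mul_self M))
  exact_mod_cast h2

lemma sumNormSq_unitary_mul {k : ℕ} (N : Matrix (Fin n) (Fin k) ℂ)
    {U : Matrix (Fin n) (Fin n) ℂ} (hU : U ∈ Matrix.unitaryGroup (Fin n) ℂ) :
    ∑ i, ∑ j, Complex.normSq ((Uᴴ * N) i j) = ∑ i, ∑ j, Complex.normSq (N i j) := by
  have h1 : ((Uᴴ * N)ᴴ * (Uᴴ * N)).trace = (Nᴴ * N).trace := by
    rw [Matrix.conjTranspose_mul, Matrix.conjTranspose_conjTranspose]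
    rw [show Nᴴ * U * (Uᴴ * N) = Nᴴ * (U * Uᴴ) * N by simp only [Matrix.mul_assoc]]
    rw [← Matrix.star_eq_conjTranspose, (Matrix.mem_unitaryGroup_iff).mp hU, Matrix.mul_one]
  have h2 := (trace_conjTranspose_mul_self (Uᴴ * N)).symm.trans
    (h1.trans (trace_conjTranspose_mul_self N))
  exact_mod_cast h2

lemma Fr_unitary (Z X : Matrix (Fin m) (Fin n) ℂ) {U : Matrix (Fin n) (Fin n) ℂ}
    (hU : U ∈ Matrix.unitaryGroup (Fin n) ℂ) : Fr (Z * U) (X * U) = Fr Z X := by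
  have hZX : (Z * U)ᴴ * (X * U) = Uᴴ * (Zᴴ * X) * U := by
    rw [Matrix.conjTranspose_mul]
    simp only [Matrix.mul_assoc]
  have hXZ : (X * U) * (Z * U)ᴴ = X * Zᴴ := by
    rw [Matrix.conjTranspose_mul]
    rw [show X * U * (Uᴴ * Zᴴ) = X * (U * Uᴴ) * Zᴴ by simp only [Matrix.mul_assoc]]
    rw [← Matrix.star_eq_conjTranspose, (Matrix.mem_unitaryGroup_iff).mp hU, Matrix.mul_one]
  have htr : ((Z * U)ᴴ * (X * U)).trace = (Zᴴ * X).trace := by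
    rw [hZX, ← Matrix.trace_mul_comm, show U * (Uᴴ * (Zᴴ * X)) = (U * Uᴴ) * (Zᴴ * X) by
      simp only [Matrix.mul_assoc]]
    rw [← Matrix.star_eq_conjTranspose, (Matrix.mem_unitaryGroup_iff).mp hU, Matrix.one_mul]
  have hterm3 : ∑ t, ∑ r, Complex.normSq (((Z * U)ᴴ * (X * U)) t r)
      = ∑ t, ∑ r, Complex.normSq ((Zᴴ * X) t r) := by
    rw [hZX, show Uᴴ * (Zᴴ * X) * U = (Uᴴ * (Zᴴ * X)) * U from rfl,
      sumNormSq_mul_unitary _ hU, sumNormSq_unitary_mul _ hU]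
  unfold Fr
  rw [hXZ, htr, hterm3, sumNormSq_mul_unitary Z hU, sumNormSq_mul_unitary X hU]

lemma Fr_nonneg (Z X : Matrix (Fin m) (Fin n) ℂ) : 0 ≤ Fr Z X := by
  have hH : (Zᴴ * Z).IsHermitian := Matrix.isHermitian_conjTranspose_mul_self Z
  set U : Matrix (Fin n) (Fin n) ℂ := (Matrix.IsHermitian.eigenvectorUnitary hH :
    Matrix (Fin n) (Fin n) ℂ) with hUdef
  have hU : U ∈ Matrix.unitaryGroup (Fin n) ℂ := (Matrix.IsHermitian.eigenvectorUnitary hH).2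
  have hdiag : (Z * U)ᴴ * (Z * U)
      = Matrix.diagonal (RCLike.ofReal ∘ hH.eigenvalues) := by
    rw [Matrix.conjTranspose_mul, show Uᴴ * Zᴴ * (Z * U) = Uᴴ * (Zᴴ * Z) * U by
      simp only [Matrix.mul_assoc], ← Matrix.star_eq_conjTranspose]
    rw [← Unitary.conjStarAlgAut_star_apply (S := ℂ)]
    exact hH.conjStarAlgAut_star_eigenvectorUnitary
  have h0 : 0 ≤ Fr (Z * U) (X * U) := by
    apply coreA
    intro t r htr
    rw [hdiag]
    exact Matrix.diagonal_apply_ne _ htr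
  rwa [Fr_unitary Z X hU] at h0

end PTAux

namespace PTAux

section pulls
variable {M : Type*} [AddCommMonoid M] {α β γ δ ε : Type*}
  [Fintype α] [Fintype β] [Fintype γ] [Fintype δ] [Fintype ε]

lemma pull3 (f : α → β → γ → M) :
    ∑ a, ∑ b, ∑ c, f a b c = ∑ c, ∑ a, ∑ b, f a b c := by
  rw [show (∑ a, ∑ b, ∑ c, f a b c) = ∑ a, ∑ c, ∑ b, f a b c from
    Finset.sum_congr rfl fun a _ => Finset.sum_comm]
  exact Finset.sum_comm

lemma pull4 (f : α → β → γ → δ → M) :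
    ∑ a, ∑ b, ∑ c, ∑ d, f a b c d = ∑ d, ∑ a, ∑ b, ∑ c, f a b c d := by
  rw [show (∑ a, ∑ b, ∑ c, ∑ d, f a b c d) = ∑ a, ∑ d, ∑ b, ∑ c, f a b c d from
    Finset.sum_congr rfl fun a _ => pull3 _]
  exact Finset.sum_comm

lemma pull5 (f : α → β → γ → δ → ε → M) :
    ∑ a, ∑ b, ∑ c, ∑ d, ∑ e, f a b c d e = ∑ e, ∑ a, ∑ b, ∑ c, ∑ d, f a b c d e := by
  rw [show (∑ a, ∑ b, ∑ c, ∑ d, ∑ e, f a b c d e) = ∑ a, ∑ e, ∑ b, ∑ c, ∑ d, f a b c d e from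
    Finset.sum_congr rfl fun a _ => pull4 _]
  exact Finset.sum_comm

end pulls

variable {m n : ℕ}

/-- the vector `x` as an `m × n` matrix -/
def Xmat (x : Fin m × Fin n → ℂ) : Matrix (Fin m) (Fin n) ℂ := Matrix.of fun i r => x (i, r)

/-- conjugate of the `k`-th row of `B`, as an `m × n` matrix -/
def Zmat (B : Matrix (Fin m × Fin n) (Fin m × Fin n) ℂ) (k : Fin m × Fin n) :
    Matrix (Fin m) (Fin n) ℂ := Matrix.of fun j s => conj (B k (j, s))

variable (B : Matrix (Fin m × Fin n) (Fin m × Fin n) ℂ) (x : Fin m × Fin n → ℂ)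

lemma lemZ (k : Fin m × Fin n) (t r : Fin n) :
    ((Zmat B k)ᴴ * Xmat x) t r = ∑ j, B k (j, t) * x (j, r) := by
  simp [Zmat, Xmat, Matrix.mul_apply, Matrix.conjTranspose_apply]

lemma lemW (k : Fin m × Fin n) (i j : Fin m) :
    (Xmat x * (Zmat B k)ᴴ) i j = ∑ s, x (i, s) * B k (j, s) := by
  simp [Zmat, Xmat, Matrix.mul_apply, Matrix.conjTranspose_apply]

lemma lemA (p q : Fin m × Fin n) : (Bᴴ * B) p q = ∑ k, conj (B k p) * B k q := by
  simp [Matrix.mul_apply, Matrix.conjTranspose_apply]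

lemma ofReal_normSq (z : ℂ) : ((Complex.normSq z : ℝ) : ℂ) = z * conj z :=
  (Complex.mul_conj z).symm

end PTAux

namespace PTAux
variable {m n : ℕ} (B : Matrix (Fin m × Fin n) (Fin m × Fin n) ℂ) (x : Fin m × Fin n → ℂ)

lemma htrZX (k : Fin m × Fin n) : ((Zmat B k)ᴴ * Xmat x).trace = ∑ q, B k q * x q := by
  rw [Matrix.trace]
  simp only [Matrix.diag, lemZ]
  rw [Finset.sum_comm]
  exact (Fintype.sum_prod_type (fun q : Fin m × Fin n => B k q * x q)).symm

lemma E2 : star x ⬝ᵥ ((Bᴴ * B) *ᵥ x)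
    = ((∑ k, Complex.normSq (((Zmat B k)ᴴ * Xmat x).trace) : ℝ) : ℂ) := by
  push_cast
  simp only [ofReal_normSq, htrZX]
  simp only [map_sum, _root_.map_mul]
  simp only [Matrix.mulVec, dotProduct, lemA, Pi.star_apply, Complex.star_def]
  simp_rw [Finset.sum_mul, Finset.mul_sum]
  rw [pull3 (f := fun p q k => conj (x p) * (conj (B k p) * B k q * x q))]
  refine Finset.sum_congr rfl fun k _ => ?_
  rw [Finset.sum_comm]
  exact Finset.sum_congr rfl fun q _ => Finset.sum_congr rfl fun p _ => by ring

end PTAux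

namespace PTAux
variable {m n : ℕ} (B : Matrix (Fin m × Fin n) (Fin m × Fin n) ℂ) (x : Fin m × Fin n → ℂ)

lemma E1 : (Bᴴ * B).trace * (star x ⬝ᵥ x)
    = ((∑ k, (∑ j, ∑ s, Complex.normSq ((Zmat B k) j s)) *
        (∑ i, ∑ r, Complex.normSq ((Xmat x) i r)) : ℝ) : ℂ) := by
  push_cast
  simp only [ofReal_normSq]
  have h1 : (Bᴴ * B).trace = ∑ k, ∑ j, ∑ s, (Zmat B k) j s * conj ((Zmat B k) j s) := by
    rw [Matrix.trace]
    simp only [Matrix.diag, lemA]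
    rw [Finset.sum_comm]
    refine Finset.sum_congr rfl fun k _ => ?_
    rw [Fintype.sum_prod_type (fun p : Fin m × Fin n => conj (B k p) * B k p)]
    exact Finset.sum_congr rfl fun j _ => Finset.sum_congr rfl fun s _ => by
      simp [Zmat]
  have h2 : star x ⬝ᵥ x = ∑ i, ∑ r, (Xmat x) i r * conj ((Xmat x) i r) := by
    simp only [dotProduct, Pi.star_apply, Complex.star_def]
    rw [Fintype.sum_prod_type (fun p : Fin m × Fin n => conj (x p) * x p)]
    exact Finset.sum_congr rfl fun i _ => Finset.sum_congr rfl fun r _ => by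
      simp [Xmat, mul_comm]
  rw [h1, h2, Finset.sum_mul]

end PTAux

namespace PTAux
open Kronecker
variable {m n : ℕ} (B : Matrix (Fin m × Fin n) (Fin m × Fin n) ℂ) (x : Fin m × Fin n → ℂ)

lemma E3 : star x ⬝ᵥ ((ptrace2 m n (Bᴴ * B) ⊗ₖ (1 : Matrix (Fin n) (Fin n) ℂ)) *ᵥ x)
    = ((∑ k, ∑ t, ∑ r, Complex.normSq (((Zmat B k)ᴴ * Xmat x) t r) : ℝ) : ℂ) := by
  have hmv : ∀ i : Fin m, ∀ r : Fin n,
      ((ptrace2 m n (Bᴴ * B) ⊗ₖ (1 : Matrix (Fin n) (Fin n) ℂ)) *ᵥ x) (i, r)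
        = ∑ j, ptrace2 m n (Bᴴ * B) i j * x (j, r) := by
    intro i r
    simp only [Matrix.mulVec, dotProduct, Matrix.kroneckerMap_apply]
    rw [Fintype.sum_prod_type (fun q : Fin m × Fin n =>
      ptrace2 m n (Bᴴ * B) i q.1 * (1 : Matrix (Fin n) (Fin n) ℂ) r q.2 * x q)]
    refine Finset.sum_congr rfl fun j _ => ?_
    simp [Matrix.one_apply, mul_ite, ite_mul, Finset.sum_ite_eq]
  push_cast
  simp only [ofReal_normSq, lemZ]
  simp only [map_sum, _root_.map_mul]
  simp only [dotProduct, Pi.star_apply, Complex.star_def]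
  rw [Fintype.sum_prod_type (fun p : Fin m × Fin n => conj (x p) *
    ((ptrace2 m n (Bᴴ * B) ⊗ₖ (1 : Matrix (Fin n) (Fin n) ℂ)) *ᵥ x) p)]
  simp only [hmv]
  simp only [ptrace2, Matrix.of_apply, lemA]
  simp_rw [Finset.sum_mul, Finset.mul_sum]
  rw [pull5 (f := fun (i : Fin m) (r : Fin n) (j : Fin m) (t : Fin n) (k : Fin m × Fin n) =>
    conj (x (i, r)) * (conj (B k (i, t)) * B k (j, t) * x (j, r)))]
  refine Finset.sum_congr rfl fun k _ => ?_
  rw [pull4 (f := fun (i : Fin m) (r : Fin n) (j : Fin m) (t : Fin n) =>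
    conj (x (i, r)) * (conj (B k (i, t)) * B k (j, t) * x (j, r)))]
  refine Finset.sum_congr rfl fun t _ => ?_
  rw [pull3 (f := fun (i : Fin m) (r : Fin n) (j : Fin m) =>
    conj (x (i, r)) * (conj (B k (i, t)) * B k (j, t) * x (j, r)))]
  rw [pull3 (f := fun (j : Fin m) (i : Fin m) (r : Fin n) =>
    conj (x (i, r)) * (conj (B k (i, t)) * B k (j, t) * x (j, r)))]
  refine Finset.sum_congr rfl fun r _ => Finset.sum_congr rfl fun j _ =>
    Finset.sum_congr rfl fun i _ => by ring

end PTAux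

namespace PTAux
open Kronecker
variable {m n : ℕ} (B : Matrix (Fin m × Fin n) (Fin m × Fin n) ℂ) (x : Fin m × Fin n → ℂ)

lemma E4 : star x ⬝ᵥ (((1 : Matrix (Fin m) (Fin m) ℂ) ⊗ₖ ptrace1 m n (Bᴴ * B)) *ᵥ x)
    = ((∑ k, ∑ i, ∑ j, Complex.normSq ((Xmat x * (Zmat B k)ᴴ) i j) : ℝ) : ℂ) := by
  have hmv : ∀ i : Fin m, ∀ r : Fin n,
      (((1 : Matrix (Fin m) (Fin m) ℂ) ⊗ₖ ptrace1 m n (Bᴴ * B)) *ᵥ x) (i, r)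
        = ∑ s, ptrace1 m n (Bᴴ * B) r s * x (i, s) := by
    intro i r
    simp only [Matrix.mulVec, dotProduct, Matrix.kroneckerMap_apply]
    rw [Fintype.sum_prod_type (fun q : Fin m × Fin n =>
      (1 : Matrix (Fin m) (Fin m) ℂ) i q.1 * ptrace1 m n (Bᴴ * B) r q.2 * x q)]
    simp [Matrix.one_apply, ite_mul, one_mul, zero_mul, Finset.sum_ite_eq]
  push_cast
  simp only [ofReal_normSq, lemW]
  simp only [map_sum, _root_.map_mul]
  simp only [dotProduct, Pi.star_apply, Complex.star_def]
  rw [Fintype.sum_prod_type (fun p : Fin m × Fin n => conj (x p) *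
    (((1 : Matrix (Fin m) (Fin m) ℂ) ⊗ₖ ptrace1 m n (Bᴴ * B)) *ᵥ x) p)]
  simp only [hmv]
  simp only [ptrace1, Matrix.of_apply, lemA]
  simp_rw [Finset.sum_mul, Finset.mul_sum]
  rw [pull5 (f := fun (i : Fin m) (r : Fin n) (s : Fin n) (j : Fin m) (k : Fin m × Fin n) =>
    conj (x (i, r)) * (conj (B k (j, r)) * B k (j, s) * x (i, s)))]
  refine Finset.sum_congr rfl fun k _ => ?_
  refine Finset.sum_congr rfl fun i _ => ?_
  rw [pull3 (f := fun (r : Fin n) (s : Fin n) (j : Fin m) =>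
    conj (x (i, r)) * (conj (B k (j, r)) * B k (j, s) * x (i, s)))]
  refine Finset.sum_congr rfl fun j _ => ?_
  rw [Finset.sum_comm (f := fun (r : Fin n) (s : Fin n) =>
    conj (x (i, r)) * (conj (B k (j, r)) * B k (j, s) * x (i, s)))]
  refine Finset.sum_congr rfl fun s _ => Finset.sum_congr rfl fun r _ => by ring

end PTAux

/-- If `A` is positive semidefinite, then
`(tr A) I_{mn} − (tr₂ A) ⊗ Iₙ ≥ Iₘ ⊗ (tr₁ A) − A`. -/
theorem stmt_2 (m n : ℕ) (A : Matrix (Fin m × Fin n) (Fin m × Fin n) ℂ)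
    (hA : A.PosSemidef) :
    (A.trace • (1 : Matrix (Fin m × Fin n) (Fin m × Fin n) ℂ)
      - ptrace2 m n A ⊗ₖ (1 : Matrix (Fin n) (Fin n) ℂ)
      - ((1 : Matrix (Fin m) (Fin m) ℂ) ⊗ₖ ptrace1 m n A - A)).PosSemidef := by
  have hAH := hA.1
  have hentry : ∀ p q, conj (A q p) = A p q := fun p q => by
    have := congrFun (congrFun hAH p) q
    rwa [Matrix.conjTranspose_apply, Complex.star_def] at this
  refine Matrix.posSemidef_iff_dotProduct_mulVec.mpr ⟨?_, ?_⟩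
  · -- Hermitian
    have h1 : (A.trace • (1 : Matrix (Fin m × Fin n) (Fin m × Fin n) ℂ)).IsHermitian := by
      show _ = _
      rw [Matrix.conjTranspose_smul, Matrix.conjTranspose_one]
      congr 1
      rw [Complex.star_def, ← Complex.star_def, ← Matrix.trace_conjTranspose, hAH]
    have hP : (ptrace2 m n A).IsHermitian := by
      show _ = _
      ext i j
      simp only [Matrix.conjTranspose_apply, ptrace2, Matrix.of_apply, Complex.star_def, map_sum]
      exact Finset.sum_congr rfl fun r _ => hentry (i, r) (j, r)
    have hQ : (ptrace1 m n A).IsHermitian := by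
      show _ = _
      ext r s
      simp only [Matrix.conjTranspose_apply, ptrace1, Matrix.of_apply, Complex.star_def, map_sum]
      exact Finset.sum_congr rfl fun i _ => hentry (i, r) (i, s)
    have hone : ∀ k : ℕ, ∀ (s r : Fin k), star ((1 : Matrix (Fin k) (Fin k) ℂ) s r)
        = (1 : Matrix (Fin k) (Fin k) ℂ) r s := fun k s r => by
      rw [← Matrix.conjTranspose_apply, Matrix.conjTranspose_one]
    have hk2 : (ptrace2 m n A ⊗ₖ (1 : Matrix (Fin n) (Fin n) ℂ)).IsHermitian := by
      show _ = _
      ext ⟨i, r⟩ ⟨j, s⟩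
      simp only [Matrix.conjTranspose_apply, Matrix.kroneckerMap_apply, star_mul']
      rw [hone n s r]
      rw [show star (ptrace2 m n A j i) = ptrace2 m n A i j from
        congrFun (congrFun hP i) j ▸ (Matrix.conjTranspose_apply _ _ _).symm]
    have hk1 : ((1 : Matrix (Fin m) (Fin m) ℂ) ⊗ₖ ptrace1 m n A).IsHermitian := by
      show _ = _
      ext ⟨i, r⟩ ⟨j, s⟩
      simp only [Matrix.conjTranspose_apply, Matrix.kroneckerMap_apply, star_mul']
      rw [hone m j i]
      rw [show star (ptrace1 m n A s r) = ptrace1 m n A r s from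
        congrFun (congrFun hQ r) s ▸ (Matrix.conjTranspose_apply _ _ _).symm]
    exact (h1.sub hk2).sub (hk1.sub hAH)
  · -- quadratic form
    intro x
    obtain ⟨B, hB⟩ : ∃ B : Matrix (Fin m × Fin n) (Fin m × Fin n) ℂ, A = Bᴴ * B := by
      open scoped MatrixOrder in exact CStarAlgebra.nonneg_iff_eq_star_mul_self.mp hA.nonneg
    subst hB
    have expand : star x ⬝ᵥ (((Bᴴ * B).trace • (1 : Matrix (Fin m × Fin n) (Fin m × Fin n) ℂ)
          - ptrace2 m n (Bᴴ * B) ⊗ₖ (1 : Matrix (Fin n) (Fin n) ℂ)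
          - ((1 : Matrix (Fin m) (Fin m) ℂ) ⊗ₖ ptrace1 m n (Bᴴ * B) - Bᴴ * B)) *ᵥ x)
        = (Bᴴ * B).trace * (star x ⬝ᵥ x)
          - (star x ⬝ᵥ ((ptrace2 m n (Bᴴ * B) ⊗ₖ (1 : Matrix (Fin n) (Fin n) ℂ)) *ᵥ x))
          - ((star x ⬝ᵥ (((1 : Matrix (Fin m) (Fin m) ℂ) ⊗ₖ ptrace1 m n (Bᴴ * B)) *ᵥ x))
            - star x ⬝ᵥ ((Bᴴ * B) *ᵥ x)) := by
      rw [Matrix.sub_mulVec, Matrix.sub_mulVec, Matrix.sub_mulVec]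
      simp only [dotProduct_sub, Matrix.smul_mulVec, Matrix.one_mulVec, dotProduct_smul,
        smul_eq_mul]
    rw [expand, PTAux.E1, PTAux.E2, PTAux.E3, PTAux.E4]
    rw [show ∀ a b c d : ℝ, ((a : ℂ) - b - (c - d)) = ((a - b - (c - d) : ℝ) : ℂ) from
      fun a b c d => by push_cast; ring]
    rw [Complex.zero_le_real]
    rw [← Finset.sum_sub_distrib, ← Finset.sum_sub_distrib, ← Finset.sum_sub_distrib]
    refine Finset.sum_nonneg fun k _ => ?_
    have h := PTAux.Fr_nonneg (PTAux.Zmat B k) (PTAux.Xmat x)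
    unfold PTAux.Fr at h
    linarith
end

section
/- Let A = [A_{i,j}]_{i,j=1}^m ∈ M_m(M_n) be positive semidefinite. Then (tr A) I_{mn} − (tr₂ A) ⊗ I_n ≥ A − I_m ⊗ (tr₁ A); equivalently, (tr A) I_{mn} + I_m ⊗ (tr₁ A) ≥ A + (tr₂ A) ⊗ I_n. -/
open Matrix Kronecker Complex
open scoped ComplexOrder ComplexConjugate

private lemma sum_mul_sum_comm2 {α β γ δ : Type*} [Fintype α] [Fintype β] [Fintype γ] [Fintype δ]
    (f : α → γ → δ → ℂ) (g : β → γ → δ → ℂ) :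
    ∑ r : γ, ∑ t : δ, (∑ i, f i r t) * (∑ j, g j r t)
      = ∑ i, ∑ j, ∑ r, ∑ t, f i r t * g j r t := by
  simp_rw [Finset.sum_mul_sum]
  calc ∑ r : γ, ∑ t : δ, ∑ i : α, ∑ j : β, f i r t * g j r t
      = ∑ r : γ, ∑ i : α, ∑ t : δ, ∑ j : β, f i r t * g j r t :=
        Finset.sum_congr rfl fun r _ => Finset.sum_comm
    _ = ∑ i : α, ∑ r : γ, ∑ t : δ, ∑ j : β, f i r t * g j r t := Finset.sum_comm
    _ = ∑ i : α, ∑ r : γ, ∑ j : β, ∑ t : δ, f i r t * g j r t :=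
        Finset.sum_congr rfl fun i _ => Finset.sum_congr rfl fun r _ => Finset.sum_comm
    _ = ∑ i : α, ∑ j : β, ∑ r : γ, ∑ t : δ, f i r t * g j r t :=
        Finset.sum_congr rfl fun i _ => Finset.sum_comm

private lemma normSq_sum_mul_le {ι : Type*} [Fintype ι] (f g : ι → ℂ) :
    normSq (∑ i, f i * g i) ≤ (∑ i, normSq (f i)) * (∑ i, normSq (g i)) := by
  have h1 : ‖∑ i, f i * g i‖ ≤ ∑ i, ‖f i‖ * ‖g i‖ := by
    refine le_trans (norm_sum_le (E := ℂ) Finset.univ (fun i => f i * g i)) ?_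
    exact le_of_eq (Finset.sum_congr rfl fun i _ => by simp [_root_.map_mul])
  calc normSq (∑ i, f i * g i) = ‖∑ i, f i * g i‖ ^ 2 := (Complex.sq_norm _).symm
    _ ≤ (∑ i, ‖f i‖ * ‖g i‖) ^ 2 := by
        exact pow_le_pow_left₀ (norm_nonneg _) h1 2
    _ ≤ (∑ i, ‖f i‖ ^ 2) * (∑ i, ‖g i‖ ^ 2) :=
        Finset.sum_mul_sq_le_sq_mul_sq _ _ _
    _ = (∑ i, normSq (f i)) * (∑ i, normSq (g i)) := by simp [Complex.sq_norm]

section QP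
variable {ι κ : Type*} [Fintype ι] [Fintype κ]

private lemma QP_sb (b v : ι × κ → ℂ) :
    ∑ r : κ, ∑ t : κ, star (∑ i, b (i, t) * star (b (i, r))) * (∑ j, b (j, t) * v (j, r))
      = ∑ i : ι, ∑ p : ι, star (∑ s, b (p, s) * star (b (i, s))) * (∑ s, b (p, s) * v (i, s)) := by
  have L : ∑ r : κ, ∑ t : κ,
      star (∑ i, b (i, t) * star (b (i, r))) * (∑ j, b (j, t) * v (j, r))
      = ∑ i : ι, ∑ j : ι, ∑ r : κ, ∑ t : κ,
        (star (b (i, t)) * b (i, r)) * (b (j, t) * v (j, r)) := by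
    simp only [star_sum, star_mul', star_star]
    exact sum_mul_sum_comm2 (fun i r t => star (b (i, t)) * b (i, r))
      (fun j r t => b (j, t) * v (j, r))
  have R : ∑ i : ι, ∑ p : ι,
      star (∑ s, b (p, s) * star (b (i, s))) * (∑ s, b (p, s) * v (i, s))
      = ∑ i : ι, ∑ j : ι, ∑ r : κ, ∑ t : κ,
        (star (b (i, t)) * b (i, r)) * (b (j, t) * v (j, r)) := by
    simp only [star_sum, star_mul', star_star]
    simp_rw [Finset.sum_mul_sum]
    rw [Finset.sum_comm]
    refine Finset.sum_congr rfl fun p _ => ?_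
    refine Finset.sum_congr rfl fun i _ => ?_
    rw [Finset.sum_comm]
    exact Finset.sum_congr rfl fun s' _ => Finset.sum_congr rfl fun s _ => by ring
  rw [L, R]

private lemma QP_sb' (b v : ι × κ → ℂ) :
    ∑ r : κ, ∑ t : κ, star (∑ i, b (i, t) * v (i, r)) * (∑ j, b (j, t) * star (b (j, r)))
      = ∑ i : ι, ∑ p : ι, star (∑ s, b (p, s) * v (i, s)) * (∑ s, b (p, s) * star (b (i, s))) := by
  have h := congrArg star (QP_sb b v)
  simp only [star_sum, star_mul', star_star] at h
  calc ∑ r : κ, ∑ t : κ, star (∑ i, b (i, t) * v (i, r)) * (∑ j, b (j, t) * star (b (j, r)))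
      = ∑ r : κ, ∑ t : κ, (∑ j, b (j, t) * star (b (j, r))) * star (∑ i, b (i, t) * v (i, r)) := by
        exact Finset.sum_congr rfl fun r _ => Finset.sum_congr rfl fun t _ => mul_comm _ _
    _ = ∑ i : ι, ∑ p : ι, (∑ s, b (p, s) * star (b (i, s))) * star (∑ s, b (p, s) * v (i, s)) := by
        simpa only [star_sum, star_mul', star_star] using h
    _ = ∑ i : ι, ∑ p : ι, star (∑ s, b (p, s) * v (i, s)) * (∑ s, b (p, s) * star (b (i, s))) := by
        exact Finset.sum_congr rfl fun i _ => Finset.sum_congr rfl fun p _ => mul_comm _ _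
end QP


private lemma sesq_expand {γ δ : Type*} [Fintype γ] [Fintype δ] (E F : γ → δ → ℂ) (μ : ℂ) :
    ∑ r : γ, ∑ t : δ, star (E r t - μ * F r t) * (E r t - μ * F r t)
      = (∑ r, ∑ t, star (E r t) * E r t) - star μ * (∑ r, ∑ t, star (F r t) * E r t)
        - μ * (∑ r, ∑ t, star (E r t) * F r t)
        + (μ * star μ) * (∑ r, ∑ t, star (F r t) * F r t) := by
  calc ∑ r : γ, ∑ t : δ, star (E r t - μ * F r t) * (E r t - μ * F r t)
      = ∑ r : γ, ∑ t : δ, (star (E r t) * E r t - star μ * (star (F r t) * E r t)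
          - μ * (star (E r t) * F r t) + (μ * star μ) * (star (F r t) * F r t)) := by
        refine Finset.sum_congr rfl fun r _ => Finset.sum_congr rfl fun t _ => ?_
        simp only [star_sub, star_mul']
        ring
    _ = _ := by
        simp only [Finset.sum_add_distrib, Finset.sum_sub_distrib, ← Finset.mul_sum]

section
variable {ι κ : Type*} [Fintype ι] [Fintype κ]

private lemma delta_inv (b y : ι × κ → ℂ) (μ : ℂ) :
    (∑ r : κ, ∑ t : κ, star (∑ i, b (i, t) * (y (i, r) - μ * star (b (i, r)))) *
        (∑ i, b (i, t) * (y (i, r) - μ * star (b (i, r)))))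
      - (∑ i : ι, ∑ p : ι, star (∑ s, b (p, s) * (y (i, s) - μ * star (b (i, s)))) *
        (∑ s, b (p, s) * (y (i, s) - μ * star (b (i, s)))))
    = (∑ r : κ, ∑ t : κ, star (∑ i, b (i, t) * y (i, r)) * (∑ i, b (i, t) * y (i, r)))
      - (∑ i : ι, ∑ p : ι, star (∑ s, b (p, s) * y (i, s)) * (∑ s, b (p, s) * y (i, s))) := by
  have h1 : ∀ r t : κ, (∑ i, b (i, t) * (y (i, r) - μ * star (b (i, r))))
      = (∑ i, b (i, t) * y (i, r)) - μ * (∑ i, b (i, t) * star (b (i, r))) := by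
    intro r t
    rw [Finset.mul_sum, ← Finset.sum_sub_distrib]
    exact Finset.sum_congr rfl fun i _ => by ring
  have h2 : ∀ (i p : ι), (∑ s, b (p, s) * (y (i, s) - μ * star (b (i, s))))
      = (∑ s, b (p, s) * y (i, s)) - μ * (∑ s, b (p, s) * star (b (i, s))) := by
    intro i p
    rw [Finset.mul_sum, ← Finset.sum_sub_distrib]
    exact Finset.sum_congr rfl fun s _ => by ring
  simp_rw [h1, h2]
  rw [sesq_expand (fun r t => ∑ i, b (i, t) * y (i, r))
      (fun r t => ∑ i, b (i, t) * star (b (i, r))) μ,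
    sesq_expand (fun i p => ∑ s, b (p, s) * y (i, s))
      (fun i p => ∑ s, b (p, s) * star (b (i, s))) μ,
    QP_sb b y, QP_sb' b y, QP_sb b (fun u => star (b u))]
  ring
end

section
variable {ι κ : Type*} [Fintype ι] [Fintype κ]

private lemma star_mul_self_c (z : ℂ) : star z * z = (normSq z : ℂ) := by
  rw [Complex.star_def, mul_comm, Complex.mul_conj]

private lemma sum2_star_mul {γ δ : Type*} [Fintype γ] [Fintype δ] (w : γ → δ → ℂ) :
    ∑ r : γ, ∑ t : δ, star (w r t) * w r t = ((∑ r : γ, ∑ t : δ, normSq (w r t) : ℝ) : ℂ) := by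
  simp_rw [star_mul_self_c]
  norm_cast

private lemma core_real (b y : ι × κ → ℂ) :
    normSq (∑ u, b u * y u) + ∑ r : κ, ∑ t : κ, normSq (∑ i, b (i, t) * y (i, r))
      ≤ (∑ u, normSq (b u)) * (∑ u, normSq (y u))
        + ∑ i : ι, ∑ p : ι, normSq (∑ s, b (p, s) * y (i, s)) := by
  by_cases h0 : ∑ u, normSq (b u) = 0
  · have hb : ∀ u, b u = 0 := by
      intro u
      have := (Finset.sum_eq_zero_iff_of_nonneg (fun u _ => normSq_nonneg (b u))).mp h0
      exact normSq_eq_zero.mp (this u (Finset.mem_univ u))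
    simp [hb]
  · set NB := ∑ u, normSq (b u) with hNB
    have hNBnn : 0 ≤ NB := Finset.sum_nonneg fun u _ => normSq_nonneg _
    have hpos : 0 < NB := lt_of_le_of_ne hNBnn (Ne.symm h0)
    have hNBne : (NB : ℂ) ≠ 0 := by exact_mod_cast hpos.ne'
    set T : ℂ := ∑ u, b u * y u with hTdef
    set μ : ℂ := T / (NB : ℂ) with hμ
    set z : ι × κ → ℂ := fun u => y u - μ * star (b u) with hzdef
    have hbb : (∑ u, b u * star (b u)) = (NB : ℂ) := by
      have h : ∀ u, b u * star (b u) = (normSq (b u) : ℂ) := fun u => by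
        rw [mul_comm]; exact star_mul_self_c _
      simp_rw [h]; norm_cast
    have hF1 : ∑ u, b u * z u = 0 := by
      have h : ∀ u, b u * z u = b u * y u - μ * (b u * star (b u)) := fun u => by
        simp only [hzdef]; ring
      simp_rw [h]
      rw [Finset.sum_sub_distrib, ← Finset.mul_sum, hbb, ← hTdef, hμ]
      field_simp
      ring
    have hT : T = μ * (NB : ℂ) := by rw [hμ, div_mul_cancel₀ _ hNBne]
    set NZ := ∑ u, normSq (z u) with hNZ
    have hmagb : ∑ u, normSq (μ * star (b u)) = normSq μ * NB := by
      simp_rw [normSq_mul, Complex.star_def, normSq_conj]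
      rw [← Finset.mul_sum]
    have hcross : ∑ u, 2 * (z u * conj (μ * star (b u))).re = 0 := by
      have h1 : ∀ u, z u * conj (μ * star (b u)) = conj μ * (b u * z u) := fun u => by
        simp only [_root_.map_mul, Complex.star_def, Complex.conj_conj]; ring
      rw [← Finset.mul_sum, ← Complex.re_sum]
      simp_rw [h1]
      rw [← Finset.mul_sum, hF1, mul_zero]
      simp
    have hF2 : ∑ u, normSq (y u) = NZ + normSq μ * NB := by
      have hy : ∀ u, normSq (y u) = normSq (z u) + normSq (μ * star (b u))
          + 2 * (z u * conj (μ * star (b u))).re := fun u => by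
        have : y u = z u + μ * star (b u) := by simp [hzdef]
        rw [this]; exact normSq_add _ _
      simp_rw [hy]
      rw [Finset.sum_add_distrib, Finset.sum_add_distrib, hmagb, hcross, add_zero]
    have hT3 : normSq T = normSq μ * (NB * NB) := by
      rw [hT, normSq_mul, normSq_ofReal]
    -- delta invariance, real version
    have hΔc := delta_inv b y μ
    have hQz := sum2_star_mul (fun (r : κ) (t : κ) => ∑ i, b (i, t) * z (i, r))
    have hPz := sum2_star_mul (fun (i : ι) (p : ι) => ∑ s, b (p, s) * z (i, s))
    have hQy := sum2_star_mul (fun (r : κ) (t : κ) => ∑ i, b (i, t) * y (i, r))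
    have hPy := sum2_star_mul (fun (i : ι) (p : ι) => ∑ s, b (p, s) * y (i, s))
    simp only [hzdef] at hQz hPz
    rw [hQz, hPz, hQy, hPy] at hΔc
    have hΔ : (∑ r : κ, ∑ t : κ, normSq (∑ i, b (i, t) * z (i, r)))
        - (∑ i : ι, ∑ p : ι, normSq (∑ s, b (p, s) * z (i, s)))
        = (∑ r : κ, ∑ t : κ, normSq (∑ i, b (i, t) * y (i, r)))
        - (∑ i : ι, ∑ p : ι, normSq (∑ s, b (p, s) * y (i, s))) := by
      exact_mod_cast hΔc
    -- Cauchy–Schwarz bound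
    have hCS : (∑ r : κ, ∑ t : κ, normSq (∑ i, b (i, t) * z (i, r))) ≤ NB * NZ := by
      have h1 : ∀ r t : κ, normSq (∑ i, b (i, t) * z (i, r))
          ≤ (∑ i, normSq (b (i, t))) * (∑ i, normSq (z (i, r))) := fun r t =>
        normSq_sum_mul_le (fun i => b (i, t)) (fun i => z (i, r))
      calc (∑ r : κ, ∑ t : κ, normSq (∑ i, b (i, t) * z (i, r)))
          ≤ ∑ r : κ, ∑ t : κ, (∑ i, normSq (b (i, t))) * (∑ i, normSq (z (i, r))) :=
            Finset.sum_le_sum fun r _ => Finset.sum_le_sum fun t _ => h1 r t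
        _ = (∑ t : κ, ∑ i, normSq (b (i, t))) * (∑ r : κ, ∑ i, normSq (z (i, r))) := by
            rw [Finset.sum_comm]
            rw [← Finset.sum_mul_sum]
        _ = NB * NZ := by
            congr 1
            · rw [hNB, Fintype.sum_prod_type, Finset.sum_comm]
            · rw [hNZ, Fintype.sum_prod_type, Finset.sum_comm]
    have hPznn : 0 ≤ ∑ i : ι, ∑ p : ι, normSq (∑ s, b (p, s) * z (i, s)) :=
      Finset.sum_nonneg fun i _ => Finset.sum_nonneg fun p _ => normSq_nonneg _
    have hNBNY : NB * (∑ u, normSq (y u)) = NB * NZ + normSq μ * (NB * NB) := by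
      rw [hF2]; ring
    linarith [hΔ, hCS, hPznn, hT3, hNBNY]
end


private lemma sum3_swap {α β γ : Type*} [Fintype α] [Fintype β] [Fintype γ]
    (f : α → β → γ → ℂ) :
    ∑ a, ∑ b, ∑ c, f a b c = ∑ c, ∑ a, ∑ b, f a b c := by
  calc ∑ a, ∑ b, ∑ c, f a b c
      = ∑ a, ∑ c, ∑ b, f a b c := Finset.sum_congr rfl fun a _ => Finset.sum_comm
    _ = ∑ c, ∑ a, ∑ b, f a b c := Finset.sum_comm

private lemma sum4_swap {α β γ δ : Type*} [Fintype α] [Fintype β] [Fintype γ] [Fintype δ]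
    (f : α → β → γ → δ → ℂ) :
    ∑ a, ∑ b, ∑ c, ∑ d, f a b c d = ∑ c, ∑ d, ∑ a, ∑ b, f a b c d := by
  calc ∑ a, ∑ b, ∑ c, ∑ d, f a b c d
      = ∑ a, ∑ c, ∑ b, ∑ d, f a b c d :=
        Finset.sum_congr rfl fun a _ => Finset.sum_comm
    _ = ∑ c, ∑ a, ∑ b, ∑ d, f a b c d := Finset.sum_comm
    _ = ∑ c, ∑ a, ∑ d, ∑ b, f a b c d :=
        Finset.sum_congr rfl fun c _ => Finset.sum_congr rfl fun a _ => Finset.sum_comm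
    _ = ∑ c, ∑ d, ∑ a, ∑ b, f a b c d :=
        Finset.sum_congr rfl fun c _ => Finset.sum_comm

section QF
variable {m n : ℕ} (B : Matrix (Fin m × Fin n) (Fin m × Fin n) ℂ) (y : Fin m × Fin n → ℂ)

private lemma trace_eq :
    (Bᴴ * B).trace = ∑ k, ∑ u, star (B k u) * B k u := by
  simp only [Matrix.trace, Matrix.diag, Matrix.mul_apply, Matrix.conjTranspose_apply]
  exact Finset.sum_comm

private lemma qf_smul (c : ℂ) :
    star y ⬝ᵥ ((c • (1 : Matrix (Fin m × Fin n) (Fin m × Fin n) ℂ)) *ᵥ y)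
      = c * ∑ u, star (y u) * y u := by
  rw [smul_mulVec, one_mulVec, dotProduct_smul]
  simp only [smul_eq_mul, dotProduct, Pi.star_apply]

private lemma qf_A :
    star y ⬝ᵥ ((Bᴴ * B) *ᵥ y) = ∑ k, star (∑ v, B k v * y v) * (∑ v, B k v * y v) := by
  have lhs : star y ⬝ᵥ ((Bᴴ * B) *ᵥ y)
      = ∑ u, ∑ v, ∑ k, star (y u) * (star (B k u) * B k v) * y v := by
    simp only [dotProduct, mulVec, Matrix.mul_apply, Matrix.conjTranspose_apply, Pi.star_apply,
      Finset.sum_mul, Finset.mul_sum]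
    exact Finset.sum_congr rfl fun u _ => Finset.sum_congr rfl fun v _ =>
      Finset.sum_congr rfl fun k _ => by ring
  rw [lhs, sum3_swap]
  refine Finset.sum_congr rfl fun k _ => ?_
  rw [star_sum, Finset.sum_mul_sum]
  refine Finset.sum_congr rfl fun u _ => Finset.sum_congr rfl fun v _ => ?_
  simp only [star_mul']
  ring
end QF

private lemma middle_factor {γ δ ρ : Type*} [Fintype γ] [Fintype δ] [Fintype ρ]
    (c d : ρ → ℂ) (X Y : γ → δ → ρ → ℂ) :
    ∑ r, ∑ s, c r * (∑ p, ∑ k, X p k r * Y p k s) * d s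
      = ∑ p, ∑ k, (∑ r, X p k r * c r) * (∑ s, Y p k s * d s) := by
  have lhs : ∑ r, ∑ s, c r * (∑ p, ∑ k, X p k r * Y p k s) * d s
      = ∑ r, ∑ s, ∑ p, ∑ k, (X p k r * c r) * (Y p k s * d s) := by
    simp only [Finset.sum_mul, Finset.mul_sum]
    exact Finset.sum_congr rfl fun r _ => Finset.sum_congr rfl fun s _ =>
      Finset.sum_congr rfl fun p _ => Finset.sum_congr rfl fun k _ => by ring
  rw [lhs, sum4_swap]
  exact Finset.sum_congr rfl fun p _ => Finset.sum_congr rfl fun k _ =>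
    (Finset.sum_mul_sum _ _ _ _).symm

section QF2
variable {m n : ℕ} (B : Matrix (Fin m × Fin n) (Fin m × Fin n) ℂ) (y : Fin m × Fin n → ℂ)

private lemma qf_kron_one_left (P : Matrix (Fin n) (Fin n) ℂ) :
    star y ⬝ᵥ (((1 : Matrix (Fin m) (Fin m) ℂ) ⊗ₖ P) *ᵥ y)
      = ∑ i : Fin m, ∑ r, ∑ s, star (y (i, r)) * P r s * y (i, s) := by
  have hmv : ∀ i r, ((((1 : Matrix (Fin m) (Fin m) ℂ)) ⊗ₖ P) *ᵥ y) (i, r)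
      = ∑ s, P r s * y (i, s) := by
    intro i r
    simp only [mulVec, dotProduct, Fintype.sum_prod_type, kroneckerMap_apply, Matrix.one_apply,
      ite_mul, one_mul, zero_mul]
    rw [Finset.sum_comm]
    simp [Finset.sum_ite_eq, Finset.mem_univ]
  calc star y ⬝ᵥ (((1 : Matrix (Fin m) (Fin m) ℂ) ⊗ₖ P) *ᵥ y)
      = ∑ i : Fin m, ∑ r, star (y (i, r)) * ∑ s, P r s * y (i, s) := by
        simp only [dotProduct, Fintype.sum_prod_type, Pi.star_apply]
        exact Finset.sum_congr rfl fun i _ => Finset.sum_congr rfl fun r _ => by rw [hmv]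
    _ = _ := by
        refine Finset.sum_congr rfl fun i _ => Finset.sum_congr rfl fun r _ => ?_
        rw [Finset.mul_sum]
        exact Finset.sum_congr rfl fun s _ => by ring

private lemma qf_kron_one_right (Q : Matrix (Fin m) (Fin m) ℂ) :
    star y ⬝ᵥ ((Q ⊗ₖ (1 : Matrix (Fin n) (Fin n) ℂ)) *ᵥ y)
      = ∑ r : Fin n, ∑ i, ∑ j, star (y (i, r)) * Q i j * y (j, r) := by
  have hmv : ∀ i r, ((Q ⊗ₖ (1 : Matrix (Fin n) (Fin n) ℂ)) *ᵥ y) (i, r)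
      = ∑ j, Q i j * y (j, r) := by
    intro i r
    simp only [mulVec, dotProduct, Fintype.sum_prod_type, kroneckerMap_apply, Matrix.one_apply,
      mul_ite, mul_one, mul_zero, ite_mul, zero_mul]
    simp [Finset.sum_ite_eq, Finset.mem_univ]
  calc star y ⬝ᵥ ((Q ⊗ₖ (1 : Matrix (Fin n) (Fin n) ℂ)) *ᵥ y)
      = ∑ i : Fin m, ∑ r, star (y (i, r)) * ∑ j, Q i j * y (j, r) := by
        simp only [dotProduct, Fintype.sum_prod_type, Pi.star_apply]
        exact Finset.sum_congr rfl fun i _ => Finset.sum_congr rfl fun r _ => by rw [hmv]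
    _ = _ := by
        rw [Finset.sum_comm]
        refine Finset.sum_congr rfl fun r _ => Finset.sum_congr rfl fun i _ => ?_
        rw [Finset.mul_sum]
        exact Finset.sum_congr rfl fun j _ => by ring

private lemma qf_kron1 :
    star y ⬝ᵥ (((1 : Matrix (Fin m) (Fin m) ℂ) ⊗ₖ ptrace1 m n (Bᴴ * B)) *ᵥ y)
      = ∑ k, ∑ i : Fin m, ∑ p : Fin m,
          star (∑ s, B k (p, s) * y (i, s)) * (∑ s, B k (p, s) * y (i, s)) := by
  rw [qf_kron_one_left]
  have hP : ∀ r s : Fin n, ptrace1 m n (Bᴴ * B) r s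
      = ∑ p : Fin m, ∑ k, star (B k (p, r)) * B k (p, s) := by
    intro r s
    simp [ptrace1, Matrix.mul_apply, Matrix.conjTranspose_apply]
  simp_rw [hP]
  have step : ∀ i : Fin m,
      ∑ r, ∑ s, star (y (i, r)) * (∑ p : Fin m, ∑ k, star (B k (p, r)) * B k (p, s)) * y (i, s)
        = ∑ p : Fin m, ∑ k, (∑ r, star (B k (p, r)) * star (y (i, r)))
            * (∑ s, B k (p, s) * y (i, s)) := by
    intro i
    exact middle_factor (fun r => star (y (i, r))) (fun s => y (i, s))
      (fun p k r => star (B k (p, r))) (fun p k s => B k (p, s))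
  simp_rw [step]
  rw [sum3_swap]
  refine Finset.sum_congr rfl fun k _ => Finset.sum_congr rfl fun i _ =>
    Finset.sum_congr rfl fun p _ => ?_
  rw [star_sum]
  congr 1
  exact Finset.sum_congr rfl fun s _ => by rw [star_mul']

private lemma qf_kron2 :
    star y ⬝ᵥ ((ptrace2 m n (Bᴴ * B) ⊗ₖ (1 : Matrix (Fin n) (Fin n) ℂ)) *ᵥ y)
      = ∑ k, ∑ r : Fin n, ∑ t : Fin n,
          star (∑ i, B k (i, t) * y (i, r)) * (∑ i, B k (i, t) * y (i, r)) := by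
  rw [qf_kron_one_right]
  have hQ : ∀ i j : Fin m, ptrace2 m n (Bᴴ * B) i j
      = ∑ t : Fin n, ∑ k, star (B k (i, t)) * B k (j, t) := by
    intro i j
    simp [ptrace2, Matrix.mul_apply, Matrix.conjTranspose_apply]
  simp_rw [hQ]
  have step : ∀ r : Fin n,
      ∑ i, ∑ j, star (y (i, r)) * (∑ t : Fin n, ∑ k, star (B k (i, t)) * B k (j, t)) * y (j, r)
        = ∑ t : Fin n, ∑ k, (∑ i, star (B k (i, t)) * star (y (i, r)))
            * (∑ j, B k (j, t) * y (j, r)) := by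
    intro r
    exact middle_factor (fun i => star (y (i, r))) (fun j => y (j, r))
      (fun t k i => star (B k (i, t))) (fun t k j => B k (j, t))
  simp_rw [step]
  rw [sum3_swap]
  refine Finset.sum_congr rfl fun k _ => Finset.sum_congr rfl fun r _ =>
    Finset.sum_congr rfl fun t _ => ?_
  rw [star_sum]
  congr 1
  exact Finset.sum_congr rfl fun i _ => by rw [star_mul']
end QF2

section Herm
variable {m n : ℕ} (A : Matrix (Fin m × Fin n) (Fin m × Fin n) ℂ)

private lemma herm_smul_one (hA : A.IsHermitian) :
    (A.trace • (1 : Matrix (Fin m × Fin n) (Fin m × Fin n) ℂ)).IsHermitian := by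
  have htr : star A.trace = A.trace := by rw [← Matrix.trace_conjTranspose, hA]
  unfold Matrix.IsHermitian
  rw [Matrix.conjTranspose_smul, Matrix.conjTranspose_one, htr]

private lemma herm_ptrace1 (hA : A.IsHermitian) : (ptrace1 m n A).IsHermitian := by
  ext r s
  simp only [Matrix.conjTranspose_apply, ptrace1, Matrix.of_apply, star_sum]
  exact Finset.sum_congr rfl fun i _ => hA.apply (i, r) (i, s)

private lemma herm_ptrace2 (hA : A.IsHermitian) : (ptrace2 m n A).IsHermitian := by
  ext i j
  simp only [Matrix.conjTranspose_apply, ptrace2, Matrix.of_apply, star_sum]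
  exact Finset.sum_congr rfl fun r _ => hA.apply (i, r) (j, r)

private lemma herm_kron1 (hA : A.IsHermitian) :
    (((1 : Matrix (Fin m) (Fin m) ℂ)) ⊗ₖ ptrace1 m n A).IsHermitian := by
  ext ⟨i, r⟩ ⟨j, s⟩
  simp only [Matrix.conjTranspose_apply, kroneckerMap_apply, star_mul']
  have h1 : star ((1 : Matrix (Fin m) (Fin m) ℂ) j i) = (1 : Matrix (Fin m) (Fin m) ℂ) i j := by
    simp only [Matrix.one_apply, eq_comm]
    split <;> simp_all
  rw [h1, (herm_ptrace1 A hA).apply r s]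

private lemma herm_kron2 (hA : A.IsHermitian) :
    (ptrace2 m n A ⊗ₖ ((1 : Matrix (Fin n) (Fin n) ℂ))).IsHermitian := by
  ext ⟨i, r⟩ ⟨j, s⟩
  simp only [Matrix.conjTranspose_apply, kroneckerMap_apply, star_mul']
  have h1 : star ((1 : Matrix (Fin n) (Fin n) ℂ) s r) = (1 : Matrix (Fin n) (Fin n) ℂ) r s := by
    simp only [Matrix.one_apply, eq_comm]
    split <;> simp_all
  rw [h1, (herm_ptrace2 A hA).apply i j]
end Herm

private lemma core_c {ι κ : Type*} [Fintype ι] [Fintype κ] (b y : ι × κ → ℂ) :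
    0 ≤ (∑ u, star (b u) * b u) * (∑ u, star (y u) * y u)
      + (∑ i : ι, ∑ p : ι, star (∑ s, b (p, s) * y (i, s)) * (∑ s, b (p, s) * y (i, s)))
      - star (∑ u, b u * y u) * (∑ u, b u * y u)
      - (∑ r : κ, ∑ t : κ, star (∑ i, b (i, t) * y (i, r)) * (∑ i, b (i, t) * y (i, r))) := by
  have h1 : (∑ u, star (b u) * b u) = ((∑ u, normSq (b u) : ℝ) : ℂ) := by
    simp_rw [star_mul_self_c]; norm_cast
  have h2 : (∑ u, star (y u) * y u) = ((∑ u, normSq (y u) : ℝ) : ℂ) := by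
    simp_rw [star_mul_self_c]; norm_cast
  rw [h1, h2, star_mul_self_c,
    sum2_star_mul (fun (i : ι) (p : ι) => ∑ s, b (p, s) * y (i, s)),
    sum2_star_mul (fun (r : κ) (t : κ) => ∑ i, b (i, t) * y (i, r))]
  rw [← Complex.ofReal_mul, ← Complex.ofReal_add, ← Complex.ofReal_sub, ← Complex.ofReal_sub]
  rw [Complex.zero_le_real]
  linarith [core_real b y]

private lemma key_psd (m n : ℕ) (B : Matrix (Fin m × Fin n) (Fin m × Fin n) ℂ) :
    ((Bᴴ * B).trace • (1 : Matrix (Fin m × Fin n) (Fin m × Fin n) ℂ)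
      + (1 : Matrix (Fin m) (Fin m) ℂ) ⊗ₖ ptrace1 m n (Bᴴ * B)
      - ((Bᴴ * B) + ptrace2 m n (Bᴴ * B) ⊗ₖ (1 : Matrix (Fin n) (Fin n) ℂ))).PosSemidef := by
  have hherm : (Bᴴ * B).IsHermitian := Matrix.isHermitian_conjTranspose_mul_self B
  refine Matrix.PosSemidef.of_dotProduct_mulVec_nonneg ?_ ?_
  · exact ((herm_smul_one _ hherm).add (herm_kron1 _ hherm)).sub
      (hherm.add (herm_kron2 _ hherm))
  · intro x
    rw [sub_mulVec, add_mulVec, add_mulVec, dotProduct_sub, dotProduct_add, dotProduct_add,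
      qf_smul, qf_kron1, qf_A, qf_kron2, trace_eq]
    rw [Finset.sum_mul, sub_add_eq_sub_sub, ← Finset.sum_add_distrib,
      ← Finset.sum_sub_distrib, ← Finset.sum_sub_distrib]
    refine Finset.sum_nonneg fun k _ => ?_
    exact core_c (fun u => B k u) x

/-- If `A` is positive semidefinite, then
`(tr A) I_{mn} − (tr₂ A) ⊗ Iₙ ≥ A − Iₘ ⊗ (tr₁ A)`; equivalently,
`(tr A) I_{mn} + Iₘ ⊗ (tr₁ A) ≥ A + (tr₂ A) ⊗ Iₙ`. -/
theorem stmt_3 (m n : ℕ) (A : Matrix (Fin m × Fin n) (Fin m × Fin n) ℂ)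
    (hA : A.PosSemidef) :
    (A.trace • (1 : Matrix (Fin m × Fin n) (Fin m × Fin n) ℂ)
      - ptrace2 m n A ⊗ₖ (1 : Matrix (Fin n) (Fin n) ℂ)
      - (A - (1 : Matrix (Fin m) (Fin m) ℂ) ⊗ₖ ptrace1 m n A)).PosSemidef ∧
    (A.trace • (1 : Matrix (Fin m × Fin n) (Fin m × Fin n) ℂ)
      + (1 : Matrix (Fin m) (Fin m) ℂ) ⊗ₖ ptrace1 m n A
      - (A + ptrace2 m n A ⊗ₖ (1 : Matrix (Fin n) (Fin n) ℂ))).PosSemidef := by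
  obtain ⟨B, hB⟩ : ∃ B : Matrix (Fin m × Fin n) (Fin m × Fin n) ℂ, A = Bᴴ * B := by
    open scoped MatrixOrder in exact CStarAlgebra.nonneg_iff_eq_star_mul_self.mp hA.nonneg
  subst hB
  have hkey := key_psd m n B
  have heq : (Bᴴ * B).trace • (1 : Matrix (Fin m × Fin n) (Fin m × Fin n) ℂ)
      - ptrace2 m n (Bᴴ * B) ⊗ₖ (1 : Matrix (Fin n) (Fin n) ℂ)
      - ((Bᴴ * B) - (1 : Matrix (Fin m) (Fin m) ℂ) ⊗ₖ ptrace1 m n (Bᴴ * B))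
      = (Bᴴ * B).trace • (1 : Matrix (Fin m × Fin n) (Fin m × Fin n) ℂ)
      + (1 : Matrix (Fin m) (Fin m) ℂ) ⊗ₖ ptrace1 m n (Bᴴ * B)
      - ((Bᴴ * B) + ptrace2 m n (Bᴴ * B) ⊗ₖ (1 : Matrix (Fin n) (Fin n) ℂ)) := by
    abel
  exact ⟨heq ▸ hkey, hkey⟩
end

section
/- Let A = [A_{i,j}]_{i,j=1}^m ∈ M_m(M_n) be positive semidefinite. Then the 2×2 block matrix [[ (tr A) I_{mn}, A ], [ A, (tr A) I_{mn} ]] ≥ [[ (tr₂ A) ⊗ I_n, I_m ⊗ (tr₁ A) ], [ I_m ⊗ (tr₁ A), (tr₂ A) ⊗ I_n ]], i.e., the difference of these two (2mn)×(2mn) matrices is positive semidefinite. -/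
open Matrix Kronecker
open scoped ComplexOrder

local notation "conj'" => starRingEnd ℂ

set_option maxHeartbeats 3200000

namespace Stmt4Aux

/-! ### Generic sum-manipulation helpers -/

section helpers
variable {α β γ δ κ : Type*} [Fintype α] [Fintype β] [Fintype γ] [Fintype δ] [Fintype κ]

lemma sum4_swap_ij (f : α → α → γ → δ → ℂ) :
    ∑ i, ∑ j, ∑ r, ∑ s, f i j r s = ∑ i, ∑ j, ∑ r, ∑ s, f j i r s :=
  Finset.sum_comm

lemma sum4_swap_rs (f : α → β → γ → γ → ℂ) :
    ∑ i, ∑ j, ∑ r, ∑ s, f i j r s = ∑ i, ∑ j, ∑ r, ∑ s, f i j s r :=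
  Finset.sum_congr rfl fun _ _ => Finset.sum_congr rfl fun _ _ => Finset.sum_comm

lemma swap_mid (f : α → β → γ → δ → ℂ) :
    ∑ a, ∑ b, ∑ c, ∑ d, f a b c d = ∑ a, ∑ c, ∑ b, ∑ d, f a b c d :=
  Finset.sum_congr rfl fun _ _ => Finset.sum_comm

lemma swap_last2 (f : α → β → γ → δ → ℂ) :
    ∑ a, ∑ b, ∑ c, ∑ d, f a b c d = ∑ a, ∑ b, ∑ d, ∑ c, f a b c d :=
  Finset.sum_congr rfl fun _ _ => Finset.sum_congr rfl fun _ _ => Finset.sum_comm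

lemma sum_out2 (f : α → κ → ℂ) : ∑ a, ∑ k, f a k = ∑ k, ∑ a, f a k := Finset.sum_comm

lemma sum_out3 (f : α → β → κ → ℂ) :
    ∑ a, ∑ b, ∑ k, f a b k = ∑ k, ∑ a, ∑ b, f a b k := by
  have h1 : ∑ a, ∑ b, ∑ k, f a b k = ∑ a, ∑ k, ∑ b, f a b k :=
    Finset.sum_congr rfl fun _ _ => Finset.sum_comm
  rw [h1]; exact Finset.sum_comm

lemma sum_out4 (f : α → β → γ → κ → ℂ) :
    ∑ a, ∑ b, ∑ c, ∑ k, f a b c k = ∑ k, ∑ a, ∑ b, ∑ c, f a b c k := by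
  have h1 : ∑ a, ∑ b, ∑ c, ∑ k, f a b c k = ∑ a, ∑ k, ∑ b, ∑ c, f a b c k :=
    Finset.sum_congr rfl fun a _ => sum_out3 _
  rw [h1]; exact Finset.sum_comm

lemma sum_out5 (f : α → β → γ → δ → κ → ℂ) :
    ∑ a, ∑ b, ∑ c, ∑ d, ∑ k, f a b c d k = ∑ k, ∑ a, ∑ b, ∑ c, ∑ d, f a b c d k := by
  have h1 : ∑ a, ∑ b, ∑ c, ∑ d, ∑ k, f a b c d k = ∑ a, ∑ k, ∑ b, ∑ c, ∑ d, f a b c d k :=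
    Finset.sum_congr rfl fun a _ => sum_out4 _
  rw [h1]; exact Finset.sum_comm

lemma sum_mul_sum4 (a b : α → γ → ℂ) :
    (∑ i, ∑ r, a i r) * (∑ j, ∑ s, b j s) = ∑ i, ∑ j, ∑ r, ∑ s, a i r * b j s := by
  rw [Fintype.sum_mul_sum]
  exact Finset.sum_congr rfl fun i _ => Finset.sum_congr rfl fun j _ =>
    Fintype.sum_mul_sum _ _

lemma sum4_add (f g : α → β → γ → δ → ℂ) :
    (∑ i, ∑ j, ∑ r, ∑ s, f i j r s) + (∑ i, ∑ j, ∑ r, ∑ s, g i j r s)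
      = ∑ i, ∑ j, ∑ r, ∑ s, (f i j r s + g i j r s) := by
  simp [Finset.sum_add_distrib]

lemma sum4_sub (f g : α → β → γ → δ → ℂ) :
    (∑ i, ∑ j, ∑ r, ∑ s, f i j r s) - (∑ i, ∑ j, ∑ r, ∑ s, g i j r s)
      = ∑ i, ∑ j, ∑ r, ∑ s, (f i j r s - g i j r s) := by
  simp [Finset.sum_sub_distrib]

lemma sum4_congr (f g : α → β → γ → δ → ℂ) (h : ∀ i j r s, f i j r s = g i j r s) :
    ∑ i, ∑ j, ∑ r, ∑ s, f i j r s = ∑ i, ∑ j, ∑ r, ∑ s, g i j r s :=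
  Finset.sum_congr rfl fun i _ => Finset.sum_congr rfl fun j _ =>
    Finset.sum_congr rfl fun r _ => Finset.sum_congr rfl fun s _ => h i j r s

lemma quarter_nonneg {E : ℂ} (h : 0 ≤ 4 * E) : 0 ≤ E := by
  rw [Complex.le_def] at h ⊢
  constructor
  · have := h.1; simp [Complex.mul_re] at this ⊢; linarith
  · have := h.2; simp [Complex.mul_im] at this ⊢; linarith

lemma sum4_nonneg (f : α → β → γ → δ → ℂ) (h : ∀ i j r s, 0 ≤ f i j r s) :
    0 ≤ ∑ i, ∑ j, ∑ r, ∑ s, f i j r s :=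
  Finset.sum_nonneg fun i _ => Finset.sum_nonneg fun j _ =>
    Finset.sum_nonneg fun r _ => Finset.sum_nonneg fun s _ => h i j r s

/-! ### The key sum-of-squares step -/

lemma sos_step (fR g : α → α → γ → γ → ℂ)
    (hpt : ∀ i j r s, fR i j r s + fR j i r s + fR i j s r + fR j i s r
      = conj' (g i j r s) * g i j r s) :
    0 ≤ ∑ i, ∑ j, ∑ r, ∑ s, fR i j r s := by
  apply quarter_nonneg
  have h1 := sum4_swap_ij fR
  have h2 := sum4_swap_rs fR
  have h3 := (sum4_swap_ij fR).trans (sum4_swap_rs fun i j r s => fR j i r s)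
  have e4 : (4:ℂ) * (∑ i, ∑ j, ∑ r, ∑ s, fR i j r s)
      = ∑ i, ∑ j, ∑ r, ∑ s, conj' (g i j r s) * g i j r s := by
    calc (4:ℂ) * (∑ i, ∑ j, ∑ r, ∑ s, fR i j r s)
        = (∑ i, ∑ j, ∑ r, ∑ s, fR i j r s) + (∑ i, ∑ j, ∑ r, ∑ s, fR j i r s)
          + (∑ i, ∑ j, ∑ r, ∑ s, fR i j s r) + (∑ i, ∑ j, ∑ r, ∑ s, fR j i s r) := by
          rw [← h1, ← h2, ← h3]; ring
      _ = ∑ i, ∑ j, ∑ r, ∑ s, (fR i j r s + fR j i r s + fR i j s r + fR j i s r) := by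
          rw [sum4_add, sum4_add, sum4_add]
      _ = ∑ i, ∑ j, ∑ r, ∑ s, conj' (g i j r s) * g i j r s := sum4_congr _ _ hpt
  rw [e4]
  exact sum4_nonneg _ fun i j r s => by
    simpa only [starRingEnd_apply] using star_mul_self_nonneg (g i j r s)

lemma key1 (V W : α → γ → ℂ) :
    0 ≤ (∑ i, ∑ r, V i r * conj' (V i r)) * (∑ j, ∑ s, conj' (W j s) * W j s)
      + (∑ i, ∑ r, conj' (W i r) * V i r) * (∑ j, ∑ s, conj' (V j s) * W j s)
      - (∑ i, ∑ j, ∑ r, ∑ s, conj' (W i r) * V i s * conj' (V j s) * W j r)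
      - (∑ i, ∑ j, ∑ r, ∑ s, conj' (W i r) * V j r * conj' (V j s) * W i s) := by
  rw [sum_mul_sum4, sum_mul_sum4, sum4_add, sum4_sub, sum4_sub]
  exact sos_step _ (fun i j r s => V i r * W j s + W i r * V j s - V j r * W i s - V i s * W j r)
    (fun i j r s => by simp only [map_add, map_sub, _root_.map_mul]; ring)

lemma key2 (V W : α → γ → ℂ) :
    0 ≤ (∑ i, ∑ r, V i r * conj' (V i r)) * (∑ j, ∑ s, conj' (W j s) * W j s)
      - (∑ i, ∑ r, conj' (W i r) * V i r) * (∑ j, ∑ s, conj' (V j s) * W j s)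
      - (∑ i, ∑ j, ∑ r, ∑ s, conj' (W i r) * V i s * conj' (V j s) * W j r)
      + (∑ i, ∑ j, ∑ r, ∑ s, conj' (W i r) * V j r * conj' (V j s) * W i s) := by
  rw [sum_mul_sum4, sum_mul_sum4, sum4_sub, sum4_sub, sum4_add]
  exact sos_step _ (fun i j r s => V i r * W j s - W i r * V j s - V j r * W i s + V i s * W j r)
    (fun i j r s => by simp only [map_add, map_sub, _root_.map_mul]; ring)

/-- `key1` with the third and fourth sums in the canonical binder order `i r j s`. -/
lemma key1' (V W : α → γ → ℂ) :
    0 ≤ (∑ i, ∑ r, V i r * conj' (V i r)) * (∑ j, ∑ s, conj' (W j s) * W j s)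
      + (∑ i, ∑ r, conj' (W i r) * V i r) * (∑ j, ∑ s, conj' (V j s) * W j s)
      - (∑ i, ∑ r, ∑ j, ∑ s, conj' (W i r) * V i s * conj' (V j s) * W j r)
      - (∑ i, ∑ r, ∑ j, ∑ s, conj' (W i r) * V j r * conj' (V j s) * W i s) := by
  have := key1 V W
  rwa [swap_mid (fun i j r s => conj' (W i r) * V i s * conj' (V j s) * W j r),
    swap_mid (fun i j r s => conj' (W i r) * V j r * conj' (V j s) * W i s)] at this

lemma key2' (V W : α → γ → ℂ) :
    0 ≤ (∑ i, ∑ r, V i r * conj' (V i r)) * (∑ j, ∑ s, conj' (W j s) * W j s)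
      - (∑ i, ∑ r, conj' (W i r) * V i r) * (∑ j, ∑ s, conj' (V j s) * W j s)
      - (∑ i, ∑ r, ∑ j, ∑ s, conj' (W i r) * V i s * conj' (V j s) * W j r)
      + (∑ i, ∑ r, ∑ j, ∑ s, conj' (W i r) * V j r * conj' (V j s) * W i s) := by
  have := key2 V W
  rwa [swap_mid (fun i j r s => conj' (W i r) * V i s * conj' (V j s) * W j r),
    swap_mid (fun i j r s => conj' (W i r) * V j r * conj' (V j s) * W i s)] at this

end helpers

/-! ### Evaluation of the four quadratic forms -/

section eval
variable {m n : ℕ} (B : Matrix (Fin m × Fin n) (Fin m × Fin n) ℂ) (y : Fin m × Fin n → ℂ)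

lemma eval_trace :
    star y ⬝ᵥ (((Bᴴ * B).trace • (1 : Matrix (Fin m × Fin n) (Fin m × Fin n) ℂ)) *ᵥ y)
      = ∑ k, (∑ i, ∑ r, conj' (B k (i,r)) * B k (i,r))
          * (∑ j, ∑ s, conj' (y (j,s)) * y (j,s)) := by
  have step1 : star y ⬝ᵥ (((Bᴴ * B).trace • (1 : Matrix (Fin m × Fin n) (Fin m × Fin n) ℂ)) *ᵥ y)
      = (Bᴴ * B).trace * ∑ p, conj' (y p) * y p := by
    simp only [Matrix.smul_mulVec, Matrix.one_mulVec, dotProduct_smul,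
      dotProduct, Pi.star_apply, starRingEnd_apply, smul_eq_mul, Pi.smul_apply]
    rw [Finset.mul_sum]
    exact Finset.sum_congr rfl fun p _ => by ring
  rw [step1]
  have step2 : (Bᴴ * B).trace = ∑ k, ∑ i, ∑ r, conj' (B k (i,r)) * B k (i,r) := by
    simp only [Matrix.trace, Matrix.diag, Matrix.mul_apply, Matrix.conjTranspose_apply,
      starRingEnd_apply]
    rw [sum_out2]
    refine Finset.sum_congr rfl fun k _ => ?_
    simp only [Fintype.sum_prod_type]
  rw [step2, Finset.sum_mul]
  refine Finset.sum_congr rfl fun k _ => ?_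
  congr 1
  simp only [Fintype.sum_prod_type]

lemma eval_A :
    star y ⬝ᵥ ((Bᴴ * B) *ᵥ y)
      = ∑ k, (∑ i, ∑ r, conj' (y (i,r)) * conj' (B k (i,r)))
          * (∑ j, ∑ s, B k (j,s) * y (j,s)) := by
  have step1 : star y ⬝ᵥ ((Bᴴ * B) *ᵥ y)
      = ∑ p, ∑ q, ∑ k, conj' (y p) * conj' (B k p) * (B k q * y q) := by
    simp only [dotProduct, Matrix.mulVec, Matrix.mul_apply, Matrix.conjTranspose_apply,
      Finset.mul_sum, Finset.sum_mul, starRingEnd_apply, Pi.star_apply]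
    exact Finset.sum_congr rfl fun p _ => Finset.sum_congr rfl fun q _ =>
      Finset.sum_congr rfl fun k _ => by ring
  rw [step1, sum_out3]
  refine Finset.sum_congr rfl fun k _ => ?_
  rw [Fintype.sum_mul_sum]
  simp only [Fintype.sum_prod_type]
  rw [swap_mid]
  refine Finset.sum_congr rfl fun i _ => Finset.sum_congr rfl fun j _ => ?_
  rw [Fintype.sum_mul_sum]

lemma eval_Q :
    star y ⬝ᵥ ((ptrace2 m n (Bᴴ * B) ⊗ₖ (1 : Matrix (Fin n) (Fin n) ℂ)) *ᵥ y)
      = ∑ k, ∑ i, ∑ r, ∑ j, ∑ s,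
          conj' (y (i,r)) * conj' (B k (i,s)) * B k (j,s) * y (j,r) := by
  have step1 : star y ⬝ᵥ ((ptrace2 m n (Bᴴ * B) ⊗ₖ (1 : Matrix (Fin n) (Fin n) ℂ)) *ᵥ y)
      = ∑ i, ∑ r, ∑ j, ∑ s, ∑ k,
          conj' (y (i,r)) * conj' (B k (i,s)) * B k (j,s) * y (j,r) := by
    simp only [dotProduct, Matrix.mulVec, kroneckerMap_apply, Matrix.one_apply,
      ptrace2, Matrix.of_apply, Matrix.mul_apply, Matrix.conjTranspose_apply,
      Fintype.sum_prod_type, Pi.star_apply, starRingEnd_apply, mul_ite, ite_mul,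
      mul_zero, zero_mul, mul_one, one_mul, Finset.sum_ite_eq, Finset.sum_ite_eq',
      Finset.mem_univ, if_true, Finset.mul_sum, Finset.sum_mul, Finset.sum_ite_irrel,
      Finset.sum_const_zero]
    exact Finset.sum_congr rfl fun a _ => Finset.sum_congr rfl fun b _ =>
      Finset.sum_congr rfl fun c _ => Finset.sum_congr rfl fun d _ =>
      Finset.sum_congr rfl fun e _ => Finset.sum_congr rfl fun f _ => by ring
  rw [step1]
  exact sum_out5 _

lemma eval_R :
    star y ⬝ᵥ (((1 : Matrix (Fin m) (Fin m) ℂ) ⊗ₖ ptrace1 m n (Bᴴ * B)) *ᵥ y)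
      = ∑ k, ∑ i, ∑ r, ∑ j, ∑ s,
          conj' (y (i,r)) * conj' (B k (j,r)) * B k (j,s) * y (i,s) := by
  have step1 : star y ⬝ᵥ (((1 : Matrix (Fin m) (Fin m) ℂ) ⊗ₖ ptrace1 m n (Bᴴ * B)) *ᵥ y)
      = ∑ i, ∑ r, ∑ s, ∑ j, ∑ k,
          conj' (y (i,r)) * conj' (B k (j,r)) * B k (j,s) * y (i,s) := by
    simp only [dotProduct, Matrix.mulVec, kroneckerMap_apply, Matrix.one_apply,
      ptrace1, Matrix.of_apply, Matrix.mul_apply, Matrix.conjTranspose_apply,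
      Fintype.sum_prod_type, Pi.star_apply, starRingEnd_apply, mul_ite, ite_mul,
      mul_zero, zero_mul, mul_one, one_mul, Finset.sum_ite_eq, Finset.sum_ite_eq',
      Finset.mem_univ, if_true, Finset.mul_sum, Finset.sum_mul, Finset.sum_ite_irrel,
      Finset.sum_const_zero]
    exact Finset.sum_congr rfl fun a _ => Finset.sum_congr rfl fun b _ =>
      Finset.sum_congr rfl fun c _ => Finset.sum_congr rfl fun d _ =>
      Finset.sum_congr rfl fun e _ => Finset.sum_congr rfl fun f _ => by ring
  rw [step1, swap_last2]
  exact sum_out5 _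

/-- The per-`k` quadratic form for the `+` sign. -/
lemma perk1 (k : Fin m × Fin n) :
    0 ≤ (∑ i, ∑ r, conj' (B k (i,r)) * B k (i,r)) * (∑ j, ∑ s, conj' (y (j,s)) * y (j,s))
      + (∑ i, ∑ r, conj' (y (i,r)) * conj' (B k (i,r))) * (∑ j, ∑ s, B k (j,s) * y (j,s))
      - (∑ i, ∑ r, ∑ j, ∑ s, conj' (y (i,r)) * conj' (B k (i,s)) * B k (j,s) * y (j,r))
      - (∑ i, ∑ r, ∑ j, ∑ s, conj' (y (i,r)) * conj' (B k (j,r)) * B k (j,s) * y (i,s)) := by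
  have := key1' (fun i r => conj' (B k (i,r))) (fun i r => y (i,r))
  simpa [Complex.conj_conj] using this

/-- The per-`k` quadratic form for the `-` sign. -/
lemma perk2 (k : Fin m × Fin n) :
    0 ≤ (∑ i, ∑ r, conj' (B k (i,r)) * B k (i,r)) * (∑ j, ∑ s, conj' (y (j,s)) * y (j,s))
      - (∑ i, ∑ r, conj' (y (i,r)) * conj' (B k (i,r))) * (∑ j, ∑ s, B k (j,s) * y (j,s))
      - (∑ i, ∑ r, ∑ j, ∑ s, conj' (y (i,r)) * conj' (B k (i,s)) * B k (j,s) * y (j,r))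
      + (∑ i, ∑ r, ∑ j, ∑ s, conj' (y (i,r)) * conj' (B k (j,r)) * B k (j,s) * y (i,s)) := by
  have := key2' (fun i r => conj' (B k (i,r))) (fun i r => y (i,r))
  simpa [Complex.conj_conj] using this

end eval

/-! ### Hermitian facts -/

section herm
variable {m n : ℕ} {A : Matrix (Fin m × Fin n) (Fin m × Fin n) ℂ}

lemma star_ite_one (r s : Fin n) :
    star (if s = r then (1:ℂ) else 0) = if r = s then (1:ℂ) else 0 := by
  rcases eq_or_ne s r with h | h
  · subst h; simp
  · simp [h, Ne.symm h]

lemma herm_smul_one (hA : A.IsHermitian) :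
    ((A.trace) • (1 : Matrix (Fin m × Fin n) (Fin m × Fin n) ℂ)).IsHermitian := by
  have ht : star A.trace = A.trace := by
    rw [← Matrix.trace_conjTranspose, hA.eq]
  show _ᴴ = _
  rw [Matrix.conjTranspose_smul, Matrix.conjTranspose_one, ht]

lemma herm_ptrace2 (hA : A.IsHermitian) :
    (ptrace2 m n A ⊗ₖ (1 : Matrix (Fin n) (Fin n) ℂ)).IsHermitian := by
  show _ᴴ = _
  ext ⟨i, r⟩ ⟨j, s⟩
  simp only [Matrix.conjTranspose_apply, kroneckerMap_apply, ptrace2, Matrix.of_apply,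
    Matrix.one_apply]
  rw [star_mul']
  have e1 : star (∑ u, A (j,u) (i,u)) = ∑ u, A (i,u) (j,u) := by
    rw [star_sum]
    exact Finset.sum_congr rfl fun u _ => hA.apply (i, u) (j, u)
  rw [e1, star_ite_one]

lemma herm_ptrace1 (hA : A.IsHermitian) :
    ((1 : Matrix (Fin m) (Fin m) ℂ) ⊗ₖ ptrace1 m n A).IsHermitian := by
  show _ᴴ = _
  ext ⟨i, r⟩ ⟨j, s⟩
  simp only [Matrix.conjTranspose_apply, kroneckerMap_apply, ptrace1, Matrix.of_apply,
    Matrix.one_apply]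
  rw [star_mul']
  have e1 : star (∑ u, A (u,s) (u,r)) = ∑ u, A (u,r) (u,s) := by
    rw [star_sum]
    exact Finset.sum_congr rfl fun u _ => hA.apply (u, r) (u, s)
  rw [e1, star_ite_one]

end herm

/-! ### Positive semidefiniteness of `X ± Y` -/

section psd
variable {m n : ℕ} (B : Matrix (Fin m × Fin n) (Fin m × Fin n) ℂ)

lemma psd_plus :
    (((Bᴴ * B).trace • (1 : Matrix (Fin m × Fin n) (Fin m × Fin n) ℂ)
        - ptrace2 m n (Bᴴ * B) ⊗ₖ (1 : Matrix (Fin n) (Fin n) ℂ))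
      + ((Bᴴ * B) - (1 : Matrix (Fin m) (Fin m) ℂ) ⊗ₖ ptrace1 m n (Bᴴ * B))).PosSemidef := by
  have hA : (Bᴴ * B).IsHermitian := Matrix.isHermitian_conjTranspose_mul_self B
  refine Matrix.PosSemidef.of_dotProduct_mulVec_nonneg ?_ ?_
  · exact ((herm_smul_one hA).sub (herm_ptrace2 hA)).add (hA.sub (herm_ptrace1 hA))
  · intro y
    have split : star y ⬝ᵥ ((((Bᴴ * B).trace • (1 : Matrix (Fin m × Fin n) (Fin m × Fin n) ℂ)
          - ptrace2 m n (Bᴴ * B) ⊗ₖ (1 : Matrix (Fin n) (Fin n) ℂ))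
        + ((Bᴴ * B) - (1 : Matrix (Fin m) (Fin m) ℂ) ⊗ₖ ptrace1 m n (Bᴴ * B))) *ᵥ y)
        = star y ⬝ᵥ (((Bᴴ * B).trace • (1 : Matrix (Fin m × Fin n) (Fin m × Fin n) ℂ)) *ᵥ y)
          - star y ⬝ᵥ ((ptrace2 m n (Bᴴ * B) ⊗ₖ (1 : Matrix (Fin n) (Fin n) ℂ)) *ᵥ y)
          + (star y ⬝ᵥ ((Bᴴ * B) *ᵥ y)
          - star y ⬝ᵥ (((1 : Matrix (Fin m) (Fin m) ℂ) ⊗ₖ ptrace1 m n (Bᴴ * B)) *ᵥ y)) := by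
      simp only [Matrix.add_mulVec, Matrix.sub_mulVec, dotProduct_add,
        dotProduct_sub]
    rw [split, eval_trace, eval_Q, eval_A, eval_R, ← Finset.sum_sub_distrib,
      ← Finset.sum_sub_distrib, ← Finset.sum_add_distrib]
    refine Finset.sum_nonneg fun k _ => ?_
    have := perk1 B y k
    convert this using 1
    ring

lemma psd_minus :
    (((Bᴴ * B).trace • (1 : Matrix (Fin m × Fin n) (Fin m × Fin n) ℂ)
        - ptrace2 m n (Bᴴ * B) ⊗ₖ (1 : Matrix (Fin n) (Fin n) ℂ))
      - ((Bᴴ * B) - (1 : Matrix (Fin m) (Fin m) ℂ) ⊗ₖ ptrace1 m n (Bᴴ * B))).PosSemidef := by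
  have hA : (Bᴴ * B).IsHermitian := Matrix.isHermitian_conjTranspose_mul_self B
  refine Matrix.PosSemidef.of_dotProduct_mulVec_nonneg ?_ ?_
  · exact ((herm_smul_one hA).sub (herm_ptrace2 hA)).sub (hA.sub (herm_ptrace1 hA))
  · intro y
    have split : star y ⬝ᵥ ((((Bᴴ * B).trace • (1 : Matrix (Fin m × Fin n) (Fin m × Fin n) ℂ)
          - ptrace2 m n (Bᴴ * B) ⊗ₖ (1 : Matrix (Fin n) (Fin n) ℂ))
        - ((Bᴴ * B) - (1 : Matrix (Fin m) (Fin m) ℂ) ⊗ₖ ptrace1 m n (Bᴴ * B))) *ᵥ y)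
        = star y ⬝ᵥ (((Bᴴ * B).trace • (1 : Matrix (Fin m × Fin n) (Fin m × Fin n) ℂ)) *ᵥ y)
          - star y ⬝ᵥ ((ptrace2 m n (Bᴴ * B) ⊗ₖ (1 : Matrix (Fin n) (Fin n) ℂ)) *ᵥ y)
          - (star y ⬝ᵥ ((Bᴴ * B) *ᵥ y)
          - star y ⬝ᵥ (((1 : Matrix (Fin m) (Fin m) ℂ) ⊗ₖ ptrace1 m n (Bᴴ * B)) *ᵥ y)) := by
      simp only [Matrix.sub_mulVec, dotProduct_sub]
    rw [split, eval_trace, eval_Q, eval_A, eval_R, ← Finset.sum_sub_distrib,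
      ← Finset.sum_sub_distrib, ← Finset.sum_sub_distrib]
    refine Finset.sum_nonneg fun k _ => ?_
    have := perk2 B y k
    convert this using 1
    ring

end psd

/-! ### Halving -/

lemma posSemidef_half {N : Type*} [Fintype N] [DecidableEq N] {M : Matrix N N ℂ}
    (h : (M + M).PosSemidef) : M.PosSemidef := by
  refine Matrix.PosSemidef.of_dotProduct_mulVec_nonneg ?_ ?_
  · have h1 := h.1
    show Mᴴ = M
    ext i j
    have e : Mᴴ i j + Mᴴ i j = M i j + M i j := by
      have := congrFun (congrFun h1 i) j
      simpa [Matrix.conjTranspose_apply, Matrix.add_apply] using this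
    have : (2 : ℂ) * Mᴴ i j = 2 * M i j := by ring_nf; linear_combination e
    exact mul_left_cancel₀ two_ne_zero this
  · intro x
    have h2 := h.dotProduct_mulVec_nonneg x
    rw [Matrix.add_mulVec, dotProduct_add] at h2
    rw [Complex.le_def] at h2 ⊢
    constructor
    · have := h2.1; simp only [Complex.add_re, Complex.zero_re] at this ⊢; linarith
    · have := h2.2; simp only [Complex.add_im, Complex.zero_im] at this ⊢; linarith

open scoped MatrixOrder in
lemma posSemidef_iff_eq_transpose_mul_self {N : Type*} [Fintype N] [DecidableEq N]
    {A : Matrix N N ℂ} : A.PosSemidef ↔ ∃ B : Matrix N N ℂ, A = Bᴴ * B := by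
  constructor
  · intro hA
    obtain ⟨B, hB⟩ := CStarAlgebra.nonneg_iff_eq_star_mul_self.mp hA.nonneg
    exact ⟨B, hB⟩
  · rintro ⟨B, rfl⟩
    exact Matrix.posSemidef_conjTranspose_mul_self B

end Stmt4Aux

open Stmt4Aux in
/-- If `A` is positive semidefinite, then the 2×2 block matrix
`[[(tr A) I, A], [A, (tr A) I]]` dominates
`[[(tr₂ A) ⊗ Iₙ, Iₘ ⊗ (tr₁ A)], [Iₘ ⊗ (tr₁ A), (tr₂ A) ⊗ Iₙ]]`. -/
theorem stmt_4 (m n : ℕ) (A : Matrix (Fin m × Fin n) (Fin m × Fin n) ℂ)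
    (hA : A.PosSemidef) :
    (Matrix.fromBlocks
        (A.trace • (1 : Matrix (Fin m × Fin n) (Fin m × Fin n) ℂ)) A
        A (A.trace • (1 : Matrix (Fin m × Fin n) (Fin m × Fin n) ℂ))
      - Matrix.fromBlocks
        (ptrace2 m n A ⊗ₖ (1 : Matrix (Fin n) (Fin n) ℂ))
        ((1 : Matrix (Fin m) (Fin m) ℂ) ⊗ₖ ptrace1 m n A)
        ((1 : Matrix (Fin m) (Fin m) ℂ) ⊗ₖ ptrace1 m n A)
        (ptrace2 m n A ⊗ₖ (1 : Matrix (Fin n) (Fin n) ℂ))).PosSemidef := by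
  obtain ⟨B, hB⟩ := posSemidef_iff_eq_transpose_mul_self.mp hA
  subst hB
  set X := (Bᴴ * B).trace • (1 : Matrix (Fin m × Fin n) (Fin m × Fin n) ℂ)
    - ptrace2 m n (Bᴴ * B) ⊗ₖ (1 : Matrix (Fin n) (Fin n) ℂ) with hX
  set Y := (Bᴴ * B) - (1 : Matrix (Fin m) (Fin m) ℂ) ⊗ₖ ptrace1 m n (Bᴴ * B) with hY
  have hgoal : (Matrix.fromBlocks
        ((Bᴴ * B).trace • (1 : Matrix (Fin m × Fin n) (Fin m × Fin n) ℂ)) (Bᴴ * B)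
        (Bᴴ * B) ((Bᴴ * B).trace • (1 : Matrix (Fin m × Fin n) (Fin m × Fin n) ℂ))
      - Matrix.fromBlocks
        (ptrace2 m n (Bᴴ * B) ⊗ₖ (1 : Matrix (Fin n) (Fin n) ℂ))
        ((1 : Matrix (Fin m) (Fin m) ℂ) ⊗ₖ ptrace1 m n (Bᴴ * B))
        ((1 : Matrix (Fin m) (Fin m) ℂ) ⊗ₖ ptrace1 m n (Bᴴ * B))
        (ptrace2 m n (Bᴴ * B) ⊗ₖ (1 : Matrix (Fin n) (Fin n) ℂ)))
      = Matrix.fromBlocks X Y Y X := by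
    rw [hX, hY]
    simp [sub_eq_add_neg, Matrix.fromBlocks_neg, Matrix.fromBlocks_add]
  rw [hgoal]
  have hplus : (X + Y).PosSemidef := psd_plus B
  have hminus : (X - Y).PosSemidef := psd_minus B
  obtain ⟨C₁, hC₁⟩ := posSemidef_iff_eq_transpose_mul_self.mp hplus
  obtain ⟨C₂, hC₂⟩ := posSemidef_iff_eq_transpose_mul_self.mp hminus
  have hD : (Matrix.fromBlocks C₁ 0 0 C₂)ᴴ * (Matrix.fromBlocks C₁ 0 0 C₂)
      = Matrix.fromBlocks (X + Y) 0 0 (X - Y) := by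
    rw [Matrix.fromBlocks_conjTranspose, Matrix.fromBlocks_multiply]
    simp [← hC₁, ← hC₂]
  have hU : ((Matrix.fromBlocks C₁ 0 0 C₂) * (Matrix.fromBlocks 1 1 1 (-1)))ᴴ
        * ((Matrix.fromBlocks C₁ 0 0 C₂) * (Matrix.fromBlocks 1 1 1 (-1)))
      = Matrix.fromBlocks X Y Y X + Matrix.fromBlocks X Y Y X := by
    rw [Matrix.conjTranspose_mul, Matrix.mul_assoc,
      ← Matrix.mul_assoc (Matrix.fromBlocks C₁ 0 0 C₂)ᴴ, hD]
    rw [Matrix.fromBlocks_conjTranspose]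
    rw [Matrix.fromBlocks_multiply, Matrix.fromBlocks_multiply, Matrix.fromBlocks_add]
    simp only [Matrix.conjTranspose_one, Matrix.conjTranspose_neg, Matrix.mul_one,
      Matrix.one_mul, Matrix.mul_zero, Matrix.zero_mul, add_zero, zero_add,
      Matrix.mul_neg, Matrix.neg_mul, neg_neg, neg_zero]
    rw [show X + Y + (X - Y) = X + X from by abel,
      show X + Y + -(X - Y) = Y + Y from by abel]
  have h2M : (Matrix.fromBlocks X Y Y X + Matrix.fromBlocks X Y Y X).PosSemidef := by
    rw [← hU]
    exact Matrix.posSemidef_conjTranspose_mul_self _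
  exact posSemidef_half h2M
end

section
/- Let A = [A_{i,j}]_{i,j=1}^m ∈ M_m(M_n) be PPT, i.e., both A and its partial transpose A^τ = [A_{j,i}]_{i,j=1}^m are positive semidefinite. Then (tr A) I_{mn} + (tr₂ A) ⊗ I_n ≥ I_m ⊗ (tr₁ A) + A. -/
open Matrix Kronecker
open scoped ComplexOrder

/-- `Vmat m n r s = Iₘ ⊗ (E_{rs} - E_{sr})`, the Kraus operators of (id ⊗ Λ∘T) where
`Λ(X) = tr(X)·I - X` is the reduction map. -/
noncomputable def Vmat (m n : ℕ) (r s : Fin n) :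
    Matrix (Fin m × Fin n) (Fin m × Fin n) ℂ :=
  Matrix.of fun p q =>
    (if p.1 = q.1 ∧ p.2 = r ∧ q.2 = s then 1 else 0)
      - (if p.1 = q.1 ∧ p.2 = s ∧ q.2 = r then 1 else 0)

lemma VC_apply (m n : ℕ) (r s : Fin n) (C : Matrix (Fin m × Fin n) (Fin m × Fin n) ℂ)
    (p q : Fin m × Fin n) :
    (Vmat m n r s * C) p q =
      (if p.2 = r then C (p.1, s) q else 0) - (if p.2 = s then C (p.1, r) q else 0) := by
  simp [Matrix.mul_apply, Vmat, Fintype.sum_prod_type, sub_mul, ite_and,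
    Finset.sum_ite_eq, Finset.sum_ite_eq', Finset.sum_sub_distrib]

lemma CVh_apply (m n : ℕ) (r s : Fin n) (C : Matrix (Fin m × Fin n) (Fin m × Fin n) ℂ)
    (p q : Fin m × Fin n) :
    (C * (Vmat m n r s)ᴴ) p q =
      (if q.2 = r then C p (q.1, s) else 0) - (if q.2 = s then C p (q.1, r) else 0) := by
  simp [Matrix.mul_apply, Vmat, conjTranspose_apply, Fintype.sum_prod_type, mul_sub, ite_and,
    Finset.sum_ite_eq, Finset.sum_ite_eq', Finset.sum_sub_distrib, apply_ite (starRingEnd ℂ)]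

lemma VCV_apply (m n : ℕ) (r s : Fin n) (C : Matrix (Fin m × Fin n) (Fin m × Fin n) ℂ)
    (p q : Fin m × Fin n) :
    (Vmat m n r s * C * (Vmat m n r s)ᴴ) p q =
      (if q.2 = r then
        (if p.2 = r then C (p.1, s) (q.1, s) else 0)
          - (if p.2 = s then C (p.1, r) (q.1, s) else 0) else 0)
      - (if q.2 = s then
        (if p.2 = r then C (p.1, s) (q.1, r) else 0)
          - (if p.2 = s then C (p.1, r) (q.1, r) else 0) else 0) := by
  rw [CVh_apply]
  simp only [VC_apply]

lemma sum_VCV (m n : ℕ) (C : Matrix (Fin m × Fin n) (Fin m × Fin n) ℂ) :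
    ∑ r : Fin n, ∑ s : Fin n, Vmat m n r s * C * (Vmat m n r s)ᴴ =
      (2 : ℂ) • (Matrix.of fun p q : Fin m × Fin n =>
        (if p.2 = q.2 then ∑ t, C (p.1, t) (q.1, t) else 0) - C (p.1, q.2) (q.1, p.2)) := by
  ext p q
  simp only [Matrix.sum_apply, VCV_apply, Matrix.smul_apply, Matrix.of_apply, smul_eq_mul]
  simp [Finset.sum_sub_distrib, ite_sub_ite, Finset.sum_ite_eq, Finset.sum_ite_eq',
    apply_ite (fun x : ℂ => -x), eq_comm]
  ring_nf

lemma psd_sum {k : Type*} [Fintype k] [DecidableEq k] {ι : Type*} (t : Finset ι)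
    (f : ι → Matrix k k ℂ) (hf : ∀ i ∈ t, (f i).PosSemidef) :
    (∑ i ∈ t, f i).PosSemidef :=
  Finset.sum_induction f _ (fun _ _ ha hb => ha.add hb) .zero hf

lemma psd_half {k : Type*} [Fintype k] {M : Matrix k k ℂ} (hM : M.PosSemidef) :
    ((2 : ℂ)⁻¹ • M).PosSemidef := by
  refine posSemidef_iff_dotProduct_mulVec.mpr ⟨?_, fun x => ?_⟩
  · have := hM.1
    unfold Matrix.IsHermitian at *
    rw [conjTranspose_smul, this]
    norm_num
  · rw [smul_mulVec, dotProduct_smul, smul_eq_mul]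
    have h := hM.dotProduct_mulVec_nonneg x
    have h2 : (0 : ℂ) ≤ (2 : ℂ)⁻¹ := by
      rw [Complex.le_def]
      norm_num
    exact mul_nonneg h2 h

lemma psd_ptrace1 (m n : ℕ) (A : Matrix (Fin m × Fin n) (Fin m × Fin n) ℂ)
    (hA : A.PosSemidef) : (ptrace1 m n A).PosSemidef := by
  refine posSemidef_iff_dotProduct_mulVec.mpr ⟨?_, fun x => ?_⟩
  · ext a b
    simp only [ptrace1, conjTranspose_apply, Matrix.of_apply, star_sum]
    refine Finset.sum_congr rfl fun i _ => ?_
    have h := congrFun (congrFun hA.1 (i, a)) (i, b)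
    rw [conjTranspose_apply] at h
    exact h
  · set y : Fin m → (Fin m × Fin n → ℂ) := fun i p => if p.1 = i then x p.2 else 0 with hy
    have key : ∀ i : Fin m, star (y i) ⬝ᵥ A *ᵥ y i
        = ∑ a, ∑ b, star (x a) * (A (i, a) (i, b) * x b) := by
      intro i
      simp [dotProduct, mulVec, hy, Fintype.sum_prod_type, apply_ite (star : ℂ → ℂ),
        ite_mul, mul_ite, Finset.sum_ite_eq, Finset.sum_ite_eq', Finset.mul_sum]
    have lhs : star x ⬝ᵥ ptrace1 m n A *ᵥ x
        = ∑ i : Fin m, ∑ a, ∑ b, star (x a) * (A (i, a) (i, b) * x b) := by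
      simp only [dotProduct, mulVec, ptrace1, Matrix.of_apply, Pi.star_apply,
        Finset.mul_sum, Finset.sum_mul]
      exact Eq.trans (Finset.sum_congr rfl fun a _ => Finset.sum_comm) Finset.sum_comm
    rw [lhs]
    exact Finset.sum_nonneg fun i _ => by rw [← key i]; exact hA.dotProduct_mulVec_nonneg (y i)

lemma psd_one_kron (m : ℕ) {n : ℕ} (X : Matrix (Fin n) (Fin n) ℂ) (hX : X.PosSemidef) :
    ((1 : Matrix (Fin m) (Fin m) ℂ) ⊗ₖ X).PosSemidef := by
  refine posSemidef_iff_dotProduct_mulVec.mpr ⟨?_, fun x => ?_⟩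
  · ext p q
    by_cases h : p.1 = q.1
    · simp only [conjTranspose_apply, kroneckerMap_apply, one_apply, h, if_true, if_pos h.symm,
        one_mul, star_one]
      have h2 := congrFun (congrFun hX.1 p.2) q.2
      rw [conjTranspose_apply] at h2
      exact h2
    · simp only [conjTranspose_apply, kroneckerMap_apply, one_apply, h, if_false, zero_mul,
        star_zero, ite_mul, one_mul]
      rw [if_neg (fun hh => h hh.symm), star_zero]
  · have key : star x ⬝ᵥ ((1 : Matrix (Fin m) (Fin m) ℂ) ⊗ₖ X) *ᵥ x
        = ∑ i : Fin m, star (fun t => x (i, t)) ⬝ᵥ X *ᵥ (fun t => x (i, t)) := by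
      simp only [dotProduct, mulVec, Fintype.sum_prod_type, kroneckerMap_apply, one_apply,
        ite_mul, one_mul, zero_mul, Finset.sum_ite_eq, Finset.sum_ite_eq', Finset.mem_univ,
        if_true, Pi.star_apply]
      refine Finset.sum_congr rfl fun i _ => Finset.sum_congr rfl fun a _ => ?_
      congr 1
      rw [Finset.sum_comm]
      simp [Finset.sum_ite_eq, Finset.sum_ite_eq']
    rw [key]
    exact Finset.sum_nonneg fun i _ => hX.dotProduct_mulVec_nonneg _

lemma main_entry (m n : ℕ) (A : Matrix (Fin m × Fin n) (Fin m × Fin n) ℂ) :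
    (A.trace • (1 : Matrix (Fin m × Fin n) (Fin m × Fin n) ℂ)
      + ptrace2 m n A ⊗ₖ (1 : Matrix (Fin n) (Fin n) ℂ)
      - ((1 : Matrix (Fin m) (Fin m) ℂ) ⊗ₖ ptrace1 m n A + A))
    = Matrix.of fun p q : Fin m × Fin n =>
        (if p.2 = q.2 then
          ∑ t, ((1 : Matrix (Fin m) (Fin m) ℂ) ⊗ₖ (ptrace1 m n A)ᵀ
            + (ptranspose m n A)ᵀ) (p.1, t) (q.1, t) else 0)
        - ((1 : Matrix (Fin m) (Fin m) ℂ) ⊗ₖ (ptrace1 m n A)ᵀ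
            + (ptranspose m n A)ᵀ) (p.1, q.2) (q.1, p.2) := by
  ext p q
  simp only [Matrix.sub_apply, Matrix.add_apply, Matrix.smul_apply, Matrix.of_apply,
    kroneckerMap_apply, one_apply, ptrace1, ptrace2, ptranspose, Matrix.transpose_apply,
    smul_eq_mul, Matrix.trace, Matrix.diag, Fintype.sum_prod_type, Finset.sum_add_distrib,
    Prod.ext_iff, ite_and, Finset.sum_ite_eq, Finset.sum_ite_eq', mul_ite, ite_mul, mul_one,
    mul_zero, one_mul, zero_mul, Finset.sum_ite_irrel, Finset.sum_const_zero]
  rw [Finset.sum_comm (γ := Fin m) (α := Fin n)]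
  split_ifs <;> ring

/-- If `A` is PPT (both `A` and its partial transpose are positive semidefinite), then
`(tr A) I_{mn} + (tr₂ A) ⊗ Iₙ ≥ Iₘ ⊗ (tr₁ A) + A`. -/
theorem stmt_5 (m n : ℕ) (A : Matrix (Fin m × Fin n) (Fin m × Fin n) ℂ)
    (hA : A.PosSemidef) (hAτ : (ptranspose m n A).PosSemidef) :
    (A.trace • (1 : Matrix (Fin m × Fin n) (Fin m × Fin n) ℂ)
      + ptrace2 m n A ⊗ₖ (1 : Matrix (Fin n) (Fin n) ℂ)
      - ((1 : Matrix (Fin m) (Fin m) ℂ) ⊗ₖ ptrace1 m n A + A)).PosSemidef := by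
  set D : Matrix (Fin m × Fin n) (Fin m × Fin n) ℂ :=
    (1 : Matrix (Fin m) (Fin m) ℂ) ⊗ₖ (ptrace1 m n A)ᵀ + (ptranspose m n A)ᵀ with hD
  have hDpsd : D.PosSemidef :=
    (psd_one_kron m _ ((psd_ptrace1 m n A hA).transpose)).add hAτ.transpose
  have hSpsd : (∑ r : Fin n, ∑ s : Fin n, Vmat m n r s * D * (Vmat m n r s)ᴴ).PosSemidef :=
    psd_sum _ _ fun r _ => psd_sum _ _ fun s _ => hDpsd.mul_mul_conjTranspose_same _
  have hhalf := psd_half hSpsd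
  rw [sum_VCV, smul_smul] at hhalf
  norm_num at hhalf
  rw [main_entry]
  exact hhalf
end

section
/- Let A = [A_{i,j}]_{i,j=1}^m ∈ M_m(M_n) be positive semidefinite. Then (tr A) I_{mn} ≥ I_m ⊗ (tr₁ A), i.e., (tr A) I_{mn} − I_m ⊗ (tr₁ A) is positive semidefinite; equivalently, (tr A) I_n ≥ tr₁ A. -/
open Matrix Kronecker
open scoped ComplexOrder

/-- Cauchy–Schwarz style bound: for a PSD matrix `B`, `x* B x ≤ (tr B) (x* x)`. -/
lemma quad_le_trace_mul {n : ℕ} (B : Matrix (Fin n) (Fin n) ℂ) (hB : B.PosSemidef)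
    (x : Fin n → ℂ) :
    star x ⬝ᵥ B *ᵥ x ≤ B.trace * (star x ⬝ᵥ x) := by
  open scoped MatrixOrder in obtain ⟨C, hC⟩ := CStarAlgebra.nonneg_iff_eq_star_mul_self.mp hB.nonneg
  rw [Matrix.star_eq_conjTranspose] at hC; subst hC
  have h1 : star x ⬝ᵥ (Cᴴ * C) *ᵥ x = star (C *ᵥ x) ⬝ᵥ (C *ᵥ x) := by
    rw [← Matrix.mulVec_mulVec, Matrix.dotProduct_mulVec, Matrix.vecMul_conjTranspose,
      star_star]
  have h2 : star (C *ᵥ x) ⬝ᵥ (C *ᵥ x) =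
      ((∑ k, Complex.normSq ((C *ᵥ x) k) : ℝ) : ℂ) := by
    push_cast
    simp only [dotProduct, Pi.star_apply]
    refine Finset.sum_congr rfl fun k _ => ?_
    rw [Complex.normSq_eq_conj_mul_self]
    rfl
  have h3 : (Cᴴ * C).trace = ((∑ r, ∑ k, Complex.normSq (C k r) : ℝ) : ℂ) := by
    push_cast
    simp only [Matrix.trace, Matrix.diag, Matrix.mul_apply, Matrix.conjTranspose_apply]
    refine Finset.sum_congr rfl fun r _ => Finset.sum_congr rfl fun k _ => ?_
    rw [Complex.normSq_eq_conj_mul_self]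
    rfl
  have h4 : star x ⬝ᵥ x = ((∑ r, Complex.normSq (x r) : ℝ) : ℂ) := by
    push_cast
    simp only [dotProduct, Pi.star_apply]
    refine Finset.sum_congr rfl fun r _ => ?_
    rw [Complex.normSq_eq_conj_mul_self]
    rfl
  rw [h1, h2, h3, h4, ← Complex.ofReal_mul, Complex.real_le_real]
  -- real inequality
  have key : ∀ k, Complex.normSq ((C *ᵥ x) k) ≤
      (∑ r, Complex.normSq (C k r)) * (∑ r, Complex.normSq (x r)) := by
    intro k
    have h5 : ‖(C *ᵥ x) k‖ ≤ ∑ r, ‖C k r‖ * ‖x r‖ := by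
      simp only [Matrix.mulVec, dotProduct]
      exact le_trans (norm_sum_le _ _) (le_of_eq (by simp [norm_mul]))
    calc Complex.normSq ((C *ᵥ x) k) = ‖(C *ᵥ x) k‖ ^ 2 := by
          rw [Complex.sq_norm]
      _ ≤ (∑ r, ‖C k r‖ * ‖x r‖) ^ 2 := by
          exact pow_le_pow_left₀ (norm_nonneg _) h5 2
      _ ≤ (∑ r, ‖C k r‖ ^ 2) * (∑ r, ‖x r‖ ^ 2) :=
          Finset.sum_mul_sq_le_sq_mul_sq _ _ _
      _ = (∑ r, Complex.normSq (C k r)) * (∑ r, Complex.normSq (x r)) := by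
          simp [Complex.sq_norm]
  calc ∑ k, Complex.normSq ((C *ᵥ x) k)
      ≤ ∑ k, (∑ r, Complex.normSq (C k r)) * (∑ r, Complex.normSq (x r)) :=
        Finset.sum_le_sum fun k _ => key k
    _ = (∑ r, ∑ k, Complex.normSq (C k r)) * (∑ r, Complex.normSq (x r)) := by
        rw [← Finset.sum_mul, Finset.sum_comm]

/-- `1 ⊗ₖ M` is positive semidefinite when `M` is. -/
lemma one_kronecker_posSemidef {m n : ℕ} (M : Matrix (Fin n) (Fin n) ℂ)
    (hM : M.PosSemidef) :
    ((1 : Matrix (Fin m) (Fin m) ℂ) ⊗ₖ M).PosSemidef := by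
  open scoped MatrixOrder in obtain ⟨B, hB⟩ := CStarAlgebra.nonneg_iff_eq_star_mul_self.mp hM.nonneg
  rw [Matrix.star_eq_conjTranspose] at hB; subst hB
  have h : (1 : Matrix (Fin m) (Fin m) ℂ) ⊗ₖ (Bᴴ * B) =
      ((1 : Matrix (Fin m) (Fin m) ℂ) ⊗ₖ B)ᴴ * ((1 : Matrix (Fin m) (Fin m) ℂ) ⊗ₖ B) := by
    have h1 : ((1 : Matrix (Fin m) (Fin m) ℂ) ⊗ₖ B)ᴴ =
        (1 : Matrix (Fin m) (Fin m) ℂ) ⊗ₖ Bᴴ := by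
      ext ⟨i, r⟩ ⟨j, s⟩
      by_cases hij : i = j <;>
        simp [Matrix.conjTranspose_apply, Matrix.one_apply, hij, eq_comm]
    rw [h1, ← Matrix.mul_kronecker_mul, Matrix.one_mul]
  rw [h]
  exact Matrix.posSemidef_conjTranspose_mul_self _

/-- If `A` is positive semidefinite, then `(tr A) I_{mn} ≥ Iₘ ⊗ (tr₁ A)`;
equivalently `(tr A) Iₙ ≥ tr₁ A`. -/
theorem stmt_6 (m n : ℕ) (A : Matrix (Fin m × Fin n) (Fin m × Fin n) ℂ)
    (hA : A.PosSemidef) :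
    (A.trace • (1 : Matrix (Fin m × Fin n) (Fin m × Fin n) ℂ)
      - (1 : Matrix (Fin m) (Fin m) ℂ) ⊗ₖ ptrace1 m n A).PosSemidef ∧
    (A.trace • (1 : Matrix (Fin n) (Fin n) ℂ) - ptrace1 m n A).PosSemidef := by
  have htr : star A.trace = A.trace := by
    conv_rhs => rw [← hA.1]
    rw [Matrix.trace_conjTranspose]
  -- diagonal blocks
  set Bd : Fin m → Matrix (Fin n) (Fin n) ℂ :=
    fun i => A.submatrix (fun r => (i, r)) (fun r => (i, r)) with hBd
  have hBdpsd : ∀ i, (Bd i).PosSemidef := fun i => hA.submatrix _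
  have hsplit : ptrace1 m n A = ∑ i, Bd i := by
    ext r s
    simp [ptrace1, hBd, Matrix.sum_apply, Matrix.submatrix_apply]
  have htrsum : A.trace = ∑ i, (Bd i).trace := by
    simp only [Matrix.trace, Matrix.diag, hBd, Matrix.submatrix_apply]
    rw [Fintype.sum_prod_type]
  -- the second (scalar) part
  have hpsd2 : (A.trace • (1 : Matrix (Fin n) (Fin n) ℂ) - ptrace1 m n A).PosSemidef := by
    refine Matrix.PosSemidef.of_dotProduct_mulVec_nonneg ?_ ?_
    · unfold Matrix.IsHermitian
      rw [Matrix.conjTranspose_sub, Matrix.conjTranspose_smul, Matrix.conjTranspose_one, htr]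
      congr 1
      ext r s
      simp only [Matrix.conjTranspose_apply, ptrace1, Matrix.of_apply]
      rw [star_sum]
      exact Finset.sum_congr rfl fun i _ => hA.1.apply (i, r) (i, s)
    · intro x
      have hq : star x ⬝ᵥ (A.trace • (1 : Matrix (Fin n) (Fin n) ℂ) - ptrace1 m n A) *ᵥ x =
          A.trace * (star x ⬝ᵥ x) - star x ⬝ᵥ (ptrace1 m n A) *ᵥ x := by
        rw [Matrix.sub_mulVec, dotProduct_sub, Matrix.smul_mulVec, Matrix.one_mulVec,
          dotProduct_smul, smul_eq_mul]
      rw [hq, sub_nonneg]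
      have hgen : ∀ (t : Finset (Fin m)),
          star x ⬝ᵥ (∑ i ∈ t, Bd i) *ᵥ x = ∑ i ∈ t, star x ⬝ᵥ (Bd i) *ᵥ x := by
        intro t
        induction t using Finset.induction with
        | empty => simp
        | insert _ _ h ih =>
          rw [Finset.sum_insert h, Finset.sum_insert h, Matrix.add_mulVec, dotProduct_add, ih]
      have hdec : star x ⬝ᵥ (ptrace1 m n A) *ᵥ x = ∑ i, star x ⬝ᵥ (Bd i) *ᵥ x := by
        rw [hsplit]; exact hgen Finset.univ
      rw [hdec, htrsum, Finset.sum_mul]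
      exact Finset.sum_le_sum fun i _ => quad_le_trace_mul (Bd i) (hBdpsd i) x
  refine ⟨?_, hpsd2⟩
  have heq : A.trace • (1 : Matrix (Fin m × Fin n) (Fin m × Fin n) ℂ)
      - (1 : Matrix (Fin m) (Fin m) ℂ) ⊗ₖ ptrace1 m n A =
      (1 : Matrix (Fin m) (Fin m) ℂ) ⊗ₖ (A.trace • (1 : Matrix (Fin n) (Fin n) ℂ)
        - ptrace1 m n A) := by
    ext ⟨i, r⟩ ⟨j, s⟩
    simp only [Matrix.sub_apply, Matrix.smul_apply, Matrix.kroneckerMap_apply,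
      Matrix.one_apply, smul_eq_mul, Prod.mk.injEq]
    by_cases hij : i = j <;> by_cases hrs : r = s <;>
      simp [hij, hrs, mul_comm]
  rw [heq]
  exact one_kronecker_posSemidef _ hpsd2
end

section
/- Let A = [A_{i,j}]_{i,j=1}^m ∈ M_m(M_n) be positive semidefinite. Then (tr A) I_m ≥ tr₂ A, i.e., (tr A) I_m − tr₂ A is positive semidefinite; consequently (tr A) I_{mn} − (tr₂ A) ⊗ I_n is positive semidefinite. -/
open Matrix Kronecker
open scoped ComplexOrder

/-- For a positive semidefinite matrix `B`, `(tr B) I - B` is positive semidefinite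
(every eigenvalue is at most the trace). -/
lemma aux_trace_smul_one_sub {k : ℕ} {B : Matrix (Fin k) (Fin k) ℂ} (hB : B.PosSemidef) :
    (B.trace • (1 : Matrix (Fin k) (Fin k) ℂ) - B).PosSemidef := by
  classical
  have hH := hB.1
  have hUU : (hH.eigenvectorUnitary : Matrix (Fin k) (Fin k) ℂ) *
      star (hH.eigenvectorUnitary : Matrix (Fin k) (Fin k) ℂ) = 1 :=
    Matrix.mem_unitaryGroup_iff.mp hH.eigenvectorUnitary.2
  have hUU' : star (hH.eigenvectorUnitary : Matrix (Fin k) (Fin k) ℂ) *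
      (hH.eigenvectorUnitary : Matrix (Fin k) (Fin k) ℂ) = 1 :=
    Matrix.mem_unitaryGroup_iff'.mp hH.eigenvectorUnitary.2
  set U : Matrix (Fin k) (Fin k) ℂ := (hH.eigenvectorUnitary : Matrix (Fin k) (Fin k) ℂ)
  have htr : B.trace = ∑ i, (hH.eigenvalues i : ℂ) := by
    conv_lhs => rw [hH.spectral_theorem]
    rw [Unitary.conjStarAlgAut_apply, Matrix.trace_mul_cycle, hUU', Matrix.one_mul, Matrix.trace_diagonal]
    rfl
  obtain ⟨t, ht⟩ : ∃ t : ℂ, B.trace = t := ⟨_, rfl⟩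
  have key : t • (1 : Matrix (Fin k) (Fin k) ℂ) - B =
      U * diagonal (fun i => t - (hH.eigenvalues i : ℂ)) * Uᴴ := by
    have h1 : t • (1 : Matrix (Fin k) (Fin k) ℂ) =
        U * (t • (1 : Matrix (Fin k) (Fin k) ℂ)) * Uᴴ := by
      rw [Matrix.mul_smul, Matrix.mul_one, Matrix.smul_mul, ← Matrix.star_eq_conjTranspose, hUU]
    conv_lhs => rw [h1, hH.spectral_theorem]
    rw [Unitary.conjStarAlgAut_apply, ← Matrix.star_eq_conjTranspose, ← Matrix.sub_mul, ← Matrix.mul_sub]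
    congr 2
    ext i j
    by_cases h : i = j <;>
      simp [Matrix.smul_apply, Matrix.one_apply, Matrix.diagonal_apply, h, Function.comp]
  rw [ht, key]
  refine Matrix.PosSemidef.mul_mul_conjTranspose_same ?_ U
  refine Matrix.posSemidef_diagonal_iff.mpr fun i => ?_
  rw [← ht, htr]
  have h1 : ∑ j, (hH.eigenvalues j : ℂ) - (hH.eigenvalues i : ℂ) =
      ((∑ j, hH.eigenvalues j - hH.eigenvalues i : ℝ) : ℂ) := by push_cast; ring
  rw [h1, Complex.zero_le_real]
  have hnn : ∀ j, 0 ≤ hH.eigenvalues j := fun j => hB.eigenvalues_nonneg j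
  have := Finset.single_le_sum (f := hH.eigenvalues) (fun j _ => hnn j) (Finset.mem_univ i)
  linarith

lemma aux_kron_conjTranspose {α β γ δ : Type*} [Fintype α] [Fintype β] [Fintype γ] [Fintype δ]
    (A : Matrix α β ℂ) (B : Matrix γ δ ℂ) : (A ⊗ₖ B)ᴴ = Aᴴ ⊗ₖ Bᴴ := by
  ext ⟨i, j⟩ ⟨p, q⟩
  simp [Matrix.conjTranspose_apply, mul_comm]

lemma aux_kron_one_posSemidef {a b : ℕ} {P : Matrix (Fin a) (Fin a) ℂ} (hP : P.PosSemidef) :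
    (P ⊗ₖ (1 : Matrix (Fin b) (Fin b) ℂ)).PosSemidef := by
  obtain ⟨C, rfl⟩ : ∃ C : Matrix (Fin a) (Fin a) ℂ, P = Cᴴ * C := by
    open scoped MatrixOrder Matrix.Norms.L2Operator in
    exact CStarAlgebra.nonneg_iff_eq_star_mul_self.mp hP.nonneg
  have : (Cᴴ * C) ⊗ₖ (1 : Matrix (Fin b) (Fin b) ℂ)
      = (C ⊗ₖ (1 : Matrix (Fin b) (Fin b) ℂ))ᴴ * (C ⊗ₖ (1 : Matrix (Fin b) (Fin b) ℂ)) := by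
    rw [aux_kron_conjTranspose, ← Matrix.mul_kronecker_mul, Matrix.conjTranspose_one,
      Matrix.one_mul]
  rw [this]
  exact Matrix.posSemidef_conjTranspose_mul_self _

/-- If `A` is positive semidefinite, then `(tr A) Iₘ ≥ tr₂ A`; consequently
`(tr A) I_{mn} − (tr₂ A) ⊗ Iₙ` is positive semidefinite. -/
theorem stmt_7 (m n : ℕ) (A : Matrix (Fin m × Fin n) (Fin m × Fin n) ℂ)
    (hA : A.PosSemidef) :
    (A.trace • (1 : Matrix (Fin m) (Fin m) ℂ) - ptrace2 m n A).PosSemidef ∧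
    (A.trace • (1 : Matrix (Fin m × Fin n) (Fin m × Fin n) ℂ)
      - ptrace2 m n A ⊗ₖ (1 : Matrix (Fin n) (Fin n) ℂ)).PosSemidef := by
  classical
  set B : Fin n → Matrix (Fin m) (Fin m) ℂ :=
    fun r => A.submatrix (fun i => (i, r)) (fun i => (i, r)) with hB
  have hBpsd : ∀ r, (B r).PosSemidef := fun r => hA.submatrix _
  have hptr : ptrace2 m n A = ∑ r, B r := by
    ext i j
    simp [ptrace2, hB, Matrix.sum_apply, Matrix.submatrix_apply]
  have htr : A.trace = ∑ r, (B r).trace := by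
    simp only [Matrix.trace, Matrix.diag, hB, Matrix.submatrix_apply]
    rw [Fintype.sum_prod_type, Finset.sum_comm]
  have h1 : A.trace • (1 : Matrix (Fin m) (Fin m) ℂ) - ptrace2 m n A
      = ∑ r, ((B r).trace • (1 : Matrix (Fin m) (Fin m) ℂ) - B r) := by
    rw [hptr, htr, Finset.sum_sub_distrib, Finset.sum_smul]
  have hmain : (A.trace • (1 : Matrix (Fin m) (Fin m) ℂ) - ptrace2 m n A).PosSemidef := by
    rw [h1]
    exact Finset.sum_induction _ _ (fun a b ha hb => ha.add hb) Matrix.PosSemidef.zero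
      (fun r _ => aux_trace_smul_one_sub (hBpsd r))
  refine ⟨hmain, ?_⟩
  have h2 : A.trace • (1 : Matrix (Fin m × Fin n) (Fin m × Fin n) ℂ)
      - ptrace2 m n A ⊗ₖ (1 : Matrix (Fin n) (Fin n) ℂ)
      = (A.trace • (1 : Matrix (Fin m) (Fin m) ℂ) - ptrace2 m n A) ⊗ₖ
        (1 : Matrix (Fin n) (Fin n) ℂ) := by
    ext ⟨i, r⟩ ⟨j, s⟩
    by_cases hij : i = j <;> by_cases hrs : r = s <;>
      simp [Matrix.kroneckerMap_apply, Matrix.one_apply, Matrix.smul_apply, Prod.ext_iff,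
        hij, hrs, sub_mul]
  rw [h2]
  exact aux_kron_one_posSemidef hmain
end

section
/- Let A = [A_{i,j}]_{i,j=1}^2 ∈ M_2(M_n) be a positive semidefinite 2×2 block matrix with n×n blocks. Then the 2×2 block matrix M = [[ (tr A_{2,2}) I_n + A_{2,2}, −A_{1,2} − (tr A_{1,2}) I_n ], [ −A_{2,1} − (tr A_{2,1}) I_n, (tr A_{1,1}) I_n + A_{1,1} ]] is positive semidefinite. -/
open Matrix
open scoped ComplexOrder

/-- The `(i,j)` block of a `2 × 2` block matrix with `n × n` blocks. -/
noncomputable def blk (n : ℕ) (A : Matrix (Fin 2 × Fin n) (Fin 2 × Fin n) ℂ) (i j : Fin 2) :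
    Matrix (Fin n) (Fin n) ℂ :=
  Matrix.of fun r s => A (i, r) (j, s)

section Aux

variable {n : ℕ}

/-- The symmetric elementary matrix `E i j + E j i`. -/
noncomputable def Smat (i j : Fin n) : Matrix (Fin n) (Fin n) ℂ :=
  single i j 1 + single j i 1

/-- The block matrix `[[0, -S i j], [S i j, 0]]`. -/
noncomputable def Wmat (i j : Fin n) : Matrix (Fin n ⊕ Fin n) (Fin n ⊕ Fin n) ℂ :=
  Matrix.fromBlocks 0 (-(Smat i j)) (Smat i j) 0

lemma EBE (B : Matrix (Fin n) (Fin n) ℂ) (i j k l : Fin n) :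
    single i j (1:ℂ) * B * single k l 1 = single i l (B j k) := by
  ext a b
  rw [Matrix.mul_assoc]
  rcases eq_or_ne i a with rfl | ha
  · rcases eq_or_ne l b with rfl | hb
    · simp
    · rw [Matrix.single_mul_apply_same]
      rw [Matrix.mul_single_apply_of_ne (hbj := hb.symm)]
      simp [hb]
  · rw [Matrix.single_mul_apply_of_ne (h := ha.symm)]
    simp [ha]

lemma sum_diag_std (c : ℂ) :
    ∑ i : Fin n, single i i c = c • (1 : Matrix (Fin n) (Fin n) ℂ) := by
  ext a b
  rcases eq_or_ne a b with rfl | hab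
  · simp [Matrix.sum_apply, Matrix.single, Matrix.one_apply]
  · simp only [Matrix.sum_apply, Matrix.single, Matrix.of_apply, Matrix.smul_apply,
      Matrix.one_apply_ne hab, smul_zero]
    refine Finset.sum_eq_zero fun x _ => if_neg ?_
    rintro ⟨rfl, rfl⟩; exact hab rfl

lemma Smat_herm (i j : Fin n) : (Smat i j)ᴴ = Smat i j := by
  ext a b
  simp [Smat, Matrix.conjTranspose_apply, Matrix.single, apply_ite (starRingEnd ℂ),
    and_comm, add_comm]

lemma hS (B : Matrix (Fin n) (Fin n) ℂ) :
    ∑ i : Fin n, ∑ j : Fin n, Smat i j * B * Smat i j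
      = (2:ℂ) • (Bᵀ + B.trace • (1 : Matrix (Fin n) (Fin n) ℂ)) := by
  have expand : ∀ i j : Fin n, Smat i j * B * Smat i j
      = single i j (B j i) + single i i (B j j)
        + single j j (B i i) + single j i (B i j) := by
    intro i j
    simp only [Smat, add_mul, mul_add, EBE]
    abel
  simp only [expand, Finset.sum_add_distrib]
  have h1 : ∑ i : Fin n, ∑ j : Fin n, single i j (B j i) = Bᵀ := by
    conv_rhs => rw [matrix_eq_sum_single Bᵀ]
    simp [Matrix.transpose_apply]
  have h4 : ∑ i : Fin n, ∑ j : Fin n, single j i (B i j) = Bᵀ := by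
    rw [Finset.sum_comm]; exact h1
  have h2 : ∑ i : Fin n, ∑ j : Fin n, single i i (B j j)
      = B.trace • (1 : Matrix (Fin n) (Fin n) ℂ) := by
    rw [Finset.sum_comm]
    calc ∑ j : Fin n, ∑ i : Fin n, single i i (B j j)
        = ∑ j : Fin n, (B j j) • (1 : Matrix (Fin n) (Fin n) ℂ) := by
          simp [sum_diag_std]
      _ = B.trace • 1 := by rw [← Finset.sum_smul]; rfl
  have h3 : ∑ i : Fin n, ∑ j : Fin n, single j j (B i i)
      = B.trace • (1 : Matrix (Fin n) (Fin n) ℂ) := by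
    calc ∑ i : Fin n, ∑ j : Fin n, single j j (B i i)
        = ∑ i : Fin n, (B i i) • (1 : Matrix (Fin n) (Fin n) ℂ) := by
          simp [sum_diag_std]
      _ = B.trace • 1 := by rw [← Finset.sum_smul]; rfl
  rw [h1, h2, h3, h4]
  rw [two_smul]
  abel

lemma sum_fromBlocks {ι : Type*} (s : Finset ι)
    (f g h k : ι → Matrix (Fin n) (Fin n) ℂ) :
    ∑ x ∈ s, Matrix.fromBlocks (f x) (g x) (h x) (k x)
      = Matrix.fromBlocks (∑ x ∈ s, f x) (∑ x ∈ s, g x) (∑ x ∈ s, h x) (∑ x ∈ s, k x) := by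
  ext (a | a) (b | b) <;> simp [Matrix.sum_apply]

lemma half_psd {m : Type*} [Fintype m] [DecidableEq m] {T : Matrix m m ℂ}
    (h : ((2:ℂ) • T).PosSemidef) : T.PosSemidef := by
  have h2inv : (0:ℂ) ≤ (2:ℂ)⁻¹ := by
    have : ((2:ℂ))⁻¹ = (((2:ℝ)⁻¹ : ℝ) : ℂ) := by push_cast; ring
    rw [this]
    exact Complex.zero_le_real.2 (by norm_num)
  constructor
  · have h1 := h.1
    have : (2:ℂ) • Tᴴ = (2:ℂ) • T := by
      simpa [Matrix.conjTranspose_smul, Matrix.IsHermitian] using h1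
    exact smul_right_injective _ (two_ne_zero) this
  · intro x
    have h3 := h.smul h2inv
    rw [smul_smul, inv_mul_cancel₀ (two_ne_zero), one_smul] at h3
    exact h3.2 x

end Aux

/-- If `A = [A_{i,j}]_{i,j=1}^2` is positive semidefinite, then the block matrix
`M = [[(tr A₂₂) Iₙ + A₂₂, −A₁₂ − (tr A₁₂) Iₙ], [−A₂₁ − (tr A₂₁) Iₙ, (tr A₁₁) Iₙ + A₁₁]]`
is positive semidefinite. -/
theorem stmt_8 (n : ℕ) (A : Matrix (Fin 2 × Fin n) (Fin 2 × Fin n) ℂ)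
    (hA : A.PosSemidef) :
    (Matrix.fromBlocks
      ((blk n A 1 1).trace • (1 : Matrix (Fin n) (Fin n) ℂ) + blk n A 1 1)
      (-(blk n A 0 1) - (blk n A 0 1).trace • (1 : Matrix (Fin n) (Fin n) ℂ))
      (-(blk n A 1 0) - (blk n A 1 0).trace • (1 : Matrix (Fin n) (Fin n) ℂ))
      ((blk n A 0 0).trace • (1 : Matrix (Fin n) (Fin n) ℂ) + blk n A 0 0)).PosSemidef := by
  classical
  set A' : Matrix (Fin n ⊕ Fin n) (Fin n ⊕ Fin n) ℂ :=
    Matrix.fromBlocks (blk n A 0 0)ᵀ (blk n A 1 0)ᵀ (blk n A 0 1)ᵀ (blk n A 1 1)ᵀ with hA'def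
  have hA'psd : A'.PosSemidef := by
    have he : A' = (Aᵀ).submatrix
        (Sum.elim (fun r => ((0:Fin 2), r)) (fun r => ((1:Fin 2), r)))
        (Sum.elim (fun r => ((0:Fin 2), r)) (fun r => ((1:Fin 2), r))) := by
      ext (a | a) (b | b) <;> rfl
    rw [he]
    exact hA.transpose.submatrix _
  have hterm : ∀ i j : Fin n, (Wmat i j)ᴴ * A' * Wmat i j
      = Matrix.fromBlocks (Smat i j * (blk n A 1 1)ᵀ * Smat i j)
          (-(Smat i j * (blk n A 0 1)ᵀ * Smat i j))
          (-(Smat i j * (blk n A 1 0)ᵀ * Smat i j))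
          (Smat i j * (blk n A 0 0)ᵀ * Smat i j) := by
    intro i j
    rw [hA'def, Wmat, Matrix.fromBlocks_conjTranspose]
    simp only [Matrix.conjTranspose_zero, Matrix.conjTranspose_neg, Smat_herm,
      Matrix.fromBlocks_multiply, Matrix.mul_zero, Matrix.zero_mul, Matrix.mul_neg,
      Matrix.neg_mul, add_zero, zero_add, Matrix.mul_assoc, neg_neg]
  have key : ∑ i : Fin n, ∑ j : Fin n, (Wmat i j)ᴴ * A' * Wmat i j
      = (2:ℂ) • (Matrix.fromBlocks
      ((blk n A 1 1).trace • (1 : Matrix (Fin n) (Fin n) ℂ) + blk n A 1 1)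
      (-(blk n A 0 1) - (blk n A 0 1).trace • (1 : Matrix (Fin n) (Fin n) ℂ))
      (-(blk n A 1 0) - (blk n A 1 0).trace • (1 : Matrix (Fin n) (Fin n) ℂ))
      ((blk n A 0 0).trace • (1 : Matrix (Fin n) (Fin n) ℂ) + blk n A 0 0)) := by
    simp only [hterm, sum_fromBlocks]
    rw [Matrix.fromBlocks_smul]
    simp only [Finset.sum_neg_distrib, ← Matrix.mul_assoc]
    rw [hS, hS, hS, hS]
    rw [Matrix.fromBlocks_inj]
    refine ⟨?_, ?_, ?_, ?_⟩
    · rw [Matrix.transpose_transpose, Matrix.trace_transpose, add_comm]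
    · rw [Matrix.transpose_transpose, Matrix.trace_transpose, smul_sub, smul_neg, smul_add, neg_add, sub_eq_add_neg]
    · rw [Matrix.transpose_transpose, Matrix.trace_transpose, smul_sub, smul_neg, smul_add, neg_add, sub_eq_add_neg]
    · rw [Matrix.transpose_transpose, Matrix.trace_transpose, add_comm]
  have hsum : (∑ i : Fin n, ∑ j : Fin n, (Wmat i j)ᴴ * A' * Wmat i j).PosSemidef := by
    refine Finset.sum_induction _ _ (fun a b ha hb => ha.add hb) Matrix.PosSemidef.zero ?_
    intro i _
    refine Finset.sum_induction _ _ (fun a b ha hb => ha.add hb) Matrix.PosSemidef.zero ?_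
    intro j _
    exact hA'psd.conjTranspose_mul_mul_same _
  rw [key] at hsum
  exact half_psd hsum
end

section
/- Let A = [A_{i,j}]_{i,j=1}^m ∈ M_m(M_n) be positive semidefinite, and let Ã ∈ M_n(M_m) be its realignment, defined by Ã = [B_{r,s}]_{r,s=1}^n where B_{r,s} = [a^{i,j}_{r,s}]_{i,j=1}^m and a^{i,j}_{r,s} denotes the (r,s) entry of the block A_{i,j}. Then (tr A) I_{nm} − (tr₁ A) ⊗ I_m ≥ Ã − I_n ⊗ (tr₂ A). -/
open Matrix Kronecker
open scoped ComplexOrder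

/-- The realignment `Ã ∈ Mₙ(Mₘ)` of `A ∈ Mₘ(Mₙ)`: the `(r,s)` block of `Ã`
is the `m × m` matrix `[a^{i,j}_{r,s}]_{i,j}`. -/
noncomputable def realign (m n : ℕ) (A : Matrix (Fin m × Fin n) (Fin m × Fin n) ℂ) :
    Matrix (Fin n × Fin m) (Fin n × Fin m) ℂ :=
  Matrix.of fun p q => A (p.2, p.1) (q.2, q.1)


lemma key_real {n : ℕ} (d ρ β : Fin n → ℝ) (hd : ∀ r, 0 ≤ d r) (hρ : ∀ r, 0 ≤ ρ r)
    (hβ : ∀ r, 0 ≤ β r) (h : ∀ r, β r ^ 2 ≤ d r * ρ r) :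
    (∑ r, β r) ^ 2 + ∑ r, d r * ρ r ≤ (∑ r, d r) * (∑ r, ρ r) + ∑ r, β r ^ 2 := by
  have hpt : ∀ r s : Fin n, β r * β s ≤
      (if r = s then β r ^ 2 else (d r * ρ s + d s * ρ r) / 2) := by
    intro r s
    by_cases hrs : r = s
    · simp [hrs, sq]
    · simp only [hrs, if_false]
      nlinarith [h r, h s, hβ r, hβ s, mul_nonneg (hβ r) (hβ s),
        mul_nonneg (hd r) (hρ s), mul_nonneg (hd s) (hρ r),
        sq_nonneg (d r * ρ s - d s * ρ r),
        mul_le_mul (h r) (h s) (sq_nonneg (β s)) (mul_nonneg (hd r) (hρ r)),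
        sq_nonneg (β r * β s - (d r * ρ s + d s * ρ r) / 2),
        sq_nonneg (β r * β s + (d r * ρ s + d s * ρ r) / 2)]
  have h1 : (∑ r, β r) ^ 2 = ∑ r, ∑ s, β r * β s := by
    rw [sq, Finset.sum_mul_sum]
  have h2 : ∑ r : Fin n, ∑ s : Fin n,
      (if r = s then β r ^ 2 else (d r * ρ s + d s * ρ r) / 2)
      = (∑ r, d r) * (∑ r, ρ r) + ∑ r, β r ^ 2 - ∑ r, d r * ρ r := by
    have : ∀ r s : Fin n, (if r = s then β r ^ 2 else (d r * ρ s + d s * ρ r) / 2)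
        = (d r * ρ s + d s * ρ r) / 2 + (if r = s then β r ^ 2 - d r * ρ r else 0) := by
      intro r s
      by_cases hrs : r = s <;> simp [hrs] <;> ring
    simp only [this, Finset.sum_add_distrib, Finset.sum_ite_eq, Finset.mem_univ, if_true]
    have e1 : ∑ r : Fin n, ∑ s : Fin n, d r * ρ s = (∑ r, d r) * (∑ r, ρ r) :=
      (Finset.sum_mul_sum _ _ _ _).symm
    have e2 : ∑ r : Fin n, ∑ s : Fin n, d s * ρ r = (∑ r, d r) * (∑ r, ρ r) := by
      rw [Finset.sum_comm]; exact e1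
    have e3 : ∑ r : Fin n, ∑ s : Fin n, (d r * ρ s + d s * ρ r) / 2
        = ((∑ r : Fin n, ∑ s : Fin n, d r * ρ s) + ∑ r : Fin n, ∑ s : Fin n, d s * ρ r) / 2 := by
      simp only [Finset.sum_div, ← Finset.sum_add_distrib]
    rw [e3, e1, e2, Finset.sum_sub_distrib]
    ring
  calc (∑ r, β r) ^ 2 + ∑ r, d r * ρ r
      ≤ (∑ r, ∑ s, (if r = s then β r ^ 2 else (d r * ρ s + d s * ρ r) / 2)) + ∑ r, d r * ρ r := by
        rw [h1]
        gcongr with r _ s _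
        exact hpt r s
    _ = (∑ r, d r) * (∑ r, ρ r) + ∑ r, β r ^ 2 := by rw [h2]; ring


noncomputable def frob {a b : Type*} [Fintype a] [Fintype b] (M : Matrix a b ℂ) : ℝ :=
  ∑ i, ∑ j, Complex.normSq (M i j)

lemma frob_nonneg {a b : Type*} [Fintype a] [Fintype b] (M : Matrix a b ℂ) : 0 ≤ frob M :=
  Finset.sum_nonneg fun _ _ => Finset.sum_nonneg fun _ _ => Complex.normSq_nonneg _

lemma trace_conjTranspose_mul_self {a b : Type*} [Fintype a] [Fintype b]
    (M : Matrix a b ℂ) : (Mᴴ * M).trace = ((frob M : ℝ) : ℂ) := by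
  simp only [Matrix.trace, Matrix.diag, Matrix.mul_apply, Matrix.conjTranspose_apply, frob]
  rw [Finset.sum_comm]
  push_cast
  congr 1; ext i; congr 1; ext j
  rw [show star (M i j) * M i j = (starRingEnd ℂ) (M i j) * M i j from rfl,
    ← Complex.normSq_eq_conj_mul_self]

lemma cs_sq {m : ℕ} (f g : Fin m → ℂ) :
    Complex.normSq (∑ k, f k * g k) ≤ (∑ k, Complex.normSq (f k)) * (∑ k, Complex.normSq (g k)) := by
  have h1 : ‖∑ k, f k * g k‖ ≤ ∑ k, ‖f k‖ * ‖g k‖ := by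
    calc ‖∑ k, f k * g k‖ ≤ ∑ k, ‖f k * g k‖ :=
          (norm_sum_le _ _)
    _ = ∑ k, ‖f k‖ * ‖g k‖ := by simp [norm_mul]
  have h2 : (∑ k, ‖f k‖ * ‖g k‖) ^ 2
      ≤ (∑ k, ‖f k‖ ^ 2) * (∑ k, ‖g k‖ ^ 2) :=
    Finset.sum_mul_sq_le_sq_mul_sq _ _ _
  calc Complex.normSq (∑ k, f k * g k) = ‖∑ k, f k * g k‖ ^ 2 := (Complex.sq_norm _).symm
    _ ≤ (∑ k, ‖f k‖ * ‖g k‖) ^ 2 := by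
        apply pow_le_pow_left₀ (norm_nonneg _) h1
    _ ≤ (∑ k, ‖f k‖ ^ 2) * (∑ k, ‖g k‖ ^ 2) := h2
    _ = (∑ k, Complex.normSq (f k)) * (∑ k, Complex.normSq (g k)) := by simp [Complex.sq_norm]

lemma core_diag {m n : ℕ} (C : Matrix (Fin m) (Fin n) ℂ) (X : Matrix (Fin n) (Fin m) ℂ)
    (d : Fin n → ℝ) (hd : Cᴴ * C = Matrix.diagonal (fun r => ((d r : ℝ) : ℂ))) :
    frob (C * X) + Complex.normSq (C * X).trace ≤ frob C * frob X + frob (X * C) := by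
  set μ : Fin n → ℝ := fun r => ∑ k, Complex.normSq (C k r) with hμ
  set ρ : Fin n → ℝ := fun r => ∑ j, Complex.normSq (X r j) with hρdef
  set b : Fin n → ℂ := fun r => (X * C) r r with hbdef
  have hμ_nonneg : ∀ r, 0 ≤ μ r := fun r => Finset.sum_nonneg fun _ _ => Complex.normSq_nonneg _
  have hρ_nonneg : ∀ r, 0 ≤ ρ r := fun r => Finset.sum_nonneg fun _ _ => Complex.normSq_nonneg _
  -- d = μ
  have hdμ : ∀ r, d r = μ r := by
    intro r
    have h1 : (Cᴴ * C) r r = ((d r : ℝ) : ℂ) := by rw [hd]; simp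
    have h2 : (Cᴴ * C) r r = ((μ r : ℝ) : ℂ) := by
      simp only [Matrix.mul_apply, Matrix.conjTranspose_apply, hμ]
      push_cast
      congr 1; ext k
      rw [show star (C k r) * C k r = (starRingEnd ℂ) (C k r) * C k r from rfl,
        ← Complex.normSq_eq_conj_mul_self]
    exact_mod_cast h1.symm.trans h2
  -- frob C = ∑ μ
  have hfC : frob C = ∑ r, μ r := by
    rw [frob, Finset.sum_comm]
  have hfX : frob X = ∑ r, ρ r := rfl
  -- frob (C * X) = ∑ d r * ρ r
  have hCX : frob (C * X) = ∑ r, d r * ρ r := by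
    have h1 : ((C * X)ᴴ * (C * X)).trace = ((∑ r, d r * ρ r : ℝ) : ℂ) := by
      rw [Matrix.conjTranspose_mul, Matrix.mul_assoc, ← Matrix.mul_assoc Cᴴ C X, hd]
      have h2 : (Xᴴ * (Matrix.diagonal (fun r => ((d r : ℝ) : ℂ)) * X)).trace
          = ((Matrix.diagonal (fun r => ((d r : ℝ) : ℂ))) * (X * Xᴴ)).trace := by
        rw [← Matrix.mul_assoc, Matrix.trace_mul_comm, ← Matrix.mul_assoc]
        exact Matrix.trace_mul_comm _ _
      rw [h2]
      simp only [Matrix.trace, Matrix.diag, Matrix.mul_apply, Matrix.diagonal_apply, ite_mul,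
        zero_mul, Finset.sum_ite_eq, Finset.mem_univ, if_true]
      push_cast
      congr 1; ext r
      congr 1
      simp only [Matrix.mul_apply, Matrix.conjTranspose_apply, hρdef]
      push_cast
      congr 1; ext j
      rw [show X r j * star (X r j) = X r j * (starRingEnd ℂ) (X r j) from rfl, Complex.mul_conj]
    have h3 := trace_conjTranspose_mul_self (C * X)
    rw [h1] at h3
    exact_mod_cast h3.symm
  -- Cauchy-Schwarz on b
  have hb_cs : ∀ r, Complex.normSq (b r) ≤ d r * ρ r := by
    intro r
    have : b r = ∑ k, X r k * C k r := by simp [hbdef, Matrix.mul_apply]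
    rw [this, hdμ r, mul_comm (μ r) (ρ r)]
    exact cs_sq (fun k => X r k) (fun k => C k r)
  -- trace (C*X) = ∑ b
  have htr : (C * X).trace = ∑ r, b r := by
    rw [Matrix.trace_mul_comm]
    rfl
  -- ∑ normSq b ≤ frob (X*C)
  have hXC : ∑ r, Complex.normSq (b r) ≤ frob (X * C) := by
    rw [frob]
    apply Finset.sum_le_sum
    intro r _
    exact Finset.single_le_sum (f := fun t => Complex.normSq ((X * C) r t))
      (fun _ _ => Complex.normSq_nonneg _) (Finset.mem_univ r)
  -- assemble
  set β : Fin n → ℝ := fun r => ‖b r‖ with hβdef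
  have hβ_nonneg : ∀ r, 0 ≤ β r := fun r => norm_nonneg _
  have hβ_sq : ∀ r, β r ^ 2 = Complex.normSq (b r) := fun r => Complex.sq_norm _
  have hd_nonneg : ∀ r, 0 ≤ d r := fun r => (hdμ r) ▸ hμ_nonneg r
  have hkey := key_real d ρ β hd_nonneg hρ_nonneg hβ_nonneg
    (fun r => by rw [hβ_sq r]; exact hb_cs r)
  have habs : Complex.normSq ((C * X).trace) ≤ (∑ r, β r) ^ 2 := by
    rw [htr, ← Complex.sq_norm]
    apply pow_le_pow_left₀ (norm_nonneg _)
    exact norm_sum_le _ _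
  have hsum : ∑ r, β r ^ 2 = ∑ r, Complex.normSq (b r) := by
    exact Finset.sum_congr rfl fun r _ => hβ_sq r
  calc frob (C * X) + Complex.normSq (C * X).trace
      ≤ (∑ r, d r * ρ r) + (∑ r, β r) ^ 2 := by rw [hCX]; linarith [habs]
    _ ≤ (∑ r, d r) * (∑ r, ρ r) + ∑ r, β r ^ 2 := by linarith [hkey]
    _ = (∑ r, μ r) * (∑ r, ρ r) + ∑ r, Complex.normSq (b r) := by
        rw [hsum]; congr 1; congr 1; exact Finset.sum_congr rfl fun r _ => hdμ r
    _ ≤ frob C * frob X + frob (X * C) := by rw [hfC, hfX]; linarith [hXC]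

lemma frob_eq_of_trace_eq {a b c e : Type*} [Fintype a] [Fintype b] [Fintype c] [Fintype e]
    (M : Matrix a b ℂ) (N : Matrix c e ℂ)
    (h : (Mᴴ * M).trace = (Nᴴ * N).trace) : frob M = frob N := by
  have h1 := trace_conjTranspose_mul_self M
  have h2 := trace_conjTranspose_mul_self N
  rw [h1, h2] at h
  exact_mod_cast h

lemma trace_conj_right {k l : Type*} [Fintype k] [Fintype l] [DecidableEq l]
    (N : Matrix k l ℂ) (V : Matrix l l ℂ) (hV2 : V * star V = 1) :
    ((N * V)ᴴ * (N * V)).trace = (Nᴴ * N).trace := by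
  rw [Matrix.conjTranspose_mul, Matrix.trace_mul_comm, Matrix.mul_assoc, ← Matrix.mul_assoc V,
    ← Matrix.star_eq_conjTranspose, hV2, Matrix.one_mul, Matrix.trace_mul_comm]

lemma trace_conj_left {k l : Type*} [Fintype k] [Fintype l] [DecidableEq l]
    (N : Matrix l k ℂ) (V : Matrix l l ℂ) (hV2 : V * star V = 1) :
    ((star V * N)ᴴ * (star V * N)).trace = (Nᴴ * N).trace := by
  have hs : (star V)ᴴ = V := by rw [← Matrix.star_eq_conjTranspose, star_star]
  rw [Matrix.conjTranspose_mul, hs, Matrix.mul_assoc, ← Matrix.mul_assoc V, hV2, Matrix.one_mul]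

lemma core_main {m n : ℕ} (C : Matrix (Fin m) (Fin n) ℂ) (X : Matrix (Fin n) (Fin m) ℂ) :
    frob (C * X) + Complex.normSq (C * X).trace ≤ frob C * frob X + frob (X * C) := by
  have hH : (Cᴴ * C).IsHermitian := Matrix.isHermitian_conjTranspose_mul_self C
  set V : Matrix (Fin n) (Fin n) ℂ := (hH.eigenvectorUnitary : Matrix (Fin n) (Fin n) ℂ) with hV
  have hmem := hH.eigenvectorUnitary.2
  have hV1 : star V * V = 1 := hmem.1
  have hV2 : V * star V = 1 := hmem.2
  have hdiag : (C * V)ᴴ * (C * V) = Matrix.diagonal (fun r => ((hH.eigenvalues r : ℝ) : ℂ)) := by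
    rw [Matrix.conjTranspose_mul, Matrix.mul_assoc, ← Matrix.mul_assoc Cᴴ C V,
      ← Matrix.star_eq_conjTranspose V, ← Matrix.mul_assoc]
    have := hH.conjStarAlgAut_star_eigenvectorUnitary
    rw [Unitary.conjStarAlgAut_star_apply] at this
    exact this
  have key := core_diag (C * V) (star V * X) hH.eigenvalues hdiag
  have e0 : (C * V) * (star V * X) = C * X := by
    rw [Matrix.mul_assoc, ← Matrix.mul_assoc V, hV2, Matrix.one_mul]
  have e1 : frob (C * V) = frob C :=
    frob_eq_of_trace_eq _ _ (trace_conj_right C V hV2)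
  have e2 : frob (star V * X) = frob X :=
    frob_eq_of_trace_eq _ _ (trace_conj_left X V hV2)
  have e3 : frob ((star V * X) * (C * V)) = frob (X * C) := by
    have h4 : (star V * X) * (C * V) = (star V * (X * C)) * V := by
      rw [Matrix.mul_assoc (star V) X, Matrix.mul_assoc (star V) (X * C) V, Matrix.mul_assoc X C V]
    rw [h4]
    apply frob_eq_of_trace_eq
    rw [trace_conj_right _ V hV2, trace_conj_left (X * C) V hV2]
  rw [e0, e1, e2, e3] at key
  exact key


-- star x ⬝ᵥ ((P ⊗ₖ 1) *ᵥ x) = (Xᴴ * P * X).trace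
lemma kron1_dot {m n : ℕ} (P : Matrix (Fin n) (Fin n) ℂ) (x : Fin n × Fin m → ℂ) :
    star x ⬝ᵥ ((P ⊗ₖ (1 : Matrix (Fin m) (Fin m) ℂ)) *ᵥ x)
      = ((Matrix.of fun r i => x (r, i))ᴴ * P * (Matrix.of fun r i => x (r, i))).trace := by
  simp only [dotProduct, Matrix.mulVec, Matrix.trace, Matrix.diag, Matrix.mul_apply,
    Matrix.conjTranspose_apply, Matrix.of_apply, Matrix.kroneckerMap_apply, Matrix.one_apply,
    Pi.star_apply, Fintype.sum_prod_type]
  -- LHS: ∑ r ∑ i, conj x(r,i) * (∑ s ∑ j, (P r s * ite (i=j) 1 0) * x (s,j))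
  -- RHS: ∑ i, ∑ s, (∑ r, conj (x (r,i)) * P r s) * x (s, i)
  have lhs_eq : ∀ (r : Fin n) (i : Fin m),
      (∑ s, ∑ j, P r s * (if i = j then (1:ℂ) else 0) * x (s, j))
        = ∑ s, P r s * x (s, i) := by
    intro r i
    apply Finset.sum_congr rfl
    intro s _
    simp [mul_ite, ite_mul, Finset.sum_ite_eq]
  simp only [lhs_eq, Finset.mul_sum, Finset.sum_mul]
  rw [Finset.sum_comm]
  apply Finset.sum_congr rfl; intro i _
  rw [Finset.sum_comm]
  apply Finset.sum_congr rfl; intro s _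
  apply Finset.sum_congr rfl; intro r _
  ring

lemma kron2_dot {m n : ℕ} (Q : Matrix (Fin m) (Fin m) ℂ) (x : Fin n × Fin m → ℂ) :
    star x ⬝ᵥ (((1 : Matrix (Fin n) (Fin n) ℂ) ⊗ₖ Q) *ᵥ x)
      = ((Matrix.of fun r i => x (r, i))ᴴ * (Matrix.of fun r i => x (r, i)) * Qᵀ).trace := by
  simp only [dotProduct, Matrix.mulVec, Matrix.trace, Matrix.diag, Matrix.mul_apply,
    Matrix.conjTranspose_apply, Matrix.transpose_apply, Matrix.of_apply,
    Matrix.kroneckerMap_apply, Matrix.one_apply, Pi.star_apply, Fintype.sum_prod_type]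
  have lhs_eq : ∀ (r : Fin n) (i : Fin m),
      (∑ s, ∑ j, (if r = s then (1:ℂ) else 0) * Q i j * x (s, j))
        = ∑ j, Q i j * x (r, j) := by
    intro r i
    rw [Finset.sum_comm]
    apply Finset.sum_congr rfl
    intro j _
    simp [mul_ite, ite_mul, Finset.sum_ite_eq]
  simp only [lhs_eq, Finset.mul_sum, Finset.sum_mul]
  rw [Finset.sum_comm]
  apply Finset.sum_congr rfl; intro i _
  rw [Finset.sum_comm]
  apply Finset.sum_congr rfl; intro j _
  apply Finset.sum_congr rfl; intro r _
  ring

/-- If `A` is positive semidefinite, then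
`(tr A) I_{nm} − (tr₁ A) ⊗ Iₘ ≥ Ã − Iₙ ⊗ (tr₂ A)`. -/
theorem stmt_10 (m n : ℕ) (A : Matrix (Fin m × Fin n) (Fin m × Fin n) ℂ)
    (hA : A.PosSemidef) :
    (A.trace • (1 : Matrix (Fin n × Fin m) (Fin n × Fin m) ℂ)
      - ptrace1 m n A ⊗ₖ (1 : Matrix (Fin m) (Fin m) ℂ)
      - (realign m n A - (1 : Matrix (Fin n) (Fin n) ℂ) ⊗ₖ ptrace2 m n A)).PosSemidef := by
  have herm : ∀ p q, (starRingEnd ℂ) (A q p) = A p q := by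
    intro p q
    conv_rhs => rw [← hA.1]
    simp [Matrix.conjTranspose_apply]
  have htrA_star : (starRingEnd ℂ) A.trace = A.trace := by
    simp only [Matrix.trace, Matrix.diag, map_sum]
    exact Finset.sum_congr rfl fun p _ => herm p p
  have hP1 : (ptrace1 m n A)ᴴ = ptrace1 m n A := by
    ext r s
    simp only [Matrix.conjTranspose_apply, ptrace1, Matrix.of_apply, star_sum]
    exact Finset.sum_congr rfl fun i _ => herm (i, r) (i, s)
  have hP2 : (ptrace2 m n A)ᴴ = ptrace2 m n A := by
    ext i j
    simp only [Matrix.conjTranspose_apply, ptrace2, Matrix.of_apply, star_sum]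
    exact Finset.sum_congr rfl fun r _ => herm (i, r) (j, r)
  have hR : (realign m n A)ᴴ = realign m n A := by
    ext p q
    simp only [Matrix.conjTranspose_apply, realign, Matrix.of_apply]
    exact herm (p.2, p.1) (q.2, q.1)
  have kron_herm : ∀ {a b : Type} [Fintype a] [Fintype b] (P : Matrix a a ℂ) (Q : Matrix b b ℂ),
      Pᴴ = P → Qᴴ = Q → (P ⊗ₖ Q)ᴴ = P ⊗ₖ Q := by
    intro a b _ _ P Q hP hQ
    ext p q
    simp only [Matrix.conjTranspose_apply, Matrix.kroneckerMap_apply, star_mul']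
    have e1 : star (P q.1 p.1) = P p.1 q.1 := by
      conv_rhs => rw [← hP]
      simp [Matrix.conjTranspose_apply]
    have e2 : star (Q q.2 p.2) = Q p.2 q.2 := by
      conv_rhs => rw [← hQ]
      simp [Matrix.conjTranspose_apply]
    rw [e1, e2, mul_comm]
  rw [Matrix.posSemidef_iff_dotProduct_mulVec]
  constructor
  · -- Hermitian
    show _ᴴ = _
    rw [Matrix.conjTranspose_sub, Matrix.conjTranspose_sub, Matrix.conjTranspose_sub,
      Matrix.conjTranspose_smul, Matrix.conjTranspose_one,
      kron_herm _ _ hP1 Matrix.isHermitian_one,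
      kron_herm _ _ Matrix.isHermitian_one hP2, hR]
    rw [show star A.trace = A.trace from htrA_star]
  · intro x
    obtain ⟨B, hB⟩ : ∃ B : Matrix (Fin m × Fin n) (Fin m × Fin n) ℂ, A = star B * B := by
      open scoped MatrixOrder Matrix.Norms.L2Operator in
      exact CStarAlgebra.nonneg_iff_eq_star_mul_self.mp hA.nonneg
    have hAapp : ∀ p q, A p q = ∑ l, (starRingEnd ℂ) (B l p) * B l q := by
      intro p q
      rw [hB]
      simp [Matrix.mul_apply, Matrix.conjTranspose_apply]
    set X : Matrix (Fin n) (Fin m) ℂ := Matrix.of fun r i => x (r, i) with hX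
    set Cf : (Fin m × Fin n) → Matrix (Fin m) (Fin n) ℂ :=
      fun l => Matrix.of fun k t => B l (k, t) with hCf
    -- cast helper
    have ofReal_frob : ∀ {a b : Type} [Fintype a] [Fintype b] (M : Matrix a b ℂ),
        ((frob M : ℝ) : ℂ) = ∑ i, ∑ j, (starRingEnd ℂ) (M i j) * M i j := by
      intro a b _ _ M
      push_cast [frob]
      exact Finset.sum_congr rfl fun i _ => Finset.sum_congr rfl fun j _ =>
        Complex.normSq_eq_conj_mul_self
    -- piece: star x ⬝ᵥ x
    have hpx : star x ⬝ᵥ x = ((frob X : ℝ) : ℂ) := by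
      rw [← trace_conjTranspose_mul_self]
      simp only [dotProduct, Matrix.trace, Matrix.diag, Matrix.mul_apply,
        Matrix.conjTranspose_apply, Matrix.of_apply, Pi.star_apply, Fintype.sum_prod_type, hX]
      rw [Finset.sum_comm]
    -- piece: A.trace
    have htrA : A.trace = ∑ l, ((frob (Cf l) : ℝ) : ℂ) := by
      simp only [Matrix.trace, Matrix.diag, hAapp]
      rw [Finset.sum_comm]
      apply Finset.sum_congr rfl
      intro l _
      rw [ofReal_frob]
      simp only [hCf, Matrix.of_apply, Fintype.sum_prod_type]
    -- piece 2
    have h2 : star x ⬝ᵥ ((ptrace1 m n A ⊗ₖ (1 : Matrix (Fin m) (Fin m) ℂ)) *ᵥ x)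
        = ∑ l, ((frob (Cf l * X) : ℝ) : ℂ) := by
      rw [kron1_dot]
      have hp1 : ptrace1 m n A = ∑ l, (Cf l)ᴴ * Cf l := by
        ext r s
        simp only [ptrace1, Matrix.of_apply, hAapp, Matrix.sum_apply, Matrix.mul_apply,
          Matrix.conjTranspose_apply, hCf]
        rw [Finset.sum_comm]
        apply Finset.sum_congr rfl
        intro l _
        exact Finset.sum_congr rfl fun k _ => rfl
      rw [hp1, Matrix.mul_sum, Matrix.sum_mul, Matrix.trace_sum]
      apply Finset.sum_congr rfl
      intro l _
      rw [← trace_conjTranspose_mul_self (Cf l * X), Matrix.conjTranspose_mul,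
        Matrix.mul_assoc, Matrix.mul_assoc, Matrix.mul_assoc]
    -- piece 4
    have h4 : star x ⬝ᵥ (((1 : Matrix (Fin n) (Fin n) ℂ) ⊗ₖ ptrace2 m n A) *ᵥ x)
        = ∑ l, ((frob (X * Cf l) : ℝ) : ℂ) := by
      rw [kron2_dot]
      have hp2 : (ptrace2 m n A)ᵀ = ∑ l, Cf l * (Cf l)ᴴ := by
        ext i j
        simp only [ptrace2, Matrix.transpose_apply, Matrix.of_apply, hAapp, Matrix.sum_apply,
          Matrix.mul_apply, Matrix.conjTranspose_apply, hCf]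
        rw [Finset.sum_comm]
        apply Finset.sum_congr rfl
        intro l _
        apply Finset.sum_congr rfl
        intro t _
        exact mul_comm _ _
      rw [← hX, hp2, Matrix.mul_sum, Matrix.trace_sum]
      apply Finset.sum_congr rfl
      intro l _
      rw [show (Xᴴ * X) * (Cf l * (Cf l)ᴴ) = ((Xᴴ * X) * Cf l) * (Cf l)ᴴ from
        (Matrix.mul_assoc _ _ _).symm, Matrix.trace_mul_comm,
        ← trace_conjTranspose_mul_self (X * Cf l), Matrix.conjTranspose_mul]
      congr 1
      simp [Matrix.mul_assoc]
    -- piece 3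
    have htl : ∀ l, (Cf l * X).trace = ∑ p : Fin n × Fin m, B l (p.2, p.1) * x p := by
      intro l
      simp only [Matrix.trace, Matrix.diag, Matrix.mul_apply, hCf, hX, Matrix.of_apply,
        Fintype.sum_prod_type]
      rw [Finset.sum_comm]
    have h3 : star x ⬝ᵥ (realign m n A *ᵥ x)
        = ∑ l, ((Complex.normSq ((Cf l * X).trace) : ℝ) : ℂ) := by
      have hrhs : ∀ l : Fin m × Fin n, ((Complex.normSq ((Cf l * X).trace) : ℝ) : ℂ)
          = (starRingEnd ℂ) ((Cf l * X).trace) * ((Cf l * X).trace) :=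
        fun l => Complex.normSq_eq_conj_mul_self
      have hmv : ∀ p : Fin n × Fin m, (realign m n A *ᵥ x) p
          = ∑ l, (starRingEnd ℂ) (B l (p.2, p.1)) * ∑ q : Fin n × Fin m, B l (q.2, q.1) * x q := by
        intro p
        simp only [Matrix.mulVec, dotProduct, realign, Matrix.of_apply, hAapp,
          Finset.sum_mul]
        rw [Finset.sum_comm]
        apply Finset.sum_congr rfl
        intro l _
        rw [Finset.mul_sum]
        apply Finset.sum_congr rfl
        intro q _
        ring
      calc star x ⬝ᵥ (realign m n A *ᵥ x)
          = ∑ p : Fin n × Fin m, ∑ l : Fin m × Fin n, (starRingEnd ℂ) (x p)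
              * ((starRingEnd ℂ) (B l (p.2, p.1)) * ∑ q : Fin n × Fin m, B l (q.2, q.1) * x q) := by
            simp only [dotProduct, Pi.star_apply, hmv, Finset.mul_sum, Complex.star_def]
        _ = ∑ l : Fin m × Fin n, (∑ p : Fin n × Fin m, (starRingEnd ℂ) (B l (p.2, p.1) * x p))
              * ∑ q : Fin n × Fin m, B l (q.2, q.1) * x q := by
            rw [Finset.sum_comm]
            apply Finset.sum_congr rfl
            intro l _
            rw [Finset.sum_mul]
            apply Finset.sum_congr rfl
            intro p _
            rw [_root_.map_mul]
            ring
        _ = ∑ l : Fin m × Fin n, ((Complex.normSq ((Cf l * X).trace) : ℝ) : ℂ) := by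
            apply Finset.sum_congr rfl
            intro l _
            rw [hrhs l, htl l, map_sum]
    -- expand the quadratic form
    have hexp : star x ⬝ᵥ ((A.trace • (1 : Matrix (Fin n × Fin m) (Fin n × Fin m) ℂ)
        - ptrace1 m n A ⊗ₖ (1 : Matrix (Fin m) (Fin m) ℂ)
        - (realign m n A - (1 : Matrix (Fin n) (Fin n) ℂ) ⊗ₖ ptrace2 m n A)) *ᵥ x)
        = A.trace * (star x ⬝ᵥ x)
          - star x ⬝ᵥ ((ptrace1 m n A ⊗ₖ (1 : Matrix (Fin m) (Fin m) ℂ)) *ᵥ x)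
          - star x ⬝ᵥ (realign m n A *ᵥ x)
          + star x ⬝ᵥ (((1 : Matrix (Fin n) (Fin n) ℂ) ⊗ₖ ptrace2 m n A) *ᵥ x) := by
      simp only [Matrix.sub_mulVec, Matrix.smul_mulVec, Matrix.one_mulVec,
        dotProduct_sub, dotProduct_smul, smul_eq_mul]
      ring
    rw [hexp, hpx, htrA, h2, h3, h4, Finset.sum_mul, ← Finset.sum_sub_distrib,
      ← Finset.sum_sub_distrib, ← Finset.sum_add_distrib]
    apply Finset.sum_nonneg
    intro l _
    have hcm := core_main (Cf l) X
    rw [← Complex.ofReal_mul, ← Complex.ofReal_sub, ← Complex.ofReal_sub, ← Complex.ofReal_add,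
      Complex.zero_le_real]
    linarith
end

section
/- Let A = [A_{i,j}]_{i,j=1}^m ∈ M_m(M_n) be positive semidefinite, and let Ã ∈ M_n(M_m) be its realignment, defined by Ã = [B_{r,s}]_{r,s=1}^n where B_{r,s} = [a^{i,j}_{r,s}]_{i,j=1}^m and a^{i,j}_{r,s} denotes the (r,s) entry of the block A_{i,j}. Then (tr A) I_{nm} + (tr₁ A) ⊗ I_m ≥ I_n ⊗ (tr₂ A) + Ã. -/
open Matrix Kronecker
open scoped ComplexOrder

section Stmt11Aux

open Finset Complex

noncomputable def ip {α : Type*} [Fintype α] (p q : α → ℂ) : ℂ := ∑ z, star (p z) * q z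

variable {m n : ℕ}

-- the three "L maps"
noncomputable def L1 (w : Fin m → Fin n → ℂ) : Fin m × Fin n → ℂ := fun p => w p.1 p.2
noncomputable def L2 (x : Fin n → Fin m → ℂ) (w : Fin m → Fin n → ℂ) : Fin m × Fin m → ℂ :=
  fun p => ∑ r, w p.1 r * x r p.2
noncomputable def L3 (x : Fin n → Fin m → ℂ) (w : Fin m → Fin n → ℂ) : Fin n × Fin n → ℂ :=
  fun p => ∑ i, w i p.2 * x p.1 i

lemma V3 (x : Fin n → Fin m → ℂ) (w : Fin m → Fin n → ℂ) :
    ip (L2 x (fun i r => star (x r i))) (L2 x w) = ip (L3 x (fun i r => star (x r i))) (L3 x w) := by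
  have hL : ip (L2 x (fun i r => star (x r i))) (L2 x w)
      = ∑ z : (Fin m × Fin m) × (Fin n × Fin n),
          x z.2.1 z.1.1 * star (x z.2.1 z.1.2) * (w z.1.1 z.2.2 * x z.2.2 z.1.2) := by
    rw [ip]
    simp only [L2, star_sum, star_mul', star_star, Finset.sum_mul_sum]
    rw [Fintype.sum_prod_type (f := fun z : (Fin m × Fin m) × (Fin n × Fin n) => _)]
    refine Finset.sum_congr rfl fun p _ => ?_
    rw [Fintype.sum_prod_type]
  have hR : ip (L3 x (fun i r => star (x r i))) (L3 x w)
      = ∑ z : (Fin n × Fin n) × (Fin m × Fin m),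
          x z.1.2 z.2.1 * star (x z.1.1 z.2.1) * (w z.2.2 z.1.2 * x z.1.1 z.2.2) := by
    rw [ip]
    simp only [L3, star_sum, star_mul', star_star, Finset.sum_mul_sum]
    rw [Fintype.sum_prod_type (f := fun z : (Fin n × Fin n) × (Fin m × Fin m) => _)]
    refine Finset.sum_congr rfl fun p _ => ?_
    rw [Fintype.sum_prod_type]
  rw [hL, hR]
  apply Fintype.sum_equiv ⟨fun z => ((z.2.1, z.2.2), (z.1.2, z.1.1)),
    fun z => ((z.2.2, z.2.1), (z.1.1, z.1.2)), fun z => rfl, fun z => rfl⟩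
  intro z
  simp only [Equiv.coe_fn_mk]
  ring

lemma ip_self (α : Type*) [Fintype α] (p : α → ℂ) :
    ip p p = ((∑ z, normSq (p z) : ℝ) : ℂ) := by
  simp [ip, ← Complex.normSq_eq_conj_mul_self]

lemma ip_conj {α : Type*} [Fintype α] (p q : α → ℂ) : ip p q = star (ip q p) := by
  simp [ip, mul_comm]

lemma ip_expand {α : Type*} [Fintype α] (p q : α → ℂ) (a b : ℂ) :
    ip (fun z => a * p z + b * q z) (fun z => a * p z + b * q z)
      = star a * a * ip p p + star a * b * ip p q + star b * a * ip q p + star b * b * ip q q := by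
  simp only [ip, Finset.mul_sum, ← Finset.sum_add_distrib]
  refine Finset.sum_congr rfl fun z _ => ?_
  simp only [star_add, star_mul']
  ring

lemma cs_normSq {ι : Type*} [Fintype ι] (a b : ι → ℂ) :
    normSq (∑ i, a i * b i) ≤ (∑ i, normSq (a i)) * (∑ i, normSq (b i)) := by
  calc normSq (∑ i, a i * b i) = (‖∑ i, a i * b i‖)^2 := (Complex.sq_norm _).symm
    _ ≤ (∑ i, ‖a i‖ * ‖b i‖)^2 := by
        apply pow_le_pow_left₀ (norm_nonneg _)
        refine (norm_sum_le _ _).trans ?_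
        simp [norm_mul, le_refl]
    _ ≤ (∑ i, (‖a i‖)^2) * (∑ i, (‖b i‖)^2) :=
        Finset.sum_mul_sq_le_sq_mul_sq _ _ _
    _ = _ := by simp [Complex.sq_norm]

/-- the real quadratic form `g` -/
noncomputable def gf (x : Fin n → Fin m → ℂ) (w : Fin m → Fin n → ℂ) : ℝ :=
  (∑ r, ∑ i, normSq (x r i)) * (∑ z : Fin m × Fin n, normSq (L1 w z))
    + ∑ z : Fin m × Fin m, normSq (L2 x w z)
    - ∑ z : Fin n × Fin n, normSq (L3 x w z)

lemma gf_nonneg (x : Fin n → Fin m → ℂ) (w : Fin m → Fin n → ℂ) : 0 ≤ gf x w := by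
  have h : ∑ z : Fin n × Fin n, normSq (L3 x w z)
      ≤ (∑ r, ∑ i, normSq (x r i)) * (∑ z : Fin m × Fin n, normSq (L1 w z)) := by
    calc ∑ z : Fin n × Fin n, normSq (L3 x w z)
        ≤ ∑ z : Fin n × Fin n, (∑ i, normSq (w i z.2)) * (∑ i, normSq (x z.1 i)) := by
          refine Finset.sum_le_sum fun z _ => ?_
          exact cs_normSq (fun i => w i z.2) (fun i => x z.1 i)
      _ = ∑ t : Fin n, ∑ s : Fin n, (∑ j, normSq (x t j)) * (∑ i, normSq (w i s)) := by
          rw [Fintype.sum_prod_type]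
          exact Finset.sum_congr rfl fun t _ => Finset.sum_congr rfl fun s _ => mul_comm _ _
      _ = (∑ r, ∑ i, normSq (x r i)) * (∑ z : Fin m × Fin n, normSq (L1 w z)) := by
          rw [← Finset.sum_mul_sum, Fintype.sum_prod_type]
          simp only [L1]
          rw [Finset.sum_comm (f := fun s i => normSq (w i s))]
  have h2 : (0:ℝ) ≤ ∑ z : Fin m × Fin m, normSq (L2 x w z) :=
    Finset.sum_nonneg fun z _ => normSq_nonneg _
  unfold gf
  linarith

/-- complexified g equals the B-form diagonal -/
lemma gf_eq (x : Fin n → Fin m → ℂ) (w : Fin m → Fin n → ℂ) :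
    ((gf x w : ℝ) : ℂ) = ((∑ r, ∑ i, normSq (x r i) : ℝ) : ℂ) * ip (L1 w) (L1 w)
      + ip (L2 x w) (L2 x w) - ip (L3 x w) (L3 x w) := by
  rw [ip_self, ip_self, ip_self, gf]
  push_cast
  ring

lemma key_s11 (v : Fin m → Fin n → ℂ) (x : Fin n → Fin m → ℂ) :
    normSq (∑ i, ∑ r, v i r * x r i) + ∑ z : Fin n × Fin n, normSq (L3 x v z)
      ≤ (∑ z : Fin m × Fin n, normSq (L1 v z)) * (∑ r, ∑ i, normSq (x r i))
        + ∑ z : Fin m × Fin m, normSq (L2 x v z) := by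
  set S : ℝ := ∑ r, ∑ i, normSq (x r i) with hS
  set c : ℂ := ∑ i, ∑ r, v i r * x r i with hc
  have hmain : normSq c ≤ gf x v := by
    have hS0 : 0 ≤ S := Finset.sum_nonneg fun r _ => Finset.sum_nonneg fun i _ => normSq_nonneg _
    rcases eq_or_lt_of_le hS0 with hS0' | hSpos
    · -- S = 0 : x = 0
      have hx : ∀ r i, x r i = 0 := by
        intro r i
        have h1 : ∑ r, ∑ i, normSq (x r i) = 0 := hS0'.symm
        have h2 := (Finset.sum_eq_zero_iff_of_nonneg (fun r _ =>
          Finset.sum_nonneg fun i _ => normSq_nonneg _)).mp h1 r (Finset.mem_univ r)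
        have h3 := (Finset.sum_eq_zero_iff_of_nonneg (fun i _ => normSq_nonneg _)).mp h2 i
          (Finset.mem_univ i)
        exact normSq_eq_zero.mp h3
      have hc0 : c = 0 := by
        rw [hc]
        exact Finset.sum_eq_zero fun i _ => Finset.sum_eq_zero fun r _ => by rw [hx]; ring
      rw [hc0]
      simpa using gf_nonneg x v
    · -- S > 0
      set U : Fin m → Fin n → ℂ := fun i r => star (x r i) with hU
      set W : Fin m → Fin n → ℂ := fun i r => (S : ℂ) * v i r + (-c) * U i r with hW
      have hL1 : L1 W = fun z => (S:ℂ) * L1 v z + (-c) * L1 U z := rfl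
      have hL2 : L2 x W = fun z => (S:ℂ) * L2 x v z + (-c) * L2 x U z := by
        funext z
        simp only [L2, hW, add_mul, Finset.sum_add_distrib, Finset.mul_sum, mul_assoc]
      have hL3 : L3 x W = fun z => (S:ℂ) * L3 x v z + (-c) * L3 x U z := by
        funext z
        simp only [L3, hW, add_mul, Finset.sum_add_distrib, Finset.mul_sum, mul_assoc]
      have b_vu : ip (L1 v) (L1 U) = star c := by
        simp only [ip, L1, hU, hc, star_sum, star_mul', Fintype.sum_prod_type]
      have b_uv : ip (L1 U) (L1 v) = c := by
        simp only [ip, L1, hU, hc, star_star, Fintype.sum_prod_type]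
        exact Finset.sum_congr rfl fun i _ => Finset.sum_congr rfl fun r _ => mul_comm _ _
      have b_uu : ip (L1 U) (L1 U) = ((S:ℝ):ℂ) := by
        rw [hS]
        simp only [Complex.ofReal_sum]
        simp only [ip, L1, hU, star_star]
        rw [Fintype.sum_prod_type, Finset.sum_comm]
        exact Finset.sum_congr rfl fun r _ => Finset.sum_congr rfl fun i _ =>
          Complex.mul_conj _
      have cv := V3 x v
      have cu := V3 x U
      have cv' : ip (L2 x v) (L2 x U) = ip (L3 x v) (L3 x U) := by
        rw [ip_conj, cv, ← ip_conj]
      have hgfW : ((gf x W : ℝ) : ℂ) = ((S:ℝ):ℂ)^2 * (((gf x v : ℝ):ℂ) - ((normSq c : ℝ):ℂ)) := by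
        rw [gf_eq, gf_eq, hL1, hL2, hL3, ip_expand, ip_expand, ip_expand,
          b_vu, b_uv, b_uu, cv, cu, cv']
        have hsc : ((normSq c : ℝ) : ℂ) = star c * c := Complex.normSq_eq_conj_mul_self
        have hstS : star ((S:ℝ):ℂ) = ((S:ℝ):ℂ) := Complex.conj_ofReal S
        have hstc : star (-c) = -(star c) := star_neg c
        have hSc : ((∑ r, ∑ i, normSq (x r i) : ℝ) : ℂ) = ((S:ℝ):ℂ) := by rw [hS]
        rw [hsc, hstS, hstc, hSc]
        ring
      have hgfWr : gf x W = S^2 * (gf x v - normSq c) := by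
        have := hgfW
        push_cast at this
        exact_mod_cast this
      have h0 := gf_nonneg x W
      rw [hgfWr] at h0
      nlinarith [h0, mul_pos hSpos hSpos]
  unfold gf at hmain
  rw [mul_comm] at hmain
  linarith

section Pieces
variable {m n : ℕ}

lemma pieceQtr (C : Matrix (Fin m × Fin n) (Fin m × Fin n) ℂ) (x : Fin n × Fin m → ℂ) :
    ∑ r : Fin n, ∑ i : Fin m, ∑ t : Fin m, ∑ u : Fin n,
        star (x (r, i)) * ((∑ k : Fin m × Fin n, star (C k (t, u)) * C k (t, u)) * x (r, i))
      = ∑ k : Fin m × Fin n, (∑ z : Fin m × Fin n, star (C k z) * C k z)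
          * (∑ r : Fin n, ∑ i : Fin m, star (x (r, i)) * x (r, i)) := by
  have hL : (∑ r : Fin n, ∑ i : Fin m, ∑ t : Fin m, ∑ u : Fin n,
        star (x (r, i)) * ((∑ k : Fin m × Fin n, star (C k (t, u)) * C k (t, u)) * x (r, i)))
      = ∑ z : Fin n × Fin m × Fin m × Fin n × (Fin m × Fin n),
          star (x (z.1, z.2.1)) * ((star (C z.2.2.2.2 (z.2.2.1, z.2.2.2.1))
            * C z.2.2.2.2 (z.2.2.1, z.2.2.2.1)) * x (z.1, z.2.1)) := by
    simp only [Fintype.sum_prod_type, Finset.mul_sum, Finset.sum_mul]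
  have hR : (∑ k : Fin m × Fin n, (∑ z : Fin m × Fin n, star (C k z) * C k z)
          * (∑ r : Fin n, ∑ i : Fin m, star (x (r, i)) * x (r, i)))
      = ∑ z : (Fin m × Fin n) × (Fin n × Fin m) × Fin m × Fin n,
          star (C z.1 (z.2.2.1, z.2.2.2)) * C z.1 (z.2.2.1, z.2.2.2)
            * (star (x (z.2.1.1, z.2.1.2)) * x (z.2.1.1, z.2.1.2)) := by
    simp only [Fintype.sum_prod_type, Finset.mul_sum, Finset.sum_mul]
  rw [hL, hR]
  apply Fintype.sum_equiv ⟨fun z => (z.2.2.2.2, ((z.1, z.2.1), (z.2.2.1, z.2.2.2.1))),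
    fun z => (z.2.1.1, (z.2.1.2, (z.2.2.1, (z.2.2.2, z.1)))), fun z => rfl, fun z => rfl⟩
  intro z
  simp only [Equiv.coe_fn_mk]
  ring

lemma pieceQ1 (C : Matrix (Fin m × Fin n) (Fin m × Fin n) ℂ) (x : Fin n × Fin m → ℂ) :
    ∑ r : Fin n, ∑ i : Fin m, ∑ s : Fin n, ∑ t : Fin m,
        star (x (r, i)) * ((∑ k : Fin m × Fin n, star (C k (t, r)) * C k (t, s)) * x (s, i))
      = ∑ k : Fin m × Fin n, ∑ z : Fin m × Fin m,
          star (∑ r, C k (z.1, r) * x (r, z.2)) * (∑ s, C k (z.1, s) * x (s, z.2)) := by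
  have hL : (∑ r : Fin n, ∑ i : Fin m, ∑ s : Fin n, ∑ t : Fin m,
        star (x (r, i)) * ((∑ k : Fin m × Fin n, star (C k (t, r)) * C k (t, s)) * x (s, i)))
      = ∑ z : Fin n × Fin m × Fin n × Fin m × (Fin m × Fin n),
          star (x (z.1, z.2.1)) * ((star (C z.2.2.2.2 (z.2.2.2.1, z.1))
            * C z.2.2.2.2 (z.2.2.2.1, z.2.2.1)) * x (z.2.2.1, z.2.1)) := by
    simp only [Fintype.sum_prod_type, Finset.mul_sum, Finset.sum_mul]
  have hR : (∑ k : Fin m × Fin n, ∑ z : Fin m × Fin m,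
          star (∑ r, C k (z.1, r) * x (r, z.2)) * (∑ s, C k (z.1, s) * x (s, z.2)))
      = ∑ z : (Fin m × Fin n) × (Fin m × Fin m) × Fin n × Fin n,
          (star (C z.1 (z.2.1.1, z.2.2.1)) * star (x (z.2.2.1, z.2.1.2)))
            * (C z.1 (z.2.1.1, z.2.2.2) * x (z.2.2.2, z.2.1.2)) := by
    simp only [star_sum, star_mul', Finset.sum_mul_sum]
    simp only [Fintype.sum_prod_type]
  rw [hL, hR]
  apply Fintype.sum_equiv ⟨fun z => (z.2.2.2.2, ((z.2.2.2.1, z.2.1), (z.1, z.2.2.1))),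
    fun z => (z.2.2.1, (z.2.1.2, (z.2.2.2, (z.2.1.1, z.1)))), fun z => rfl, fun z => rfl⟩
  intro z
  simp only [Equiv.coe_fn_mk]
  ring

lemma pieceQ2 (C : Matrix (Fin m × Fin n) (Fin m × Fin n) ℂ) (x : Fin n × Fin m → ℂ) :
    ∑ r : Fin n, ∑ i : Fin m, ∑ j : Fin m, ∑ u : Fin n,
        star (x (r, i)) * ((∑ k : Fin m × Fin n, star (C k (i, u)) * C k (j, u)) * x (r, j))
      = ∑ k : Fin m × Fin n, ∑ z : Fin n × Fin n,
          star (∑ i, C k (i, z.2) * x (z.1, i)) * (∑ j, C k (j, z.2) * x (z.1, j)) := by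
  have hL : (∑ r : Fin n, ∑ i : Fin m, ∑ j : Fin m, ∑ u : Fin n,
        star (x (r, i)) * ((∑ k : Fin m × Fin n, star (C k (i, u)) * C k (j, u)) * x (r, j)))
      = ∑ z : Fin n × Fin m × Fin m × Fin n × (Fin m × Fin n),
          star (x (z.1, z.2.1)) * ((star (C z.2.2.2.2 (z.2.1, z.2.2.2.1))
            * C z.2.2.2.2 (z.2.2.1, z.2.2.2.1)) * x (z.1, z.2.2.1)) := by
    simp only [Fintype.sum_prod_type, Finset.mul_sum, Finset.sum_mul]
  have hR : (∑ k : Fin m × Fin n, ∑ z : Fin n × Fin n,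
          star (∑ i, C k (i, z.2) * x (z.1, i)) * (∑ j, C k (j, z.2) * x (z.1, j)))
      = ∑ z : (Fin m × Fin n) × (Fin n × Fin n) × Fin m × Fin m,
          (star (C z.1 (z.2.2.1, z.2.1.2)) * star (x (z.2.1.1, z.2.2.1)))
            * (C z.1 (z.2.2.2, z.2.1.2) * x (z.2.1.1, z.2.2.2)) := by
    simp only [star_sum, star_mul', Finset.sum_mul_sum]
    simp only [Fintype.sum_prod_type]
  rw [hL, hR]
  apply Fintype.sum_equiv ⟨fun z => (z.2.2.2.2, ((z.1, z.2.2.2.1), (z.2.1, z.2.2.1))),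
    fun z => (z.2.1.1, (z.2.2.1, (z.2.2.2, (z.2.1.2, z.1)))), fun z => rfl, fun z => rfl⟩
  intro z
  simp only [Equiv.coe_fn_mk]
  ring

lemma pieceQR (C : Matrix (Fin m × Fin n) (Fin m × Fin n) ℂ) (x : Fin n × Fin m → ℂ) :
    ∑ r : Fin n, ∑ i : Fin m, ∑ s : Fin n, ∑ j : Fin m,
        star (x (r, i)) * ((∑ k : Fin m × Fin n, star (C k (i, r)) * C k (j, s)) * x (s, j))
      = ∑ k : Fin m × Fin n, star (∑ i, ∑ r, C k (i, r) * x (r, i))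
          * (∑ j, ∑ s, C k (j, s) * x (s, j)) := by
  have hL : (∑ r : Fin n, ∑ i : Fin m, ∑ s : Fin n, ∑ j : Fin m,
        star (x (r, i)) * ((∑ k : Fin m × Fin n, star (C k (i, r)) * C k (j, s)) * x (s, j)))
      = ∑ z : Fin n × Fin m × Fin n × Fin m × (Fin m × Fin n),
          star (x (z.1, z.2.1)) * ((star (C z.2.2.2.2 (z.2.1, z.1))
            * C z.2.2.2.2 (z.2.2.2.1, z.2.2.1)) * x (z.2.2.1, z.2.2.2.1)) := by
    simp only [Fintype.sum_prod_type, Finset.mul_sum, Finset.sum_mul]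
  have hR : (∑ k : Fin m × Fin n, star (∑ i, ∑ r, C k (i, r) * x (r, i))
          * (∑ j, ∑ s, C k (j, s) * x (s, j)))
      = ∑ z : (Fin m × Fin n) × (Fin m × Fin m) × Fin n × Fin n,
          star (C z.1 (z.2.1.1, z.2.2.1)) * star (x (z.2.2.1, z.2.1.1))
            * (C z.1 (z.2.1.2, z.2.2.2) * x (z.2.2.2, z.2.1.2)) := by
    simp only [star_sum, star_mul', Finset.sum_mul_sum]
    simp only [Fintype.sum_prod_type, Finset.mul_sum, Finset.sum_mul]
  rw [hL, hR]
  apply Fintype.sum_equiv ⟨fun z => (z.2.2.2.2, ((z.2.1, z.2.2.2.1), (z.1, z.2.2.1))),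
    fun z => (z.2.2.1, (z.2.1.1, (z.2.2.2, (z.2.1.2, z.1)))), fun z => rfl, fun z => rfl⟩
  intro z
  simp only [Equiv.coe_fn_mk]
  ring

end Pieces

end Stmt11Aux


/-- If `A` is positive semidefinite, then
`(tr A) I_{nm} + (tr₁ A) ⊗ Iₘ ≥ Iₙ ⊗ (tr₂ A) + Ã`. -/
theorem stmt_11 (m n : ℕ) (A : Matrix (Fin m × Fin n) (Fin m × Fin n) ℂ)
    (hA : A.PosSemidef) :
    (A.trace • (1 : Matrix (Fin n × Fin m) (Fin n × Fin m) ℂ)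
      + ptrace1 m n A ⊗ₖ (1 : Matrix (Fin m) (Fin m) ℂ)
      - ((1 : Matrix (Fin n) (Fin n) ℂ) ⊗ₖ ptrace2 m n A + realign m n A)).PosSemidef := by
  obtain ⟨C, hC⟩ : ∃ C : Matrix (Fin m × Fin n) (Fin m × Fin n) ℂ, A = Cᴴ * C := by
    open MatrixOrder in
    obtain ⟨X, hX, -, hXX⟩ := CFC.exists_sqrt_of_isSelfAdjoint_of_quasispectrumRestricts
      hA.isHermitian (QuasispectrumRestricts.nnreal_of_nonneg hA.nonneg)
    exact ⟨X, by rw [← Matrix.star_eq_conjTranspose, hX.star_eq, hXX]⟩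
  have hAapp : ∀ p q, A p q = ∑ k, star (C k p) * C k q := by
    intro p q
    rw [hC, Matrix.mul_apply]
    simp [Matrix.conjTranspose_apply]
  rw [Matrix.posSemidef_iff_dotProduct_mulVec]
  constructor
  · -- Hermitian
    have htr : star A.trace = A.trace := by
      rw [← Matrix.trace_conjTranspose, hA.1]
    have hAe : ∀ p q, star (A p q) = A q p := fun p q => hA.1.apply q p
    ext p q
    obtain ⟨r, i⟩ := p
    obtain ⟨s, j⟩ := q
    simp only [Matrix.conjTranspose_apply, Matrix.add_apply, Matrix.sub_apply,
      Matrix.smul_apply, smul_eq_mul, Matrix.kroneckerMap_apply, Matrix.one_apply,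
      ptrace1, ptrace2, realign, Matrix.of_apply, star_add, star_sub, star_mul',
      star_sum, apply_ite (star : ℂ → ℂ), star_one, star_zero, htr, hAe, Prod.mk.injEq]
    rcases eq_or_ne r s with rfl | h1
    · rcases eq_or_ne i j with rfl | h2
      · simp
      · simp [h2, Ne.symm h2]
    · rcases eq_or_ne i j with rfl | h2
      · simp [h1, Ne.symm h1]
      · simp [h1, h2, Ne.symm h1, Ne.symm h2]
  · -- quadratic form
    intro x
    simp only [dotProduct, Matrix.mulVec, Matrix.sub_apply, Matrix.add_apply,
      Matrix.smul_apply, smul_eq_mul, Matrix.kroneckerMap_apply, Matrix.one_apply,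
      ptrace1, ptrace2, realign, Matrix.of_apply, Matrix.trace, Matrix.diag,
      Pi.star_apply, Fintype.sum_prod_type]
    simp only [mul_ite, mul_one, mul_zero, ite_mul, zero_mul, one_mul, Prod.mk.injEq, ite_and,
      Finset.sum_ite_eq, Finset.sum_ite_eq', Finset.mem_univ, if_true,
      mul_sub, mul_add, sub_mul, add_mul, Finset.sum_sub_distrib, Finset.sum_add_distrib,
      Finset.mul_sum, Finset.sum_mul]
    simp only [Finset.sum_ite_irrel, Finset.sum_const_zero, Finset.sum_ite_eq,
      Finset.sum_ite_eq', Finset.mem_univ, if_true]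
    simp only [hAapp]
    rw [pieceQtr C x, pieceQ1 C x, pieceQ2 C x, pieceQR C x]
    rw [← Finset.sum_add_distrib, ← Finset.sum_add_distrib, ← Finset.sum_sub_distrib]
    apply Finset.sum_nonneg
    intro k _
    have hkey := key_s11 (fun i r => C k (i, r)) (fun r i => x (r, i))
    simp only [L1, L2, L3, Prod.mk.eta] at hkey
    have e1 : (∑ z : Fin m × Fin n, star (C k z) * C k z)
        = ((∑ z : Fin m × Fin n, Complex.normSq (C k z) : ℝ) : ℂ) := ip_self _ _
    have e2 : (∑ r : Fin n, ∑ i : Fin m, star (x (r, i)) * x (r, i))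
        = ((∑ r : Fin n, ∑ i : Fin m, Complex.normSq (x (r, i)) : ℝ) : ℂ) := by
      simp only [Complex.ofReal_sum]
      exact Finset.sum_congr rfl fun r _ => Finset.sum_congr rfl fun i _ =>
        (Complex.normSq_eq_conj_mul_self).symm
    have e3 : (∑ z : Fin m × Fin m, star (∑ r, C k (z.1, r) * x (r, z.2))
          * (∑ s, C k (z.1, s) * x (s, z.2)))
        = ((∑ z : Fin m × Fin m, Complex.normSq (∑ r, C k (z.1, r) * x (r, z.2)) : ℝ) : ℂ) :=
      ip_self _ _
    have e4 : (∑ z : Fin n × Fin n, star (∑ i, C k (i, z.2) * x (z.1, i))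
          * (∑ j, C k (j, z.2) * x (z.1, j)))
        = ((∑ z : Fin n × Fin n, Complex.normSq (∑ i, C k (i, z.2) * x (z.1, i)) : ℝ) : ℂ) :=
      ip_self _ _
    have e5 : star (∑ i, ∑ r, C k (i, r) * x (r, i)) * (∑ j, ∑ s, C k (j, s) * x (s, j))
        = ((Complex.normSq (∑ i, ∑ r, C k (i, r) * x (r, i)) : ℝ) : ℂ) :=
      (Complex.normSq_eq_conj_mul_self).symm
    rw [e1, e2, e3, e4, e5, ← Complex.ofReal_mul, ← Complex.ofReal_add,
      ← Complex.ofReal_add, ← Complex.ofReal_sub]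
    rw [Complex.zero_le_real]
    linarith [hkey]
end
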